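/- arXiv:1309.7944 — 14 statements merged into one kernel-verified Lean document; each statement's English description precedes it below -/
import Mathlib

section
/- If n ≥ 1 and x_i = −cos(iπ/n) for i = 0,…,n are the Chebyshev points of the second kind, then the barycentric quantities λ_i(x) = ∏_{j≠i} 1/(x_i − x_j) satisfy λ_0(x) = (−1)^n 2^{n−2}/n, λ_n(x) = 2^{n−2}/n, and λ_i(x) = (−1)^{n−i} 2^{n−1}/n for every i with 0 < i < n. -/
open Finset Polynomial

lemma cheb_aux_abs (a : ℝ) :
    (1 : ℂ) - Complex.exp (2 * a * Complex.I) = -2 * Complex.I * Complex.sin a * Complex.exp (a * Complex.I) := by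
  rw [Complex.sin]
  have h2 : Complex.exp (-(a:ℂ) * Complex.I) * Complex.exp ((a:ℂ) * Complex.I) = 1 := by
    rw [← Complex.exp_add]; ring_nf; exact Complex.exp_zero
  have h3 : Complex.exp ((a:ℂ) * Complex.I) * Complex.exp ((a:ℂ) * Complex.I) = Complex.exp (2 * (a:ℂ) * Complex.I) := by
    rw [← Complex.exp_add]; ring_nf
  linear_combination Complex.I^2 * h2 - Complex.I^2 * h3 + (1 - Complex.exp (2*(a:ℂ)*Complex.I)) * Complex.I_sq

lemma cheb_sin_prod (m : ℕ) (hm : 1 ≤ m) :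
    ∏ k ∈ Finset.Ico 1 m, (2 * Real.sin (k * Real.pi / m)) = m := by
  have hm0 : (m : ℂ) ≠ 0 := by exact_mod_cast Nat.pos_iff_ne_zero.mp hm
  set ζ : ℂ := Complex.exp (2 * Real.pi * Complex.I / m) with hζdef
  have hζ : IsPrimitiveRoot ζ m := Complex.isPrimitiveRoot_exp m (by omega)
  have h1 : (X : ℂ[X]) ^ m - 1 = ∏ i ∈ Finset.range m, (X - C (ζ ^ i)) := by
    simpa using X_pow_sub_C_eq_prod hζ (by omega) (one_pow m)
  have h2 : ((∑ i ∈ Finset.range m, (X : ℂ[X]) ^ i)) * (X - 1)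
      = (∏ i ∈ (Finset.range m).erase 0, (X - C (ζ ^ i))) * (X - 1) := by
    rw [geom_sum_mul, h1,
      ← Finset.mul_prod_erase (Finset.range m) (fun i => X - C (ζ ^ i)) (Finset.mem_range.mpr hm)]
    simp [mul_comm]
  have h3 : (∑ i ∈ Finset.range m, (X : ℂ[X]) ^ i)
      = ∏ i ∈ (Finset.range m).erase 0, (X - C (ζ ^ i)) :=
    mul_right_cancel₀ (X_sub_C_ne_zero 1) (by simpa using h2)
  have h4 : (m : ℂ) = ∏ i ∈ (Finset.range m).erase 0, (1 - ζ ^ i) := by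
    have := congrArg (Polynomial.eval 1) h3
    simpa [Polynomial.eval_prod] using this
  have h5 : (m : ℝ) = ∏ i ∈ (Finset.range m).erase 0, ‖1 - ζ ^ i‖ := by
    have := congrArg (‖·‖) h4
    rw [norm_prod] at this
    simpa using this
  have h6 : ∀ i ∈ (Finset.range m).erase 0, ‖1 - ζ ^ i‖
      = 2 * Real.sin (i * Real.pi / m) := by
    intro i hi
    simp only [Finset.mem_erase, Finset.mem_range] at hi
    have hζi : ζ ^ i = Complex.exp (2 * ((i * Real.pi / m : ℝ) : ℂ) * Complex.I) := by
      rw [hζdef, ← Complex.exp_nat_mul]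
      congr 1
      push_cast
      field_simp
    rw [hζi, cheb_aux_abs (i * Real.pi / m)]
    rw [← Complex.ofReal_sin, norm_mul, norm_mul, Complex.norm_exp_ofReal_mul_I]
    simp only [Complex.norm_real, Real.norm_eq_abs, mul_one]
    have habs : |Real.sin ((i:ℝ) * Real.pi / m)| = Real.sin ((i:ℝ) * Real.pi / m) := by
      rw [abs_of_nonneg]
      apply Real.sin_nonneg_of_nonneg_of_le_pi
      · positivity
      · rw [div_le_iff₀ (by positivity)]
        calc (i:ℝ) * Real.pi ≤ m * Real.pi := by
              apply mul_le_mul_of_nonneg_right _ Real.pi_pos.le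
              exact_mod_cast hi.2.le
          _ = Real.pi * m := by ring
    rw [habs]
    norm_num [Complex.norm_I, norm_mul]
  have h7 : (Finset.range m).erase 0 = Finset.Ico 1 m := by
    ext j; simp only [Finset.mem_erase, Finset.mem_range, Finset.mem_Ico]; omega
  rw [← h7, ← Finset.prod_congr rfl h6, ← h5]

lemma cheb_ssym (n k : ℕ) (hn : 1 ≤ n) (hk : k ≤ 2 * n) :
    Real.sin ((2 * n - k : ℕ) * Real.pi / (2 * n)) = Real.sin (k * Real.pi / (2 * n)) := by
  have hc : ((2 * n - k : ℕ) : ℝ) = 2 * n - k := by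
    push_cast [Nat.cast_sub hk]; ring
  have hn0 : (n : ℝ) ≠ 0 := by positivity
  rw [hc, show (2 * (n:ℝ) - k) * Real.pi / (2 * n) = Real.pi - k * Real.pi / (2 * n) by
    field_simp, Real.sin_pi_sub]

lemma cheb_sin_prod_sq (n : ℕ) (hn : 1 ≤ n) :
    (∏ k ∈ Finset.Ico 1 n, (2 * Real.sin (k * Real.pi / (2 * n)))) ^ 2 = n := by
  have H := cheb_sin_prod (2 * n) (by omega)
  push_cast at H
  rw [← Finset.prod_Ico_consecutive _ (show 1 ≤ n by omega) (show n ≤ 2 * n by omega),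
    Finset.prod_eq_prod_Ico_succ_bot (show n < 2 * n by omega)] at H
  have hmid : (n : ℝ) * Real.pi / (2 * n) = Real.pi / 2 := by
    have hn0 : (n : ℝ) ≠ 0 := by positivity
    field_simp
  rw [hmid, Real.sin_pi_div_two] at H
  have href : ∏ k ∈ Finset.Ico (n + 1) (2 * n), (2 * Real.sin (k * Real.pi / (2 * n)))
      = ∏ k ∈ Finset.Ico 1 n, (2 * Real.sin (k * Real.pi / (2 * n))) := by
    refine Finset.prod_nbij' (fun k => 2 * n - k) (fun k => 2 * n - k) ?_ ?_ ?_ ?_ ?_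
    · intro a ha; simp only [Finset.mem_Ico] at *; omega
    · intro a ha; simp only [Finset.mem_Ico] at *; omega
    · intro a ha; simp only [Finset.mem_Ico] at ha
      show 2 * n - (2 * n - a) = a; omega
    · intro a ha; simp only [Finset.mem_Ico] at ha
      show 2 * n - (2 * n - a) = a; omega
    · intro a ha
      simp only [Finset.mem_Ico] at ha
      rw [cheb_ssym n a hn (by omega)]
  rw [href] at H
  nlinarith [H]

lemma cheb_prod_reflect (f : ℕ → ℝ) (m : ℕ) :
    ∏ j ∈ Finset.range m, f (m - j) = ∏ j ∈ Finset.range m, f (j + 1) := by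
  rw [← Finset.prod_range_reflect (fun j => f (j + 1)) m]
  apply Finset.prod_congr rfl
  intro j hj
  simp only [Finset.mem_range] at hj
  show f (m - j) = f (m - 1 - j + 1)
  congr 1
  omega

lemma cheb_prod_Ico_one (f : ℕ → ℝ) (m : ℕ) :
    ∏ k ∈ Finset.Ico 1 (m + 1), f k = ∏ j ∈ Finset.range m, f (j + 1) := by
  rw [Finset.prod_Ico_eq_prod_range]
  simp only [Nat.add_sub_cancel]
  apply Finset.prod_congr rfl
  intro j _
  congr 1
  omega

lemma cheb_inv_neg_one_pow_mul (k : ℕ) (a : ℝ) : ((-1:ℝ)^k * a)⁻¹ = (-1:ℝ)^k * a⁻¹ := by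
  rcases Nat.even_or_odd k with h | h
  · rw [h.neg_one_pow]; simp
  · rw [h.neg_one_pow]; simp [inv_neg]

set_option maxHeartbeats 1000000 in
/-- Riesz/Salzer formula for the barycentric quantities `λ_i` at the
Chebyshev points of the second kind `x_i = -cos(iπ/n)`. -/
theorem chebyshev_barycentric_lambda
    (n : ℕ) (hn : 1 ≤ n) (x lam : ℕ → ℝ)
    (hx : ∀ i ≤ n, x i = -Real.cos (i * Real.pi / n))
    (hlam : ∀ i ≤ n, lam i = ∏ j ∈ (Finset.range (n + 1)).erase i, 1 / (x i - x j)) :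
    lam 0 = (-1 : ℝ) ^ n * (2 : ℝ) ^ ((n : ℤ) - 2) / n ∧
    lam n = (2 : ℝ) ^ ((n : ℤ) - 2) / n ∧
    ∀ i, 0 < i → i < n → lam i = (-1 : ℝ) ^ (n - i) * (2 : ℝ) ^ ((n : ℤ) - 1) / n := by
  have hnR : (0:ℝ) < n := by exact_mod_cast hn
  have hnne : (n:ℝ) ≠ 0 := ne_of_gt hnR
  have hπ := Real.pi_pos
  set s : ℕ → ℝ := fun k => Real.sin (k * Real.pi / (2 * n)) with hs
  have hsym : ∀ k, k ≤ 2 * n → s (2 * n - k) = s k := fun k hk => cheb_ssym n k hn hk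
  have hspos : ∀ k, 0 < k → k < 2 * n → 0 < s k := by
    intro k h1 h2
    apply Real.sin_pos_of_pos_of_lt_pi
    · have : (0:ℝ) < k := by exact_mod_cast h1
      positivity
    · rw [div_lt_iff₀ (by positivity)]
      have : (k:ℝ) < 2 * n := by exact_mod_cast h2
      nlinarith
  have hsn : s n = 1 := by
    simp only [hs]
    rw [show (n:ℝ) * Real.pi / (2 * n) = Real.pi / 2 by field_simp, Real.sin_pi_div_two]
  have hdlt : ∀ i j : ℕ, j < i → i ≤ n → x i - x j = 2 * s (i + j) * s (i - j) := by
    intro i j hij hi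
    rw [hx i hi, hx j (by omega)]
    have h1 : -Real.cos (i * Real.pi / n) - -Real.cos (j * Real.pi / n)
        = Real.cos (j * Real.pi / n) - Real.cos (i * Real.pi / n) := by ring
    rw [h1, Real.cos_sub_cos]
    have e1 : ((j:ℝ) * Real.pi / n + (i:ℝ) * Real.pi / n) / 2
        = ((i + j : ℕ) : ℝ) * Real.pi / (2 * n) := by
      push_cast; field_simp; ring
    have e2 : ((j:ℝ) * Real.pi / n - (i:ℝ) * Real.pi / n) / 2
        = -(((i - j : ℕ) : ℝ) * Real.pi / (2 * n)) := by
      rw [Nat.cast_sub hij.le]; field_simp; ring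
    rw [e1, e2, Real.sin_neg]
    simp only [hs]; ring
  have hdgt : ∀ i j : ℕ, i < j → j ≤ n → x i - x j = -(2 * s (i + j) * s (j - i)) := by
    intro i j hij hj
    rw [hx i (by omega), hx j hj]
    have h1 : -Real.cos (i * Real.pi / n) - -Real.cos (j * Real.pi / n)
        = Real.cos (j * Real.pi / n) - Real.cos (i * Real.pi / n) := by ring
    rw [h1, Real.cos_sub_cos]
    have e1 : ((j:ℝ) * Real.pi / n + (i:ℝ) * Real.pi / n) / 2
        = ((i + j : ℕ) : ℝ) * Real.pi / (2 * n) := by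
      push_cast; field_simp; ring
    have e2 : ((j:ℝ) * Real.pi / n - (i:ℝ) * Real.pi / n) / 2
        = ((j - i : ℕ) : ℝ) * Real.pi / (2 * n) := by
      rw [Nat.cast_sub hij.le]; field_simp
    rw [e1, e2]
    simp only [hs]; ring
  have hlamP : ∀ i ≤ n, lam i = (∏ j ∈ (Finset.range (n + 1)).erase i, (x i - x j))⁻¹ := by
    intro i hi
    rw [hlam i hi]
    simp only [one_div]
    exact Finset.prod_inv_distrib _
  set K : ℝ := ∏ k ∈ Finset.Ico 1 n, s k with hK
  have hQ : ((2:ℝ) ^ (n - 1) * K) ^ 2 = n := by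
    have h := cheb_sin_prod_sq n hn
    rw [Finset.prod_mul_distrib, Finset.prod_const, Nat.card_Ico] at h
    exact h
  have hIco1 : ∏ k ∈ Finset.Ico 1 (n + 1), s k = K * s n := Finset.prod_Ico_succ_top hn s
  have h2pow : (2:ℝ) ^ n = 2 * 2 ^ (n - 1) := by
    conv_lhs => rw [show n = (n - 1) + 1 from by omega]
    rw [pow_succ]; ring
  have h2ne : ((2:ℝ) ^ n) ≠ 0 := by positivity
  have hval : ((2:ℝ) ^ n * (K * K))⁻¹ = (2:ℝ) ^ ((n:ℤ) - 2) / n := by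
    have hz : (2:ℝ) ^ ((n:ℤ) - 2) = 2 ^ n / 4 := by
      rw [zpow_sub₀ (two_ne_zero), zpow_natCast]; norm_num
    have hX : (2:ℝ) ^ n * (K * K) = 4 * n / 2 ^ n := by
      rw [eq_div_iff h2ne]
      linear_combination (4:ℝ) * hQ + ((2:ℝ)^n * K * K + 2 * 2^(n-1) * K * K) * h2pow
    rw [hX, hz, inv_div, div_div]
  refine ⟨?_, ?_, ?_⟩
  · -- i = 0
    have hE0 : (Finset.range (n + 1)).erase 0 = Finset.Ico 1 (n + 1) := by
      ext j
      simp only [Finset.mem_erase, Finset.mem_range, Finset.mem_Ico]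
      omega
    have hfac : ∀ j ∈ Finset.Ico 1 (n + 1), x 0 - x j = (-2) * (s j * s j) := by
      intro j hj
      simp only [Finset.mem_Ico] at hj
      rw [hdgt 0 j (by omega) (by omega)]
      rw [show 0 + j = j from by omega, show j - 0 = j from by omega]
      ring
    have hP0 : ∏ j ∈ (Finset.range (n + 1)).erase 0, (x 0 - x j)
        = (-1:ℝ)^n * ((2:ℝ)^n * (K * K)) := by
      rw [hE0, Finset.prod_congr rfl hfac, Finset.prod_mul_distrib, Finset.prod_const,
        Finset.prod_mul_distrib, Nat.card_Ico, Nat.add_sub_cancel, hIco1, hsn, neg_pow]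
      ring
    rw [hlamP 0 (by omega), hP0, cheb_inv_neg_one_pow_mul, hval, mul_div_assoc]
  · -- i = n
    have hEn : (Finset.range (n + 1)).erase n = Finset.range n := by
      rw [Finset.range_add_one, Finset.erase_insert (by simp)]
    have hfac : ∀ j ∈ Finset.range n, x n - x j = 2 * (s (n - j) * s (n - j)) := by
      intro j hj
      simp only [Finset.mem_range] at hj
      rw [hdlt n j hj le_rfl]
      have h1 : s (n - j) = s (n + j) := by
        have := hsym (n + j) (by omega)
        rwa [show 2 * n - (n + j) = n - j from by omega] at this
      rw [← h1]
      ring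
    have hR : ∏ j ∈ Finset.range n, s (n - j) = K * s n := by
      rw [cheb_prod_reflect s n, ← cheb_prod_Ico_one s n, hIco1]
    have hPn : ∏ j ∈ (Finset.range (n + 1)).erase n, (x n - x j)
        = (2:ℝ)^n * (K * K) := by
      rw [hEn, Finset.prod_congr rfl hfac, Finset.prod_mul_distrib, Finset.prod_const,
        Finset.card_range, Finset.prod_mul_distrib, hR, hsn]
      ring
    rw [hlamP n le_rfl, hPn, hval]
  · -- interior
    intro i hi0 hin
    have hi : i ≤ n := hin.le
    have hsplit : (Finset.range (n + 1)).erase i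
        = Finset.range i ∪ Finset.Ico (i + 1) (n + 1) := by
      ext j
      simp only [Finset.mem_erase, Finset.mem_range, Finset.mem_union, Finset.mem_Ico]
      omega
    have hdisj : Disjoint (Finset.range i) (Finset.Ico (i + 1) (n + 1)) := by
      rw [Finset.disjoint_left]
      intro j hj1 hj2
      simp only [Finset.mem_range] at hj1
      simp only [Finset.mem_Ico] at hj2
      omega
    set A := ∏ j ∈ Finset.range i, (x i - x j) with hA
    set B := ∏ j ∈ Finset.Ico (i + 1) (n + 1), (x i - x j) with hB
    have hPsplit : ∏ j ∈ (Finset.range (n + 1)).erase i, (x i - x j) = A * B := by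
      rw [hsplit, Finset.prod_union hdisj]
    set Pa := ∏ k ∈ Finset.Ico i (2 * i), s k with hPa
    set Ca := ∏ k ∈ Finset.Ico 1 (i + 1), s k with hCa
    set Pb := ∏ k ∈ Finset.Ico (2 * i + 1) (n + i + 1), s k with hPb
    set Cb := ∏ k ∈ Finset.Ico 1 (n - i + 1), s k with hCb
    set T1 := ∏ k ∈ Finset.Ico i (n + 1), s k with hT1
    set T2 := ∏ k ∈ Finset.Ico (n - i) n, s k with hT2
    have hAval : A = 2 ^ i * (Pa * Ca) := by
      have hfac : ∀ j ∈ Finset.range i, x i - x j = 2 * (s (i + j) * s (i - j)) := by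
        intro j hj
        simp only [Finset.mem_range] at hj
        rw [hdlt i j hj hi]; ring
      have ga : ∏ j ∈ Finset.range i, s (i + j) = Pa := by
        rw [hPa, Finset.prod_Ico_eq_prod_range, show 2 * i - i = i from by omega]
      have gb : ∏ j ∈ Finset.range i, s (i - j) = Ca := by
        rw [hCa, cheb_prod_Ico_one, ← cheb_prod_reflect s i]
      rw [hA, Finset.prod_congr rfl hfac, Finset.prod_mul_distrib, Finset.prod_const,
        Finset.card_range, Finset.prod_mul_distrib, ga, gb]
    have hBval : B = (-1:ℝ)^(n - i) * 2^(n - i) * (Pb * Cb) := by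
      have hfac : ∀ j ∈ Finset.Ico (i+1) (n+1), x i - x j = (-2) * (s (i + j) * s (j - i)) := by
        intro j hj
        simp only [Finset.mem_Ico] at hj
        rw [hdgt i j (by omega) (by omega)]; ring
      rw [hB, Finset.prod_congr rfl hfac, Finset.prod_mul_distrib, Finset.prod_const,
        Nat.card_Ico, show n + 1 - (i + 1) = n - i from by omega, Finset.prod_mul_distrib,
        neg_pow]
      have g1 : ∏ j ∈ Finset.Ico (i+1) (n+1), s (i + j) = Pb := by
        rw [hPb, Finset.prod_Ico_eq_prod_range, Finset.prod_Ico_eq_prod_range,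
          show n + 1 - (i + 1) = n - i from by omega,
          show n + i + 1 - (2 * i + 1) = n - i from by omega]
        apply Finset.prod_congr rfl
        intro j _
        show s (i + (i + 1 + j)) = s (2 * i + 1 + j)
        congr 1; omega
      have g2 : ∏ j ∈ Finset.Ico (i+1) (n+1), s (j - i) = Cb := by
        rw [hCb, cheb_prod_Ico_one, Finset.prod_Ico_eq_prod_range,
          show n + 1 - (i + 1) = n - i from by omega]
        apply Finset.prod_congr rfl
        intro j _
        show s (i + 1 + j - i) = s (j + 1)
        congr 1; omega
      rw [g1, g2]
    have e1 : Pa * (s (2 * i) * Pb) = T1 * T2 := by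
      rw [hPa, hPb, hT1, hT2,
        ← Finset.prod_eq_prod_Ico_succ_bot (show 2 * i < n + i + 1 from by omega) s,
        Finset.prod_Ico_consecutive s (show i ≤ 2 * i from by omega)
          (show 2 * i ≤ n + i + 1 from by omega),
        ← Finset.prod_Ico_consecutive s (show i ≤ n + 1 from by omega)
          (show n + 1 ≤ n + i + 1 from by omega)]
      congr 1
      refine Finset.prod_nbij' (fun k => 2 * n - k) (fun k => 2 * n - k) ?_ ?_ ?_ ?_ ?_
      · intro a ha; simp only [Finset.mem_Ico] at *; omega
      · intro a ha; simp only [Finset.mem_Ico] at *; omega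
      · intro a ha; simp only [Finset.mem_Ico] at ha
        show 2 * n - (2 * n - a) = a; omega
      · intro a ha; simp only [Finset.mem_Ico] at ha
        show 2 * n - (2 * n - a) = a; omega
      · intro a ha
        simp only [Finset.mem_Ico] at ha
        show s a = s (2 * n - a)
        rw [← hsym (2 * n - a) (by omega), show 2 * n - (2 * n - a) = a from by omega]
    have e2 : Ca * T1 = s i * (K * s n) := by
      rw [hCa, hT1, Finset.prod_eq_prod_Ico_succ_bot (show i < n + 1 from by omega) s,
        ← mul_assoc, mul_comm (∏ k ∈ Finset.Ico 1 (i + 1), s k) (s i), mul_assoc,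
        Finset.prod_Ico_consecutive s (show 1 ≤ i + 1 from by omega)
          (show i + 1 ≤ n + 1 from by omega), hIco1]
    have e3 : Cb * T2 = s (n - i) * K := by
      rw [hCb, hT2, Finset.prod_eq_prod_Ico_succ_bot (show n - i < n from by omega) s,
        ← mul_assoc, mul_comm (∏ k ∈ Finset.Ico 1 (n - i + 1), s k) (s (n - i)), mul_assoc,
        Finset.prod_Ico_consecutive s (show 1 ≤ n - i + 1 from by omega)
          (show n - i + 1 ≤ n from by omega), ← hK]
    set c : ℝ := Real.cos (i * Real.pi / (2 * n)) with hc
    have hci : s (n - i) = c := by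
      simp only [hs, hc]
      rw [Nat.cast_sub hi, show ((n:ℝ) - i) * Real.pi / (2 * n)
        = Real.pi / 2 - i * Real.pi / (2 * n) from by field_simp,
        Real.sin_pi_div_two_sub]
    have h2i : s (2 * i) = 2 * s i * c := by
      simp only [hs, hc]
      rw [show ((2 * i : ℕ):ℝ) * Real.pi / (2 * n) = 2 * ((i:ℝ) * Real.pi / (2 * n)) from by
        push_cast; ring, Real.sin_two_mul]
    have hsipos : 0 < s i := hspos i (by omega) (by omega)
    have hcpos : 0 < c := by
      have hilt : (i:ℝ) < n := by exact_mod_cast hin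
      have h2 : (i:ℝ) * Real.pi / (2 * n) < Real.pi / 2 := by
        rw [div_lt_iff₀ (by positivity : (0:ℝ) < 2 * n)]
        nlinarith [Real.pi_pos]
      have h0 : (0:ℝ) ≤ (i:ℝ) * Real.pi / (2 * n) := by positivity
      rw [hc]
      apply Real.cos_pos_of_mem_Ioo
      rw [Set.mem_Ioo]
      exact ⟨by nlinarith [Real.pi_pos], h2⟩
    have hkey : (2 * s i * c) * (A * B)
        = (-1:ℝ)^(n-i) * 2^i * 2^(n-i) * (s i * (K * s n)) * (s (n - i) * K) := by
      rw [hAval, hBval, ← h2i]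
      linear_combination ((-1:ℝ)^(n-i) * 2^i * 2^(n-i) * Ca * Cb) * e1
        + ((-1:ℝ)^(n-i) * 2^i * 2^(n-i) * (Cb * T2)) * e2
        + ((-1:ℝ)^(n-i) * 2^i * 2^(n-i) * (s i * (K * s n))) * e3
    have hpow2 : (2:ℝ)^i * 2^(n-i) = 2^n := by
      rw [← pow_add]; congr 1; omega
    have hne : (2 * s i * c) ≠ 0 := ne_of_gt (mul_pos (mul_pos two_pos hsipos) hcpos)
    have hABval' : (A * B) * 2^n = (-1:ℝ)^(n-i) * (2 * n) := by
      apply mul_left_cancel₀ hne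
      rw [show (2 * s i * c) * ((A * B) * 2^n) = ((2 * s i * c) * (A * B)) * 2^n from by ring,
        hkey, hsn, hci]
      linear_combination (((-1:ℝ)^(n-i)) * (s i * K) * (c * K) * (2:ℝ)^n) * hpow2
        + (((-1:ℝ)^(n-i)) * s i * c * K^2 * ((2:ℝ)^n + 2 * 2^(n-1))) * h2pow
        + (4 * ((-1:ℝ)^(n-i)) * s i * c) * hQ
    have hABeq : A * B = (-1:ℝ)^(n - i) * (2 * n) / 2 ^ n := by
      rw [eq_div_iff h2ne]; exact hABval'
    have hz1 : (2:ℝ) ^ ((n:ℤ) - 1) = 2^n / 2 := by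
      rw [zpow_sub₀ (two_ne_zero), zpow_natCast]; norm_num
    rw [hlamP i hi, hPsplit, hABeq,
      show (-1:ℝ)^(n-i) * (2 * n) / 2^n = (-1:ℝ)^(n-i) * (2 * n / 2^n) from by ring,
      cheb_inv_neg_one_pow_mul, hz1, inv_div, mul_div_assoc, div_div]
end

section
/- If n ≥ 1, x_i = −cos(iπ/n) for i = 0,…,n are the Chebyshev points of the second kind, and γ_0 = 1/2, γ_n = (−1)^n/2, γ_i = (−1)^i for 0 < i < n are the simplified weights, then for every k with 0 ≤ k ≤ n one has (−1)^n · (2^{n−1}/n) · (∏_{i≠k} (x_k − x_i)) · γ_k = 1. -/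
open Finset Real

lemma abs_one_sub_exp (θ : ℝ) (h0 : 0 < θ) (h1 : θ < 2*π) :
    ‖(1 : ℂ) - Complex.exp (θ * Complex.I)‖ = 2 * Real.sin (θ/2) := by
  have key : (1 : ℂ) - Complex.exp (θ * Complex.I)
      = -(2 * (Real.sin (θ/2) : ℂ)) * Complex.I * Complex.exp ((θ/2) * Complex.I) := by
    rw [Complex.ofReal_sin, Complex.sin]
    push_cast
    rw [show (-(↑θ / 2) * Complex.I) = -((θ * Complex.I)/2) by ring,
        show ((θ:ℂ) * Complex.I / 2) = (θ * Complex.I)/2 by ring,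
        show ((θ:ℂ)/2 * Complex.I) = (θ * Complex.I)/2 by ring]
    have h2 := Complex.exp_add ((θ * Complex.I)/2) ((θ * Complex.I)/2)
    rw [show (θ*Complex.I)/2 + (θ*Complex.I)/2 = θ*Complex.I by ring] at h2
    rw [Complex.exp_neg, h2]
    have hne := Complex.exp_ne_zero ((θ*Complex.I)/2)
    field_simp
    ring_nf
    simp [Complex.I_sq]
    ring
  rw [key]
  have hs : 0 ≤ Real.sin (θ/2) :=
    Real.sin_nonneg_of_nonneg_of_le_pi (by linarith) (by linarith)
  simp [-Complex.ofReal_sin, Complex.norm_exp, Complex.norm_real, Real.norm_eq_abs, abs_of_nonneg hs]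

lemma sine_product (m : ℕ) (hm : 1 ≤ m) :
    ∏ j ∈ Finset.Ico 1 m, Real.sin (j * π / m) = m / 2^(m-1) := by
  obtain ⟨N, rfl⟩ : ∃ N, m = N+1 := ⟨m-1, by omega⟩
  have hm0 : (N+1 : ℕ) ≠ 0 := by omega
  have hμ := Complex.isPrimitiveRoot_exp (N+1) hm0
  have hprod := hμ.prod_one_sub_pow_eq_order
  have habs := congrArg (norm : ℂ → ℝ) hprod
  rw [norm_prod] at habs
  have hmr : (0:ℝ) < ((N:ℝ)+1) := by positivity
  have hstep : ∀ k ∈ Finset.range N,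
      ‖1 - Complex.exp (2*π*Complex.I/((N+1:ℕ):ℂ)) ^ (k+1)‖
        = 2 * Real.sin ((k+1)*π/(N+1)) := by
    intro k hk
    rw [Finset.mem_range] at hk
    rw [← Complex.exp_nat_mul]
    have harg : ((k:ℂ)+1) * (2*π*Complex.I/((N:ℂ)+1))
        = ((2*π*(k+1)/(N+1) : ℝ) : ℂ) * Complex.I := by
      have hne : ((N:ℂ)+1) ≠ 0 := by
        exact_mod_cast (Nat.cast_ne_zero (R := ℂ)).2 hm0
      push_cast
      field_simp
    push_cast
    rw [harg, abs_one_sub_exp]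
    · have he : 2*π*((k:ℝ)+1)/((N:ℝ)+1)/2 = ((k:ℝ)+1)*π/((N:ℝ)+1) := by
        field_simp
      rw [he]
    · positivity
    · have hk' : (k:ℝ)+1 < (N:ℝ)+1 := by exact_mod_cast (by omega : k+1 < N+1)
      have hπ := Real.pi_pos
      rw [div_lt_iff₀ hmr]
      nlinarith
  rw [Finset.prod_congr rfl hstep, Finset.prod_mul_distrib, Finset.prod_const,
      Finset.card_range] at habs
  have hrhs : ‖(N:ℂ) + 1‖ = (N:ℝ)+1 := by
    rw [show ((N:ℂ)+1) = ((N+1:ℕ):ℂ) by push_cast; ring, Complex.norm_natCast]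
    push_cast
    ring
  rw [hrhs] at habs
  rw [Finset.prod_Ico_eq_prod_range]
  simp only [Nat.add_sub_cancel]
  have hre : ∏ j ∈ Finset.range N, Real.sin ((((1+j : ℕ)):ℝ)*π/((N:ℝ)+1))
      = ∏ j ∈ Finset.range N, Real.sin (((j:ℝ)+1)*π/((N:ℝ)+1)) :=
    Finset.prod_congr rfl (fun j _ => by push_cast; ring_nf)
  push_cast at hre ⊢
  rw [hre]
  have h2 : (0:ℝ) < 2^N := by positivity
  field_simp
  linarith [habs]

lemma cheb_prod (n k : ℕ) (hn : 1 ≤ n) (hk : k ≤ n) :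
    ∏ i ∈ (Finset.range (n+1)).erase k,
        (-Real.cos (k*π/n) - (-Real.cos (i*π/n)))
      = (-1:ℝ)^(n-k) * n * (if k = 0 ∨ k = n then 2 else 1) / 2^(n-1) := by
  set s : ℝ := π/(2*n) with hs
  set f : ℕ → ℝ := fun j => Real.sin (j*s) with hf
  have hnr : (0:ℝ) < n := by exact_mod_cast hn
  have hπ := Real.pi_pos
  have hsp : 0 < s := by positivity
  -- basic facts
  have h2ns : (2*(n:ℝ))*s = π := by rw [hs]; field_simp
  have hfpos : ∀ j, 0 < j → j < 2*n → 0 < f j := by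
    intro j hj1 hj2
    apply Real.sin_pos_of_pos_of_lt_pi
    · positivity
    · rw [← h2ns]
      have : (j:ℝ) < 2*n := by exact_mod_cast hj2
      nlinarith
  have hrefl : ∀ j ≤ 2*n, f (2*n - j) = f j := by
    intro j hj
    have hc : ((2*n - j : ℕ):ℝ) = 2*(n:ℝ) - j := by
      push_cast [Nat.cast_sub hj]; ring
    simp only [hf, hc, sub_mul, h2ns, Real.sin_pi_sub]
  have hfn : f n = 1 := by
    have : (n:ℝ)*s = π/2 := by rw [hs]; field_simp
    simp [hf, this]
  have hPi : ∏ j ∈ Finset.Ico 1 (2*n), f j = 2*n / 2^(2*n-1) := by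
    have h1 := sine_product (2*n) (by omega)
    have h2 : ∀ j ∈ Finset.Ico 1 (2*n), Real.sin (j * π / ((2*n:ℕ):ℝ)) = f j := by
      intro j _
      rw [hf]
      push_cast
      congr 1
      rw [hs]
      field_simp
    rw [Finset.prod_congr rfl h2] at h1
    rw [h1]
    push_cast
    ring
  -- factorization of each term
  have hfac : ∀ i ∈ (Finset.range (n+1)).erase k,
      (-Real.cos (k*π/n) - (-Real.cos (i*π/n)))
        = 2 * f (k+i) * Real.sin (((k:ℝ)-i)*s) := by
    intro i hi
    have : -Real.cos (k*π/n) - (-Real.cos (i*π/n))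
        = Real.cos ((i:ℝ)*π/n) - Real.cos ((k:ℝ)*π/n) := by ring
    rw [this, Real.cos_sub_cos]
    rw [hf]
    push_cast
    rw [show ((i:ℝ)*π/n + k*π/n)/2 = ((k:ℝ)+i)*s by rw [hs]; field_simp; ring]
    rw [show ((i:ℝ)*π/n - k*π/n)/2 = -(((k:ℝ)-i)*s) by rw [hs]; field_simp; ring]
    rw [Real.sin_neg]
    ring
  rw [Finset.prod_congr rfl hfac]
  rw [Finset.prod_mul_distrib, Finset.prod_mul_distrib, Finset.prod_const]
  have hcard : ((Finset.range (n+1)).erase k).card = n := by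
    rw [Finset.card_erase_of_mem (by simp; omega), Finset.card_range]
    omega
  rw [hcard]
  -- reindex A
  have hA : ∏ i ∈ (Finset.range (n+1)).erase k, f (k+i)
      = ∏ m ∈ (Finset.Ico k (n+k+1)).erase (2*k), f m := by
    apply Finset.prod_nbij' (fun i => k+i) (fun m => m-k)
    · intro a ha
      simp only [Finset.mem_erase, Finset.mem_Ico, Finset.mem_range] at *
      omega
    · intro a ha
      simp only [Finset.mem_erase, Finset.mem_Ico, Finset.mem_range] at *
      omega
    · intro a ha
      simp only [Finset.mem_erase, Finset.mem_range] at ha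
      omega
    · intro a ha
      simp only [Finset.mem_erase, Finset.mem_Ico] at ha
      omega
    · intro a _
      rfl
  -- split for B
  have hsplit : (Finset.range (n+1)).erase k
      = Finset.range k ∪ Finset.Ico (k+1) (n+1) := by
    ext i
    simp only [Finset.mem_erase, Finset.mem_range, Finset.mem_union, Finset.mem_Ico]
    omega
  have hdisj : Disjoint (Finset.range k) (Finset.Ico (k+1) (n+1)) := by
    rw [Finset.disjoint_left]
    intro a ha hb
    simp only [Finset.mem_range, Finset.mem_Ico] at *
    omega
  have hB1 : ∏ i ∈ Finset.range k, Real.sin (((k:ℝ)-i)*s)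
      = ∏ j ∈ Finset.Ico 1 (k+1), f j := by
    apply Finset.prod_nbij' (fun i => k-i) (fun j => k-j)
    · intro a ha
      simp only [Finset.mem_Ico, Finset.mem_range] at *
      omega
    · intro a ha
      simp only [Finset.mem_Ico, Finset.mem_range] at *
      omega
    · intro a ha
      simp only [Finset.mem_range] at ha
      omega
    · intro a ha
      simp only [Finset.mem_Ico] at ha
      omega
    · intro a ha
      simp only [Finset.mem_range] at ha
      simp only [hf]
      congr 1
      push_cast [Nat.cast_sub (by omega : a ≤ k)]
      ring
  have hB2 : ∏ i ∈ Finset.Ico (k+1) (n+1), Real.sin (((k:ℝ)-i)*s)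
      = (-1:ℝ)^(n-k) * ∏ j ∈ Finset.Ico 1 (n-k+1), f j := by
    have hterm : ∀ i ∈ Finset.Ico (k+1) (n+1),
        Real.sin (((k:ℝ)-i)*s) = -1 * f (i-k) := by
      intro i hi
      simp only [Finset.mem_Ico] at hi
      simp only [hf]
      rw [show ((k:ℝ)-i)*s = -((((i-k:ℕ)):ℝ)*s) by
        push_cast [Nat.cast_sub (by omega : k ≤ i)]; ring]
      rw [Real.sin_neg]
      ring
    rw [Finset.prod_congr rfl hterm, Finset.prod_mul_distrib, Finset.prod_const,
        Nat.card_Ico]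
    have hc : n + 1 - (k+1) = n - k := by omega
    rw [hc]
    congr 1
    apply Finset.prod_nbij' (fun i => i-k) (fun j => j+k)
    · intro a ha
      simp only [Finset.mem_Ico] at *
      omega
    · intro a ha
      simp only [Finset.mem_Ico] at *
      omega
    · intro a ha
      simp only [Finset.mem_Ico] at ha
      omega
    · intro a ha
      simp only [Finset.mem_Ico] at ha
      omega
    · intro a _
      rfl
  rw [hA, hsplit, Finset.prod_union hdisj, hB1, hB2]
  -- reflection of initial segments
  have hrefl2 : ∀ m ≤ n, ∏ j ∈ Finset.Ico 1 (m+1), f j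
      = ∏ j ∈ Finset.Ico (2*n-m) (2*n), f j := by
    intro m hm
    apply Finset.prod_nbij' (fun j => 2*n-j) (fun j => 2*n-j)
    · intro a ha
      simp only [Finset.mem_Ico] at *
      omega
    · intro a ha
      simp only [Finset.mem_Ico] at *
      omega
    · intro a ha
      simp only [Finset.mem_Ico] at ha
      omega
    · intro a ha
      simp only [Finset.mem_Ico] at ha
      omega
    · intro a ha
      simp only [Finset.mem_Ico] at ha
      exact (hrefl a (by omega)).symm
  have hpow : (2:ℝ)^(2*n-1) = 2^n * 2^(n-1) := by
    rw [← pow_add]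
    congr 1
    omega
  by_cases hk0 : k = 0
  · subst hk0
    rw [show (Finset.Ico 0 (n+0+1)).erase (2*0) = Finset.Ico 1 (n+1) by
      ext i; simp only [Finset.mem_erase, Finset.mem_Ico]; omega]
    rw [show Finset.Ico 1 (0+1) = (∅ : Finset ℕ) from Finset.Ico_self 1]
    rw [Finset.prod_empty]
    simp only [Nat.sub_zero, eq_self_iff_true, true_or, if_pos]
    have eA := hrefl2 n le_rfl
    rw [show 2*n-n = n by omega] at eA
    have eB : ∏ j ∈ Finset.Ico 1 (n+1), f j = (∏ j ∈ Finset.Ico 1 n, f j) * f n :=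
      Finset.prod_Ico_succ_top (by omega) f
    have eC : (∏ j ∈ Finset.Ico 1 n, f j) * (∏ j ∈ Finset.Ico n (2*n), f j)
        = ∏ j ∈ Finset.Ico 1 (2*n), f j :=
      Finset.prod_Ico_consecutive f (by omega) (by omega)
    have hPP : (∏ j ∈ Finset.Ico 1 (n+1), f j) * (∏ j ∈ Finset.Ico 1 (n+1), f j)
        * (2^n * 2^(n-1)) = 2*n := by
      nth_rewrite 1 [eB]
      rw [hfn, mul_one, eA, eC, hPi, hpow]
      field_simp
    have h2n1 : ((2:ℝ))^(n-1) ≠ 0 := by positivity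
    field_simp
    linear_combination hPP
  · by_cases hkn : k = n
    · subst hkn
      rw [show (Finset.Ico k (k+k+1)).erase (2*k) = Finset.Ico k (2*k) by
        ext i; simp only [Finset.mem_erase, Finset.mem_Ico]; omega]
      rw [show k - k = 0 by omega, show Finset.Ico 1 (0+1) = (∅ : Finset ℕ) from Finset.Ico_self 1]
      rw [Finset.prod_empty]
      simp only [pow_zero, eq_self_iff_true, or_true, if_pos]
      have eB : ∏ j ∈ Finset.Ico 1 (k+1), f j = (∏ j ∈ Finset.Ico 1 k, f j) * f k :=
        Finset.prod_Ico_succ_top (by omega) f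
      have eC : (∏ j ∈ Finset.Ico 1 k, f j) * (∏ j ∈ Finset.Ico k (2*k), f j)
          = ∏ j ∈ Finset.Ico 1 (2*k), f j :=
        Finset.prod_Ico_consecutive f (by omega) (by omega)
      have hPP : (∏ j ∈ Finset.Ico 1 (k+1), f j) * (∏ j ∈ Finset.Ico k (2*k), f j)
          * (2^k * 2^(k-1)) = 2*k := by
        rw [eB, hfn, mul_one, eC, hPi, hpow]
        field_simp
      have h2n1 : ((2:ℝ))^(k-1) ≠ 0 := by positivity
      field_simp
      linear_combination hPP
    · -- interior case
      rw [if_neg (by tauto)]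
      have hk1 : 1 ≤ k := by omega
      have hkn' : k < n := by omega
      have hmem : 2*k ∈ Finset.Ico k (n+k+1) := by
        simp only [Finset.mem_Ico]; omega
      have eA2 := Finset.mul_prod_erase _ f hmem
      have eTop : ∏ m ∈ Finset.Ico k (n+k+1), f m
          = (∏ m ∈ Finset.Ico k (n+k), f m) * f (n+k) :=
        Finset.prod_Ico_succ_top (by omega) f
      have eB1' : ∏ j ∈ Finset.Ico 1 (k+1), f j
          = (∏ j ∈ Finset.Ico 1 k, f j) * f k :=
        Finset.prod_Ico_succ_top (by omega) f
      have eB2' := hrefl2 (n-k) (by omega)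
      rw [show 2*n-(n-k) = n+k by omega] at eB2'
      have chain : (∏ j ∈ Finset.Ico 1 k, f j) * (∏ j ∈ Finset.Ico k (n+k), f j)
          = ∏ j ∈ Finset.Ico 1 (n+k), f j :=
        Finset.prod_Ico_consecutive f (by omega) (by omega)
      have chain2 : (∏ j ∈ Finset.Ico 1 (n+k), f j) * (∏ j ∈ Finset.Ico (n+k) (2*n), f j)
          = ∏ j ∈ Finset.Ico 1 (2*n), f j :=
        Finset.prod_Ico_consecutive f (by omega) (by omega)
      have efnk : f (n+k) = Real.cos ((k:ℝ)*s) := by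
        have hns : (n:ℝ)*s = π/2 := by rw [hs]; field_simp
        simp only [hf]
        push_cast
        rw [add_mul, hns, ← Real.sin_add_pi_div_two]
        ring_nf
      have ef2k : f (2*k) = 2 * f k * Real.cos ((k:ℝ)*s) := by
        simp only [hf]
        push_cast
        rw [show (2*(k:ℝ))*s = 2*((k:ℝ)*s) by ring, Real.sin_two_mul]
      have hfk : 0 < f k := hfpos k (by omega) (by omega)
      have hcos : 0 < Real.cos ((k:ℝ)*s) := by
        have hns : (n:ℝ)*s = π/2 := by rw [hs]; field_simp
        have hkr : (k:ℝ) < n := by exact_mod_cast hkn'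
        have h1 : (0:ℝ) ≤ (k:ℝ)*s := by positivity
        have h2 : (k:ℝ)*s < π/2 := by
          rw [← hns]
          exact mul_lt_mul_of_pos_right hkr hsp
        apply Real.cos_pos_of_mem_Ioo
        constructor <;> linarith
      set E := ∏ m ∈ (Finset.Ico k (n+k+1)).erase (2*k), f m with hE
      set P1 := ∏ j ∈ Finset.Ico 1 (k+1), f j with hP1
      set P2 := ∏ j ∈ Finset.Ico 1 (n-k+1), f j with hP2
      have hKey : f (2*k) * (E * P1 * P2)
          = (2*n/2^(2*n-1)) * (f k * Real.cos ((k:ℝ)*s)) := by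
        calc f (2*k) * (E * P1 * P2) = (f (2*k) * E) * P1 * P2 := by ring
        _ = (∏ m ∈ Finset.Ico k (n+k+1), f m) * P1 * P2 := by rw [eA2]
        _ = (((∏ j ∈ Finset.Ico 1 k, f j) * (∏ m ∈ Finset.Ico k (n+k), f m))
              * (∏ j ∈ Finset.Ico (n+k) (2*n), f j)) * (f (n+k) * f k) := by
            rw [eTop, eB1', eB2']
            ring
        _ = (∏ j ∈ Finset.Ico 1 (2*n), f j) * (f (n+k) * f k) := by rw [chain, chain2]
        _ = (2*n/2^(2*n-1)) * (f k * Real.cos ((k:ℝ)*s)) := by rw [hPi, efnk]; ring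
      rw [ef2k] at hKey
      have hcc : (2:ℝ) * f k * Real.cos ((k:ℝ)*s) ≠ 0 := by positivity
      have hEeq : E * P1 * P2 = (2*n/2^(2*n-1))/2 :=
        mul_left_cancel₀ hcc (hKey.trans (by ring))
      have h2n1 : ((2:ℝ))^(n-1) ≠ 0 := by positivity
      have h2n : ((2:ℝ))^(2*n-1) ≠ 0 := by positivity
      rw [hpow] at hEeq
      field_simp [hpow] at hEeq ⊢
      linear_combination hEeq

/-- For the Chebyshev points of the second kind and the simplified weights `γ`,
`(-1)^n · (2^{n-1}/n) · ∏_{i≠k}(x_k - x_i) · γ_k = 1` for every `k ≤ n`. -/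
theorem chebyshev_simplified_weights_normalization
    (n : ℕ) (hn : 1 ≤ n) (x γ : ℕ → ℝ)
    (hx : ∀ i ≤ n, x i = -Real.cos (i * Real.pi / n))
    (hγ0 : γ 0 = 1 / 2) (hγn : γ n = (-1 : ℝ) ^ n / 2)
    (hγ : ∀ i, 0 < i → i < n → γ i = (-1 : ℝ) ^ i) :
    ∀ k ≤ n,
      (-1 : ℝ) ^ n * ((2 : ℝ) ^ ((n : ℤ) - 1) / n) *
        (∏ i ∈ (Finset.range (n + 1)).erase k, (x k - x i)) * γ k = 1 := by
  intro k hk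
  have hx' : ∀ i ∈ (Finset.range (n+1)).erase k,
      x k - x i = -Real.cos (k*π/n) - (-Real.cos (i*π/n)) := by
    intro i hi
    simp only [Finset.mem_erase, Finset.mem_range] at hi
    rw [hx k hk, hx i (by omega)]
  rw [Finset.prod_congr rfl hx', cheb_prod n k hn hk]
  have hz : (2:ℝ)^((n:ℤ)-1) = 2^(n-1) := by
    rw [show (n:ℤ)-1 = ((n-1:ℕ):ℤ) by omega, zpow_natCast]
  rw [hz]
  have h1 : ((-1:ℝ))^n * ((-1:ℝ))^n = 1 := by
    rw [← pow_add, ← two_mul, pow_mul, neg_one_sq, one_pow]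
  have h2 : ((-1:ℝ))^(n-k) * (-1)^k = (-1)^n := by
    rw [← pow_add, Nat.sub_add_cancel hk]
  generalize hε : ((-1):ℝ)^n = ε at h1 h2 hγn ⊢
  have hnr : ((n:ℝ)) ≠ 0 := by positivity
  have hc : ((2:ℝ))^(n-1) ≠ 0 := by positivity
  by_cases hk0 : k = 0
  · subst hk0
    rw [if_pos (by tauto), hγ0, Nat.sub_zero]
    field_simp
    linear_combination ε * hε + h1
  · by_cases hkn : k = n
    · subst hkn
      rw [if_pos (by tauto), hγn, Nat.sub_self, pow_zero]
      field_simp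
      linear_combination h1
    · rw [if_neg (by tauto), hγ k (by omega) (by omega)]
      field_simp
      linear_combination ε * h2 + h1
end

section
/- Let n = 2l be even with n ≥ 2, let 0 ≤ k < n with k odd, and let t ∈ (x_k, x_{k+1}). Then q(t) = −(β + Σ_{i=1}^{l−1} ξ_{2i+1} + ω). -/
lemma aux_alt_sum (g : ℕ → ℝ) (m : ℕ) :
    ∑ i ∈ Finset.Ico 1 (2 * (m + 1)), (-1 : ℝ) ^ i * g i
      = -g 1 + ∑ i ∈ Finset.Icc 1 m, (g (2 * i) - g (2 * i + 1)) := by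
  induction m with
  | zero =>
    norm_num [Finset.sum_Ico_succ_top]
  | succ m ih =>
    have h1 : 2 * (m + 1 + 1) = (2 * (m + 1)) + 1 + 1 := by ring
    rw [h1, Finset.sum_Ico_succ_top (by omega), Finset.sum_Ico_succ_top (by omega), ih]
    have he : (-1 : ℝ) ^ (2 * (m + 1)) = 1 := by
      rw [pow_mul]; norm_num
    have ho : (-1 : ℝ) ^ (2 * (m + 1) + 1) = -1 := by
      rw [pow_succ, he]; ring
    rw [he, ho, Finset.sum_Icc_succ_top (by omega : 1 ≤ m + 1)]
    ring

/-- Decomposition of the denominator `q(t)` of the second barycentric formula: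
case `n = 2l` even, `k` odd, `t ∈ (x_k, x_{k+1})`:
`q(t) = -(β + Σ_{i=1}^{l-1} ξ_{2i+1} + ω)`. -/
theorem denominator_decomposition_even_odd
    (n l k : ℕ) (hn : 2 ≤ n) (hl : n = 2 * l) (hk : k < n) (hko : Odd k)
    (x γ : ℕ → ℝ)
    (hx0 : x 0 = -1) (hxn : x n = 1)
    (hmono : ∀ i < n, x i < x (i + 1))
    (hγ0 : γ 0 = 1 / 2) (hγn : γ n = (-1 : ℝ) ^ n / 2)
    (hγ : ∀ i, 0 < i → i < n → γ i = (-1 : ℝ) ^ i)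
    (t : ℝ) (ht : t ∈ Set.Ioo (x k) (x (k + 1))) :
    ∑ i ∈ Finset.range (n + 1), γ i / (t - x i)
      = -(((2 + x 1) + t) / (2 * (t - x 1) * (1 + t))
          + (∑ i ∈ Finset.Icc 1 (l - 1),
              (x (2 * i + 1) - x (2 * i)) / ((t - x (2 * i + 1)) * (t - x (2 * i))))
          + 1 / (2 * (1 - t))) := by
  have hl1 : 1 ≤ l := by omega
  have hk1 : 1 ≤ k := hko.pos
  -- monotonicity
  have hmon : ∀ j, j ≤ n → ∀ i, i ≤ j → x i ≤ x j := by
    intro j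
    induction j with
    | zero => intro _ i hi; rw [Nat.le_zero.mp hi]
    | succ j ih =>
      intro hjn i hi
      rcases Nat.eq_or_lt_of_le hi with h | h
      · rw [h]
      · calc x i ≤ x j := ih (by omega) i (by omega)
          _ ≤ x (j + 1) := (hmono j (by omega)).le
  have hne : ∀ j, j ≤ n → t - x j ≠ 0 := by
    intro j hj
    rcases le_or_gt j k with h | h
    · have h1 : x j ≤ x k := hmon k (by omega) j h
      have := ht.1
      intro hc; nlinarith
    · have h1 : x (k + 1) ≤ x j := hmon j hj (k + 1) h
      have := ht.2
      intro hc; nlinarith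
  have h1 : t - x 1 ≠ 0 := hne 1 (by omega)
  have h2 : (1 : ℝ) + t ≠ 0 := by
    have := hne 0 (by omega); rw [hx0] at this; intro h; apply this; linarith
  have h3 : t - 1 ≠ 0 := by
    have := hne n (le_refl n); rwa [hxn] at this
  have h4 : (1 : ℝ) - t ≠ 0 := by intro h; apply h3; linarith
  -- peel the sum
  rw [Finset.sum_range_succ, Finset.range_eq_Ico,
    Finset.sum_eq_sum_Ico_succ_bot (by omega : 0 < n)]
  have hmid : ∑ i ∈ Finset.Ico 1 n, γ i / (t - x i)
      = ∑ i ∈ Finset.Ico 1 n, (-1 : ℝ) ^ i * (1 / (t - x i)) := by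
    refine Finset.sum_congr rfl fun i hi => ?_
    have hi' := Finset.mem_Ico.mp hi
    rw [hγ i (by omega) (by omega)]
    ring
  have haux := aux_alt_sum (fun i => 1 / (t - x i)) (l - 1)
  have hn2 : 2 * (l - 1 + 1) = n := by omega
  rw [hn2] at haux
  rw [hmid, haux]
  -- rewrite gamma values and endpoints
  have hev : Even n := ⟨l, by omega⟩
  rw [hγ0, hγn, hev.neg_one_pow, hx0, hxn]
  -- rewrite the xi sum
  have hξ : ∑ i ∈ Finset.Icc 1 (l - 1),
      (x (2 * i + 1) - x (2 * i)) / ((t - x (2 * i + 1)) * (t - x (2 * i)))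
      = -∑ i ∈ Finset.Icc 1 (l - 1), (1 / (t - x (2 * i)) - 1 / (t - x (2 * i + 1))) := by
    rw [← Finset.sum_neg_distrib]
    refine Finset.sum_congr rfl fun i hi => ?_
    have hi' := Finset.mem_Icc.mp hi
    have ha : t - x (2 * i + 1) ≠ 0 := hne _ (by omega)
    have hb : t - x (2 * i) ≠ 0 := hne _ (by omega)
    rw [neg_sub, div_sub_div _ _ ha hb]
    congr 1
    ring
  have hβ : (2 + x 1 + t) / (2 * (t - x 1) * (1 + t))
      = 1 / (t - x 1) - 1 / (2 * (1 + t)) := by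
    field_simp
    ring
  have hωn : (1 : ℝ) / 2 / (t - 1) = -(1 / (2 * (1 - t))) := by
    have h : (2 : ℝ) * (t - 1) = -(2 * (1 - t)) := by ring
    rw [div_div, h, div_neg]
  have hα : (1 : ℝ) / 2 / (t - -1) = 1 / (2 * (1 + t)) := by
    have h : (2 : ℝ) * (t - -1) = 2 * (1 + t) := by ring
    rw [div_div, h]
  rw [hξ, hβ, hωn, hα]
  ring
end

section
/- Let n = 2l+1 be odd with n ≥ 2, let 0 ≤ k < n with k even, and let t ∈ (x_k, x_{k+1}). Then q(t) = α + Σ_{i=1}^{l} ξ_{2i} + ω. -/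
lemma pair_sum_aux (f : ℕ → ℝ) (l : ℕ) :
    ∑ i ∈ Finset.range (2 * l), f (i + 1)
      = ∑ j ∈ Finset.range l, (f (2 * j + 1) + f (2 * j + 2)) := by
  induction l with
  | zero => simp
  | succ m ih =>
      have h2 : 2 * (m + 1) = (2 * m + 1) + 1 := by ring
      rw [h2, Finset.sum_range_succ, Finset.sum_range_succ, Finset.sum_range_succ, ih]
      rw [add_assoc]

/-- Decomposition of the denominator `q(t)` of the second barycentric formula:
case `n = 2l+1` odd, `k` even, `t ∈ (x_k, x_{k+1})`:
`q(t) = α + Σ_{i=1}^{l} ξ_{2i} + ω`. -/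
theorem denominator_decomposition_odd_even
    (n l k : ℕ) (hn : 2 ≤ n) (hl : n = 2 * l + 1) (hk : k < n) (hke : Even k)
    (x γ : ℕ → ℝ)
    (hx0 : x 0 = -1) (hxn : x n = 1)
    (hmono : ∀ i < n, x i < x (i + 1))
    (hγ0 : γ 0 = 1 / 2) (hγn : γ n = (-1 : ℝ) ^ n / 2)
    (hγ : ∀ i, 0 < i → i < n → γ i = (-1 : ℝ) ^ i)
    (t : ℝ) (ht : t ∈ Set.Ioo (x k) (x (k + 1))) :
    ∑ i ∈ Finset.range (n + 1), γ i / (t - x i)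
      = 1 / (2 * (1 + t))
        + (∑ i ∈ Finset.Icc 1 l,
            (x (2 * i) - x (2 * i - 1)) / ((t - x (2 * i)) * (t - x (2 * i - 1))))
        + 1 / (2 * (1 - t)) := by
  obtain ⟨ht1, ht2⟩ := ht
  -- monotonicity on [0, n]
  have hmono' : ∀ i j, i < j → j ≤ n → x i < x j := by
    intro i j hij hjn
    induction j with
    | zero => omega
    | succ m ih =>
        rcases Nat.lt_or_ge i m with h | h
        · exact lt_trans (ih h (by omega)) (hmono m (by omega))
        · have : i = m := by omega
          subst this
          exact hmono i (by omega)
  have hle : ∀ i j, i ≤ j → j ≤ n → x i ≤ x j := by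
    intro i j hij hjn
    rcases Nat.eq_or_lt_of_le hij with h | h
    · rw [h]
    · exact le_of_lt (hmono' i j h hjn)
  -- t ≠ x i for all i ≤ n
  have hne : ∀ i, i ≤ n → t - x i ≠ 0 := by
    intro i hi
    rcases Nat.lt_or_ge i (k + 1) with h | h
    · have : x i ≤ x k := hle i k (by omega) (by omega)
      exact sub_ne_zero.mpr (ne_of_gt (lt_of_le_of_lt this ht1))
    · have : x (k + 1) ≤ x i := hle (k + 1) i h hi
      exact sub_ne_zero.mpr (ne_of_lt (lt_of_lt_of_le ht2 this))
  have htm1 : -1 < t := by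
    have := hle 0 k (by omega) (by omega)
    rw [hx0] at this; linarith
  have htp1 : t < 1 := by
    have := hle (k + 1) n (by omega) le_rfl
    rw [hxn] at this; linarith
  have h1t : 1 + t ≠ 0 := by linarith
  have h1t' : 1 - t ≠ 0 := by linarith
  -- split sum
  have hn' : n + 1 = (2 * l + 1) + 1 := by omega
  rw [hn', Finset.sum_range_succ, Finset.sum_range_succ']
  have ht1' : t - 1 ≠ 0 := by intro h; apply h1t'; linarith
  have ht0' : t - (-1) ≠ 0 := by intro h; apply h1t; linarith
  have hγend : γ (2 * l + 1) / (t - x (2 * l + 1)) = 1 / (2 * (1 - t)) := by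
    rw [← hl, hγn, hxn, hl]
    have hp : (-1 : ℝ) ^ (2 * l + 1) = -1 := by rw [pow_succ, pow_mul]; norm_num
    rw [hp, div_eq_div_iff ht1' (by intro h; apply h1t'; linarith)]
    ring
  have hγ0' : γ 0 / (t - x 0) = 1 / (2 * (1 + t)) := by
    rw [hγ0, hx0, div_eq_div_iff ht0' (by intro h; apply h1t; linarith)]
    ring
  have key := pair_sum_aux (fun m => γ m / (t - x m)) l
  rw [hγend, hγ0', key]
  have hmid : ∑ j ∈ Finset.range l, (γ (2 * j + 1) / (t - x (2 * j + 1))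
        + γ (2 * j + 2) / (t - x (2 * j + 2)))
      = ∑ i ∈ Finset.Icc 1 l,
          (x (2 * i) - x (2 * i - 1)) / ((t - x (2 * i)) * (t - x (2 * i - 1))) := by
    rw [← Finset.Ico_add_one_right_eq_Icc, Finset.sum_Ico_eq_sum_range]
    simp only [Nat.add_sub_cancel, Nat.succ_sub_one]
    apply Finset.sum_congr rfl
    intro j hj
    simp only [Finset.mem_range] at hj
    have e1 : 2 * (1 + j) = 2 * j + 2 := by ring
    have e2 : 2 * j + 2 - 1 = 2 * j + 1 := by omega
    rw [e1, e2]
    have hγa : γ (2 * j + 1) = -1 := by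
      rw [hγ (2 * j + 1) (by omega) (by omega)]
      rw [pow_succ, pow_mul]; norm_num
    have hγb : γ (2 * j + 2) = 1 := by
      rw [hγ (2 * j + 2) (by omega) (by omega)]
      have : 2 * j + 2 = 2 * (j + 1) := by ring
      rw [this, pow_mul]; norm_num
    have ha := hne (2 * j + 1) (by omega)
    have hb := hne (2 * j + 2) (by omega)
    rw [hγa, hγb, div_add_div _ _ ha hb,
      div_eq_div_iff (mul_ne_zero ha hb) (mul_ne_zero hb ha)]
    ring
  rw [hmid]
  ring
end

section
/- Let n = 2l+1 be odd with n ≥ 2, let 0 ≤ k < n with k odd, and let t ∈ (x_k, x_{k+1}). Then q(t) = −(β + Σ_{i=1}^{l−1} ξ_{2i+1} + ψ). -/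
private lemma tele_aux (g : ℕ → ℝ) : ∀ m : ℕ,
    ∑ i ∈ Finset.range (2*(m+1)), (-1:ℝ)^(i+1) * g (i+1)
      = g (2*(m+1)) - g 1 - ∑ i ∈ Finset.Icc 1 m, (g (2*i+1) - g (2*i)) := by
  intro m
  induction m with
  | zero =>
      simp [Finset.sum_range_succ]
      ring
  | succ p ih =>
      have e1 : 2*(p+1+1) = 2*(p+1)+1+1 := by ring
      rw [e1, Finset.sum_range_succ, Finset.sum_range_succ, ih,
        Finset.sum_Icc_succ_top (by omega : 1 ≤ p+1)]
      have h1 : ((-1:ℝ))^(2*(p+1)+1) = -1 := Odd.neg_one_pow ⟨p+1, by ring⟩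
      have h2 : ((-1:ℝ))^(2*(p+1)+1+1) = 1 := Even.neg_one_pow ⟨p+1+1, by ring⟩
      have e2 : 2*(p+1)+1+1 = 2*(p+1+1) := by ring
      have e3 : 2*(p+1+1)+1 = 2*(p+1)+1+1+1 := by ring
      rw [h1, h2, e2]
      ring

private lemma pf_aux (u v : ℝ) (hu : u ≠ 0) (hv : v ≠ 0) :
    (2*v - u) / (2*u*v) = 1/u - (1/2)*(1/v) := by
  field_simp

/-- Decomposition of the denominator `q(t)` of the second barycentric formula:
case `n = 2l+1` odd, `k` odd, `t ∈ (x_k, x_{k+1})`: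
`q(t) = -(β + Σ_{i=1}^{l-1} ξ_{2i+1} + ψ)`. -/
theorem denominator_decomposition_odd_odd
    (n l k : ℕ) (hn : 2 ≤ n) (hl : n = 2 * l + 1) (hk : k < n) (hko : Odd k)
    (x γ : ℕ → ℝ)
    (hx0 : x 0 = -1) (hxn : x n = 1)
    (hmono : ∀ i < n, x i < x (i + 1))
    (hγ0 : γ 0 = 1 / 2) (hγn : γ n = (-1 : ℝ) ^ n / 2)
    (hγ : ∀ i, 0 < i → i < n → γ i = (-1 : ℝ) ^ i)
    (t : ℝ) (ht : t ∈ Set.Ioo (x k) (x (k + 1))) :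
    ∑ i ∈ Finset.range (n + 1), γ i / (t - x i)
      = -(((2 + x 1) + t) / (2 * (t - x 1) * (1 + t))
          + (∑ i ∈ Finset.Icc 1 (l - 1),
              (x (2 * i + 1) - x (2 * i)) / ((t - x (2 * i + 1)) * (t - x (2 * i))))
          + ((2 + -(x (n - 1))) + -t) / (2 * (-t - -(x (n - 1))) * (1 + -t))) := by
  subst hl
  have hl1 : 1 ≤ l := by omega
  -- strict monotonicity
  have hlt : ∀ j ≤ 2*l+1, ∀ i < j, x i < x j := by
    intro j hj
    induction j with
    | zero => omega
    | succ p ih =>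
        intro i hi
        rcases Nat.lt_succ_iff_lt_or_eq.mp hi with h | h
        · exact lt_trans (ih (by omega) i h) (hmono p (by omega))
        · subst h; exact hmono i (by omega)
  -- t ≠ x i
  have hne : ∀ i ≤ 2*l+1, t - x i ≠ 0 := by
    intro i hi
    rcases le_or_gt i k with h | h
    · have hxik : x i ≤ x k := by
        rcases eq_or_lt_of_le h with h' | h'
        · subst h'; rfl
        · exact le_of_lt (hlt k (by omega) i h')
      have : x i < t := lt_of_le_of_lt hxik ht.1
      intro hc; linarith
    · have hxik : x (k+1) ≤ x i := by
        rcases eq_or_lt_of_le (by omega : k+1 ≤ i) with h' | h'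
        · rw [h']
        · exact le_of_lt (hlt i hi (k+1) h')
      have : t < x i := lt_of_lt_of_le ht.2 hxik
      intro hc; linarith
  have h0 : t - x 0 ≠ 0 := hne 0 (by omega)
  have h1 : t - x 1 ≠ 0 := hne 1 (by omega)
  have hN : t - x (2*l+1) ≠ 0 := hne (2*l+1) le_rfl
  have hN1 : t - x (2*l) ≠ 0 := hne (2*l) (by omega)
  have h1t : (1:ℝ) + t ≠ 0 := by rw [hx0] at h0; intro hc; apply h0; linarith
  have h1t' : (1:ℝ) + -t ≠ 0 := by rw [hxn] at hN; intro hc; apply hN; linarith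
  -- partial fraction for β
  have hβ : ((2 + x 1) + t) / (2 * (t - x 1) * (1 + t))
      = 1/(t - x 1) - (1/2) * (1/(t - x 0)) := by
    calc ((2 + x 1) + t) / (2 * (t - x 1) * (1 + t))
        = (2*(1 + t) - (t - x 1)) / (2 * (t - x 1) * (1 + t)) := by
          rw [show (2 + x 1) + t = 2*(1 + t) - (t - x 1) from by ring]
      _ = 1/(t - x 1) - (1/2)*(1/(1 + t)) := pf_aux _ _ h1 h1t
      _ = 1/(t - x 1) - (1/2) * (1/(t - x 0)) := by
          rw [hx0, show t - (-1:ℝ) = 1 + t from by ring]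
  have e2l : 2*l+1-1 = 2*l := by omega
  -- partial fraction for ψ
  have hψ : ((2 + -(x (2*l+1-1))) + -t) / (2 * (-t - -(x (2*l+1-1))) * (1 + -t))
      = (1/2) * (1/(t - x (2*l+1))) - 1/(t - x (2*l)) := by
    rw [e2l, hxn]
    have hu : -t - -(x (2*l)) ≠ 0 := by intro hc; apply hN1; linarith
    calc ((2 + -(x (2*l))) + -t) / (2 * (-t - -(x (2*l))) * (1 + -t))
        = (2*(1 + -t) - (-t - -(x (2*l)))) / (2 * (-t - -(x (2*l))) * (1 + -t)) := by
          rw [show (2 + -(x (2*l))) + -t = 2*(1 + -t) - (-t - -(x (2*l))) from by ring]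
      _ = 1/(-t - -(x (2*l))) - (1/2)*(1/(1 + -t)) := pf_aux _ _ hu h1t'
      _ = (1/2) * (1/(t - 1)) - 1/(t - x (2*l)) := by
          rw [show -t - -(x (2*l)) = -(t - x (2*l)) from by ring,
            show (1:ℝ) + -t = -(t - 1) from by ring, div_neg, div_neg]
          ring
  -- partial fractions for ξ
  have hξ : ∑ i ∈ Finset.Icc 1 (l - 1),
      (x (2 * i + 1) - x (2 * i)) / ((t - x (2 * i + 1)) * (t - x (2 * i)))
      = ∑ i ∈ Finset.Icc 1 (l - 1), (1/(t - x (2*i+1)) - 1/(t - x (2*i))) := by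
    apply Finset.sum_congr rfl
    intro i hi
    have hi' : i ≤ l - 1 := (Finset.mem_Icc.mp hi).2
    have ha : t - x (2*i+1) ≠ 0 := hne _ (by omega)
    have hb : t - x (2*i) ≠ 0 := hne _ (by omega)
    field_simp
    ring
  -- peel the sum
  rw [Finset.sum_range_succ, Finset.sum_range_succ', hγ0, hγn]
  have hmid : ∑ i ∈ Finset.range (2*l), γ (i+1) / (t - x (i+1))
      = ∑ i ∈ Finset.range (2*l), (-1:ℝ)^(i+1) * (1/(t - x (i+1))) := by
    apply Finset.sum_congr rfl
    intro i hi
    have hi' : i < 2*l := Finset.mem_range.mp hi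
    rw [hγ (i+1) (by omega) (by omega), mul_one_div]
  rw [hmid]
  have htele := tele_aux (fun i => 1/(t - x i)) (l-1)
  rw [show l - 1 + 1 = l from by omega] at htele
  rw [htele]
  rw [hβ, hψ, hξ]
  have hodd : ((-1:ℝ))^(2*l+1) = -1 := Odd.neg_one_pow ⟨l, by ring⟩
  rw [hodd]
  ring
end

section
/- Let n = 2l be even with n ≥ 2, let 0 ≤ k < n with k even, let f_0,…,f_n be reals, and let t ∈ (x_k, x_{k+1}). Then p(t) = α f_0 + Σ_{i=1}^{l−1} ξ_{2i} φ_{2i} + ψ ψ_f. -/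
private lemma alt_sum (g : ℕ → ℝ) (m : ℕ) :
    ∑ i ∈ Finset.range (2*m+1), (-1:ℝ)^(i+1) * g (i+1)
      = (∑ i ∈ Finset.Icc 1 m, (g (2*i) - g (2*i-1))) - g (2*m+1) := by
  induction m with
  | zero => simp
  | succ m ih =>
    have h1 : 2*(m+1)+1 = (2*m+1) + 1 + 1 := by ring
    rw [h1, Finset.sum_range_succ, Finset.sum_range_succ, ih,
      Finset.sum_Icc_succ_top (by omega : 1 ≤ m + 1)]
    have p1 : (-1:ℝ)^(2*m+1+1) = 1 := by
      rw [pow_succ, pow_succ, pow_mul]; norm_num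
    have p2 : (-1:ℝ)^(2*m+2+1) = -1 := by
      have : 2*m+2+1 = 2*m+1+1+1 := by ring
      rw [this, pow_succ, p1]; ring
    rw [p1, p2, (by omega : 2*(m+1)-1 = 2*m+1), (by ring : 2*(m+1) = 2*m+1+1),
      (by ring : 2*m+1+1+1 = 2*m+2+1)]
    ring

private lemma last_id (a t F G : ℝ) (h1 : 2 + -a + -t ≠ 0) (h2 : -t - -a ≠ 0)
    (h3 : 1 + -t ≠ 0) :
    (2 + -a + -t)/(2*(-t - -a)*(1+-t)) * ((2*(1+-t)*F - (-t - -a)*G)/(2+-a+-t))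
      = -(F/(t-a)) + (1/2)*(G/(t-1)) := by
  have h2' : t - a ≠ 0 := by intro h; apply h2; linarith [h]
  have h3' : t - 1 ≠ 0 := by intro h; apply h3; linarith [h]
  rw [div_mul_div_comm, mul_comm (2 + -a + -t), mul_div_mul_right _ _ h1,
    (by ring : (2:ℝ)*(-t - -a)*(1+-t) = (2*(t-1)) * (t-a)),
    div_eq_iff (mul_ne_zero (mul_ne_zero two_ne_zero h3') h2')]
  field_simp
  ring

/-- Decomposition of the numerator `p(t)` of the second barycentric formula:
case `n = 2l` even, `k` even, `t ∈ (x_k, x_{k+1})`: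
`p(t) = α f_0 + Σ_{i=1}^{l-1} ξ_{2i} φ_{2i} + ψ ψ_f`. -/
theorem numerator_decomposition_even_even
    (n l k : ℕ) (hn : 2 ≤ n) (hl : n = 2 * l) (hk : k < n) (hke : Even k)
    (x γ f : ℕ → ℝ)
    (hx0 : x 0 = -1) (hxn : x n = 1)
    (hmono : ∀ i < n, x i < x (i + 1))
    (hγ0 : γ 0 = 1 / 2) (hγn : γ n = (-1 : ℝ) ^ n / 2)
    (hγ : ∀ i, 0 < i → i < n → γ i = (-1 : ℝ) ^ i)
    (t : ℝ) (ht : t ∈ Set.Ioo (x k) (x (k + 1))) :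
    ∑ i ∈ Finset.range (n + 1), γ i * f i / (t - x i)
      = 1 / (2 * (1 + t)) * f 0
        + (∑ i ∈ Finset.Icc 1 (l - 1),
            ((x (2 * i) - x (2 * i - 1)) / ((t - x (2 * i)) * (t - x (2 * i - 1))))
              * ((f (2 * i) + f (2 * i - 1)) / 2
                 + (t - (x (2 * i) + x (2 * i - 1)) / 2)
                   * (f (2 * i) - f (2 * i - 1)) / (x (2 * i) - x (2 * i - 1))))
        + (((2 + -(x (n - 1))) + -t) / (2 * (-t - -(x (n - 1))) * (1 + -t)))
          * ((2 * (1 + -t) * f (n - 1) - (-t - -(x (n - 1))) * f n)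
             / ((2 + -(x (n - 1))) + -t)) := by
  obtain ⟨hx_k, hx_k1⟩ := ht
  -- strict monotonicity up to n
  have hlt : ∀ i j, i < j → j ≤ n → x i < x j := by
    intro i j hij hjn
    induction j with
    | zero => omega
    | succ j ih =>
      rcases Nat.lt_or_ge i j with h | h
      · exact lt_trans (ih h (by omega)) (hmono j (by omega))
      · have : i = j := by omega
        subst this; exact hmono i (by omega)
  have hle : ∀ i j, i ≤ j → j ≤ n → x i ≤ x j := by
    intro i j hij hjn
    rcases Nat.lt_or_ge i j with h | h
    · exact (hlt i j h hjn).le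
    · have : i = j := by omega
      rw [this]
  -- t is not a node
  have htne : ∀ i ≤ n, t - x i ≠ 0 := by
    intro i hi
    rcases Nat.lt_or_ge k i with h | h
    · have : t < x i := lt_of_lt_of_le hx_k1 (hle (k+1) i h (by omega))
      exact sub_ne_zero.mpr (ne_of_lt this)
    · have : x i < t := lt_of_le_of_lt (hle i k h (by omega)) hx_k
      exact sub_ne_zero.mpr (ne_of_lt this).symm
  have ht1 : t < 1 := by
    calc t < x (k+1) := hx_k1
    _ ≤ x n := hle (k+1) n (by omega) le_rfl
    _ = 1 := hxn
  have htm1 : -1 < t := by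
    calc (-1:ℝ) = x 0 := hx0.symm
    _ ≤ x k := hle 0 k (by omega) (by omega)
    _ < t := hx_k
  obtain ⟨m, hm⟩ : ∃ m, l = m + 1 := ⟨l - 1, by omega⟩
  have hnm : n = 2*m + 2 := by omega
  set g : ℕ → ℝ := fun i => f i / (t - x i) with hg
  -- LHS decomposition
  have hL : ∑ i ∈ Finset.range (n + 1), γ i * f i / (t - x i)
      = (1/2) * g 0 + (∑ i ∈ Finset.range (2*m+1), (-1:ℝ)^(i+1) * g (i+1))
        + (1/2) * g n := by
    have hsplit : ∀ i ∈ Finset.range (n+1), γ i * f i / (t - x i) = γ i * g i := by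
      intro i _; simp only [hg]; ring
    rw [Finset.sum_congr rfl hsplit]
    rw [(by omega : n + 1 = (2*m+1) + 1 + 1), Finset.sum_range_succ, Finset.sum_range_succ']
    have hN : γ (2*m+1+1) = 1/2 := by
      rw [(by omega : 2*m+1+1 = n), hγn, hl, pow_mul]
      norm_num
    rw [hγ0, hN, (by omega : 2*m+1+1 = n)]
    have : ∀ i ∈ Finset.range (2*m+1), γ (i+1) * g (i+1) = (-1:ℝ)^(i+1) * g (i+1) := by
      intro i hi
      rw [hγ (i+1) (by omega) (by simp at hi; omega)]
    rw [Finset.sum_congr rfl this]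
    ring
  rw [hL, alt_sum]
  -- middle sum identity
  have hmid : ∀ i ∈ Finset.Icc 1 (l-1),
      ((x (2 * i) - x (2 * i - 1)) / ((t - x (2 * i)) * (t - x (2 * i - 1))))
        * ((f (2 * i) + f (2 * i - 1)) / 2
           + (t - (x (2 * i) + x (2 * i - 1)) / 2)
             * (f (2 * i) - f (2 * i - 1)) / (x (2 * i) - x (2 * i - 1)))
      = g (2*i) - g (2*i-1) := by
    intro i hi
    simp only [Finset.mem_Icc] at hi
    have h2i : 2*i ≤ n := by omega
    have h2i1 : 2*i - 1 ≤ n := by omega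
    have ha : t - x (2*i) ≠ 0 := htne _ h2i
    have hb : t - x (2*i-1) ≠ 0 := htne _ h2i1
    have hc : x (2*i) - x (2*i-1) ≠ 0 := by
      have : x (2*i-1) < x (2*i) := hlt (2*i-1) (2*i) (by omega) h2i
      exact sub_ne_zero.mpr (ne_of_lt this).symm
    simp only [hg]
    field_simp
    ring
  rw [Finset.sum_congr rfl hmid]
  -- last term identity
  have hn1 : x (n-1) < 1 := by
    calc x (n-1) < x n := hlt (n-1) n (by omega) le_rfl
    _ = 1 := hxn
  have hd1 : (2 + -(x (n-1))) + -t ≠ 0 := by nlinarith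
  have hd2 : -t - -(x (n-1)) ≠ 0 := by
    have := htne (n-1) (by omega)
    intro h; apply this; linarith [h]
  have hd3 : (1:ℝ) + -t ≠ 0 := by intro h; linarith
  have hlast : (((2 + -(x (n - 1))) + -t) / (2 * (-t - -(x (n - 1))) * (1 + -t)))
        * ((2 * (1 + -t) * f (n - 1) - (-t - -(x (n - 1))) * f n)
           / ((2 + -(x (n - 1))) + -t))
      = -(g (n-1)) + (1/2) * g n := by
    simp only [hg, hxn]
    exact last_id (x (n-1)) t (f (n-1)) (f n) hd1 hd2 hd3
  rw [hlast]
  -- first term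
  have hfirst : (1:ℝ) / (2 * (1 + t)) * f 0 = (1/2) * g 0 := by
    simp only [hg, hx0]
    have h1t : (1:ℝ) + t ≠ 0 := by intro h; linarith
    have : t - (-1:ℝ) = 1 + t := by ring
    rw [this]
    field_simp
  rw [hfirst, (by omega : l - 1 = m), (by omega : 2*m+1 = n - 1)]
  ring
end

section
/- Let n = 2l be even with n ≥ 2, let 0 ≤ k < n with k odd, let f_0,…,f_n be reals, and let t ∈ (x_k, x_{k+1}). Then p(t) = −(β β_f + Σ_{i=1}^{l−1} ξ_{2i+1} φ_{2i+1} + ω f_n). -/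
private lemma pair_sum (h : ℕ → ℝ) (m : ℕ) :
    ∑ i ∈ Finset.range (2 * m + 3), h i
      = h 0 + h 1 + (∑ i ∈ Finset.Icc 1 m, (h (2 * i) + h (2 * i + 1))) + h (2 * m + 2) := by
  induction m with
  | zero => simp [Finset.sum_range_succ]
  | succ m ih =>
      have e : 2 * (m + 1) + 3 = (2 * m + 3) + 1 + 1 := by ring
      rw [e, Finset.sum_range_succ, Finset.sum_range_succ, ih,
        Finset.sum_Icc_succ_top (by omega : 1 ≤ m + 1),
        show 2 * (m + 1) = 2 * m + 2 from by ring,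
        show 2 * m + 2 + 1 = 2 * m + 3 from by ring,
        show 2 * m + 2 + 2 = 2 * m + 4 from by ring]
      ring

/-- Decomposition of the numerator `p(t)` of the second barycentric formula:
case `n = 2l` even, `k` odd, `t ∈ (x_k, x_{k+1})`:
`p(t) = -(β β_f + Σ_{i=1}^{l-1} ξ_{2i+1} φ_{2i+1} + ω f_n)`. -/
theorem numerator_decomposition_even_odd
    (n l k : ℕ) (hn : 2 ≤ n) (hl : n = 2 * l) (hk : k < n) (hko : Odd k)
    (x γ f : ℕ → ℝ)
    (hx0 : x 0 = -1) (hxn : x n = 1)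
    (hmono : ∀ i < n, x i < x (i + 1))
    (hγ0 : γ 0 = 1 / 2) (hγn : γ n = (-1 : ℝ) ^ n / 2)
    (hγ : ∀ i, 0 < i → i < n → γ i = (-1 : ℝ) ^ i)
    (t : ℝ) (ht : t ∈ Set.Ioo (x k) (x (k + 1))) :
    ∑ i ∈ Finset.range (n + 1), γ i * f i / (t - x i)
      = -((((2 + x 1) + t) / (2 * (t - x 1) * (1 + t)))
            * ((2 * (1 + t) * f 1 - (t - x 1) * f 0) / ((2 + x 1) + t))
          + (∑ i ∈ Finset.Icc 1 (l - 1),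
              ((x (2 * i + 1) - x (2 * i)) / ((t - x (2 * i + 1)) * (t - x (2 * i))))
                * ((f (2 * i + 1) + f (2 * i)) / 2
                   + (t - (x (2 * i + 1) + x (2 * i)) / 2)
                     * (f (2 * i + 1) - f (2 * i)) / (x (2 * i + 1) - x (2 * i))))
          + 1 / (2 * (1 - t)) * f n) := by

  obtain ⟨htl, htr⟩ := ht
  have hlt : ∀ i j, i < j → j ≤ n → x i < x j := by
    intro i j hij hj
    induction j with
    | zero => omega
    | succ j ih =>
        rcases Nat.lt_succ_iff_lt_or_eq.mp hij with h | h
        · exact lt_trans (ih h (by omega)) (hmono j (by omega))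
        · subst h; exact hmono i (by omega)
  have hle : ∀ i j, i ≤ j → j ≤ n → x i ≤ x j := by
    intro i j hij hj
    rcases eq_or_lt_of_le hij with h | h
    · subst h; rfl
    · exact le_of_lt (hlt i j h hj)
  have ht0 : -1 < t := by
    have := hle 0 k (by omega) (by omega); rw [hx0] at this; linarith
  have ht1 : t < 1 := by
    have := hle (k + 1) n (by omega) le_rfl; rw [hxn] at this; linarith
  have htne : ∀ i ≤ n, t - x i ≠ 0 := by
    intro i hi
    rcases le_or_gt i k with h | h
    · have := hle i k h (by omega); exact ne_of_gt (by linarith)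
    · have := hle (k + 1) i h hi; exact ne_of_lt (by linarith)
  have hx1 : (-1 : ℝ) < x 1 := by
    have := hmono 0 (by omega); rw [hx0] at this; linarith
  have hx1t : t - x 1 ≠ 0 := htne 1 (by omega)
  have hA : (2 + x 1) + t ≠ 0 := ne_of_gt (by linarith)
  have ht0' : (1 : ℝ) + t ≠ 0 := ne_of_gt (by linarith)
  have ht1' : (1 : ℝ) - t ≠ 0 := ne_of_gt (by linarith)
  subst hl
  obtain ⟨m, rfl⟩ : ∃ m, l = m + 1 := ⟨l - 1, by omega⟩
  -- the sum on the RHS, termwise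
  have hterm : ∀ i ∈ Finset.Icc 1 m,
      (((x (2 * i + 1) - x (2 * i)) / ((t - x (2 * i + 1)) * (t - x (2 * i))))
        * ((f (2 * i + 1) + f (2 * i)) / 2
           + (t - (x (2 * i + 1) + x (2 * i)) / 2)
             * (f (2 * i + 1) - f (2 * i)) / (x (2 * i + 1) - x (2 * i))))
      = f (2 * i + 1) / (t - x (2 * i + 1)) - f (2 * i) / (t - x (2 * i)) := by
    intro i hi
    simp only [Finset.mem_Icc] at hi
    have h1 : t - x (2 * i + 1) ≠ 0 := htne _ (by omega)
    have h2 : t - x (2 * i) ≠ 0 := htne _ (by omega)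
    have h3 : x (2 * i + 1) - x (2 * i) ≠ 0 :=
      ne_of_gt (sub_pos.mpr (hmono (2 * i) (by omega)))
    field_simp
    ring
  -- pair up the LHS sum
  rw [show 2 * (m + 1) + 1 = 2 * m + 3 from by ring,
    pair_sum (fun i => γ i * f i / (t - x i)) m]
  rw [show (m + 1 - 1) = m from by omega, Finset.sum_congr rfl hterm]
  have hg1 : γ 1 = -1 := by
    rw [hγ 1 (by omega) (by omega)]; norm_num
  have hgmid : ∀ i ∈ Finset.Icc 1 m,
      γ (2 * i) * f (2 * i) / (t - x (2 * i)) + γ (2 * i + 1) * f (2 * i + 1) / (t - x (2 * i + 1))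
      = f (2 * i) / (t - x (2 * i)) - f (2 * i + 1) / (t - x (2 * i + 1)) := by
    intro i hi
    simp only [Finset.mem_Icc] at hi
    rw [hγ (2 * i) (by omega) (by omega), hγ (2 * i + 1) (by omega) (by omega)]
    rw [pow_succ, Even.neg_one_pow ⟨i, by ring⟩]
    ring
  rw [Finset.sum_congr rfl hgmid]
  have hgn : γ (2 * m + 2) = 1 / 2 := by
    rw [show 2 * m + 2 = 2 * (m + 1) from by ring, hγn, Even.neg_one_pow ⟨m + 1, by ring⟩]
  have hxn' : x (2 * m + 2) = 1 := by rw [show 2 * m + 2 = 2 * (m + 1) from by ring, hxn]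
  have hfn : f (2 * (m + 1)) = f (2 * m + 2) := by norm_num [show 2 * (m + 1) = 2 * m + 2 from by ring]
  rw [hγ0, hg1, hgn, hx0, hxn', hfn]
  rw [Finset.sum_sub_distrib, Finset.sum_sub_distrib]
  have hscalar :
      1 / 2 * f 0 / (t - -1) + -1 * f 1 / (t - x 1) + 1 / 2 * f (2 * m + 2) / (t - 1)
        = -((((2 + x 1) + t) / (2 * (t - x 1) * (1 + t)))
              * ((2 * (1 + t) * f 1 - (t - x 1) * f 0) / ((2 + x 1) + t))
            + 1 / (2 * (1 - t)) * f (2 * m + 2)) := by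
    have e1 : t - -1 ≠ 0 := by intro h; apply ht0'; linarith
    have e2 : t - 1 ≠ 0 := by intro h; apply ht1'; linarith
    rw [show t - -1 = 1 + t from by ring, show t - 1 = -(1 - t) from by ring]
    field_simp
    ring
  linarith [hscalar]
end

section
/- Let n = 2l+1 be odd with n ≥ 2, let 0 ≤ k < n with k even, let f_0,…,f_n be reals, and let t ∈ (x_k, x_{k+1}). Then p(t) = α f_0 + Σ_{i=1}^{l} ξ_{2i} φ_{2i} + ω f_n. -/
lemma sum_pair_aux (l : ℕ) (g : ℕ → ℝ) :
    ∑ i ∈ Finset.range (2 * l + 1), g i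
      = g 0 + ∑ j ∈ Finset.Icc 1 l, (g (2 * j - 1) + g (2 * j)) := by
  induction l with
  | zero => simp
  | succ m ih =>
      have h1 : 2 * (m + 1) + 1 = (2 * m + 1) + 1 + 1 := by ring
      rw [h1, Finset.sum_range_succ, Finset.sum_range_succ, ih,
        Finset.sum_Icc_succ_top (by omega : 1 ≤ m + 1)]
      have h2 : 2 * (m + 1) - 1 = 2 * m + 1 := by omega
      have h3 : 2 * m + 1 + 1 = 2 * (m + 1) := by omega
      rw [h2, h3]
      ring

/-- Decomposition of the numerator `p(t)` of the second barycentric formula: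
case `n = 2l+1` odd, `k` even, `t ∈ (x_k, x_{k+1})`:
`p(t) = α f_0 + Σ_{i=1}^{l} ξ_{2i} φ_{2i} + ω f_n`. -/
theorem numerator_decomposition_odd_even
    (n l k : ℕ) (hn : 2 ≤ n) (hl : n = 2 * l + 1) (hk : k < n) (hke : Even k)
    (x γ f : ℕ → ℝ)
    (hx0 : x 0 = -1) (hxn : x n = 1)
    (hmono : ∀ i < n, x i < x (i + 1))
    (hγ0 : γ 0 = 1 / 2) (hγn : γ n = (-1 : ℝ) ^ n / 2)
    (hγ : ∀ i, 0 < i → i < n → γ i = (-1 : ℝ) ^ i)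
    (t : ℝ) (ht : t ∈ Set.Ioo (x k) (x (k + 1))) :
    ∑ i ∈ Finset.range (n + 1), γ i * f i / (t - x i)
      = 1 / (2 * (1 + t)) * f 0
        + (∑ i ∈ Finset.Icc 1 l,
            ((x (2 * i) - x (2 * i - 1)) / ((t - x (2 * i)) * (t - x (2 * i - 1))))
              * ((f (2 * i) + f (2 * i - 1)) / 2
                 + (t - (x (2 * i) + x (2 * i - 1)) / 2)
                   * (f (2 * i) - f (2 * i - 1)) / (x (2 * i) - x (2 * i - 1))))
        + 1 / (2 * (1 - t)) * f n := by
  subst hl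
  obtain ⟨htk, htk'⟩ := ht
  have hxmono : ∀ j, ∀ i, i < j → j ≤ 2 * l + 1 → x i < x j := by
    intro j
    induction j with
    | zero => omega
    | succ m ih =>
        intro i hi hj
        rcases Nat.lt_or_ge i m with h | h
        · exact lt_trans (ih i h (by omega)) (hmono m (by omega))
        · have : i = m := by omega
          subst this
          exact hmono i (by omega)
  have hxle : ∀ i j, i ≤ j → j ≤ 2 * l + 1 → x i ≤ x j := by
    intro i j hij hj
    rcases hij.lt_or_eq with h | h
    · exact le_of_lt (hxmono j i h hj)
    · rw [h]
  have hts : ∀ i, i ≤ 2 * l + 1 → t - x i ≠ 0 := by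
    intro i hi
    rcases le_or_gt i k with h | h
    · have := hxle i k h (by omega)
      exact ne_of_gt (by linarith)
    · have := hxle (k + 1) i h hi
      exact ne_of_lt (by linarith)
  have ht1 : (1 : ℝ) + t ≠ 0 := by
    have h0 : x 0 ≤ x k := hxle 0 k (by omega) (by omega)
    rw [hx0] at h0
    intro h; linarith
  have ht2 : (1 : ℝ) - t ≠ 0 := by
    have h0 : x (k + 1) ≤ x (2 * l + 1) := hxle (k + 1) (2 * l + 1) (by omega) le_rfl
    rw [hxn] at h0
    intro h; linarith
  rw [Finset.sum_range_succ, sum_pair_aux]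
  have e0 : γ 0 * f 0 / (t - x 0) = 1 / (2 * (1 + t)) * f 0 := by
    rw [hγ0, hx0, show t - (-1) = 1 + t from by ring,
      mul_comm (1 / (2 * (1 + t))) (f 0), mul_one_div,
      div_eq_div_iff ht1 (mul_ne_zero two_ne_zero ht1)]
    ring
  have en : γ (2 * l + 1) * f (2 * l + 1) / (t - x (2 * l + 1))
      = 1 / (2 * (1 - t)) * f (2 * l + 1) := by
    have h3 : t - 1 ≠ 0 := fun h => ht2 (by linarith)
    rw [hγn, hxn, Odd.neg_one_pow ⟨l, by ring⟩,
      mul_comm (1 / (2 * (1 - t))) (f (2 * l + 1)), mul_one_div,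
      div_eq_div_iff h3 (mul_ne_zero two_ne_zero ht2)]
    ring
  have emid : ∑ j ∈ Finset.Icc 1 l,
      (γ (2 * j - 1) * f (2 * j - 1) / (t - x (2 * j - 1))
        + γ (2 * j) * f (2 * j) / (t - x (2 * j)))
      = ∑ i ∈ Finset.Icc 1 l,
          ((x (2 * i) - x (2 * i - 1)) / ((t - x (2 * i)) * (t - x (2 * i - 1))))
            * ((f (2 * i) + f (2 * i - 1)) / 2
               + (t - (x (2 * i) + x (2 * i - 1)) / 2)
                 * (f (2 * i) - f (2 * i - 1)) / (x (2 * i) - x (2 * i - 1))) := by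
    refine Finset.sum_congr rfl ?_
    intro j hj
    rw [Finset.mem_Icc] at hj
    obtain ⟨hj1, hj2⟩ := hj
    have hγa : γ (2 * j - 1) = -1 := by
      rw [hγ (2 * j - 1) (by omega) (by omega), Odd.neg_one_pow ⟨j - 1, by omega⟩]
    have hγb : γ (2 * j) = 1 := by
      rw [hγ (2 * j) (by omega) (by omega), Even.neg_one_pow ⟨j, by ring⟩]
    have ha : t - x (2 * j - 1) ≠ 0 := hts _ (by omega)
    have hb : t - x (2 * j) ≠ 0 := hts _ (by omega)
    have hba : x (2 * j) - x (2 * j - 1) ≠ 0 :=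
      ne_of_gt (sub_pos.mpr (hxmono (2 * j) (2 * j - 1) (by omega) (by omega)))
    rw [hγa, hγb]
    field_simp
    ring
  rw [e0, en, emid]
end

section
/- Let n = 2l+1 be odd with n ≥ 2, let 0 ≤ k < n with k odd, let f_0,…,f_n be reals, and let t ∈ (x_k, x_{k+1}). Then p(t) = −(β β_f + Σ_{i=1}^{l−1} ξ_{2i+1} φ_{2i+1} + ψ ψ_f). -/
private lemma sum_range_two_mul (m : ℕ) (g : ℕ → ℝ) :
    ∑ i ∈ Finset.range (2 * m), g i
      = ∑ i ∈ Finset.range m, (g (2 * i) + g (2 * i + 1)) := by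
  induction m with
  | zero => simp
  | succ p ih =>
    rw [Nat.mul_succ]
    show ∑ i ∈ Finset.range (2 * p + 1 + 1), g i = _
    rw [Finset.sum_range_succ, Finset.sum_range_succ, ih, Finset.sum_range_succ]
    ring


private lemma pairA (a u v T : ℝ) (d1 : T - a ≠ 0) (dt : 1 + T ≠ 0) (dx : 2 + a + T ≠ 0) :
    1/2 * u / (T - (-1)) + -1 * v / (T - a)
      = -((2 + a + T)/(2*(T-a)*(1+T)) * ((2*(1+T)*v - (T-a)*u)/(2+a+T))) := by
  have h : T - (-1) = 1 + T := by ring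
  rw [h, div_mul_div_comm, mul_comm (2+a+T), mul_div_mul_right _ _ dx]
  field_simp
  ring

private lemma pairB (b u v T : ℝ) (d1 : -T - -b ≠ 0) (dt : 1 + -T ≠ 0)
    (dx : 2 + -b + -T ≠ 0) (d0 : T - b ≠ 0) :
    1 * u / (T - b) + -(1/2) * v / (T - 1)
      = -((2 + -b + -T)/(2*(-T - -b)*(1 + -T))
          * ((2*(1 + -T)*u - (-T - -b)*v)/(2 + -b + -T))) := by
  rw [div_mul_div_comm, mul_comm (2 + -b + -T), mul_div_mul_right _ _ dx]
  have e1 : -T - -b = b - T := by ring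
  have e2 : (1 : ℝ) + -T = 1 - T := by ring
  rw [e1, e2]
  have d1' : b - T ≠ 0 := by rw [← e1]; exact d1
  have dt' : (1:ℝ) - T ≠ 0 := by rw [← e2]; exact dt
  have h1 : T - 1 ≠ 0 := by intro hc; apply dt; linarith
  field_simp
  ring

private lemma pairC (a b u v T : ℝ) (d0 : T - a ≠ 0) (d1 : T - b ≠ 0) (dx : b - a ≠ 0) :
    1 * u / (T - a) + -1 * v / (T - b)
      = -((b - a)/((T - b)*(T - a)) * ((v + u)/2 + (T - (b + a)/2) * (v - u) / (b - a))) := by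
  field_simp
  ring

/-- Decomposition of the numerator `p(t)` of the second barycentric formula:
case `n = 2l+1` odd, `k` odd, `t ∈ (x_k, x_{k+1})`:
`p(t) = -(β β_f + Σ_{i=1}^{l-1} ξ_{2i+1} φ_{2i+1} + ψ ψ_f)`. -/
theorem numerator_decomposition_odd_odd
    (n l k : ℕ) (hn : 2 ≤ n) (hl : n = 2 * l + 1) (hk : k < n) (hko : Odd k)
    (x γ f : ℕ → ℝ)
    (hx0 : x 0 = -1) (hxn : x n = 1)
    (hmono : ∀ i < n, x i < x (i + 1))
    (hγ0 : γ 0 = 1 / 2) (hγn : γ n = (-1 : ℝ) ^ n / 2)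
    (hγ : ∀ i, 0 < i → i < n → γ i = (-1 : ℝ) ^ i)
    (t : ℝ) (ht : t ∈ Set.Ioo (x k) (x (k + 1))) :
    ∑ i ∈ Finset.range (n + 1), γ i * f i / (t - x i)
      = -((((2 + x 1) + t) / (2 * (t - x 1) * (1 + t)))
            * ((2 * (1 + t) * f 1 - (t - x 1) * f 0) / ((2 + x 1) + t))
          + (∑ i ∈ Finset.Icc 1 (l - 1),
              ((x (2 * i + 1) - x (2 * i)) / ((t - x (2 * i + 1)) * (t - x (2 * i))))
                * ((f (2 * i + 1) + f (2 * i)) / 2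
                   + (t - (x (2 * i + 1) + x (2 * i)) / 2)
                     * (f (2 * i + 1) - f (2 * i)) / (x (2 * i + 1) - x (2 * i))))
          + (((2 + -(x (n - 1))) + -t) / (2 * (-t - -(x (n - 1))) * (1 + -t)))
            * ((2 * (1 + -t) * f (n - 1) - (-t - -(x (n - 1))) * f n)
               / ((2 + -(x (n - 1))) + -t))) := by
  obtain ⟨htl, htr⟩ := ht
  have hl1 : 1 ≤ l := by omega
  -- strict monotonicity
  have key : ∀ j, j ≤ n → ∀ i, i < j → x i < x j := by
    intro j hj
    induction j with
    | zero => omega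
    | succ m ihm =>
      intro i hi
      rcases Nat.lt_or_ge i m with h | h
      · exact lt_trans (ihm (by omega) i h) (hmono m (by omega))
      · have : i = m := by omega
        subst this
        exact hmono i (by omega)
  have hk1 : 1 ≤ k := by
    rcases hko with ⟨j, hj⟩; omega
  have hxle : ∀ i j, i ≤ j → j ≤ n → x i ≤ x j := by
    intro i j hij hj
    rcases Nat.lt_or_ge i j with h | h
    · exact le_of_lt (key j hj i h)
    · have : i = j := by omega
      subst this; rfl
  -- t ≠ x i
  have htne : ∀ i, i ≤ n → t - x i ≠ 0 := by
    intro i hi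
    rcases Nat.lt_or_ge i (k + 1) with h | h
    · have : x i ≤ x k := hxle i k (by omega) (by omega)
      have : x i < t := lt_of_le_of_lt this htl
      exact sub_ne_zero.mpr (ne_of_gt this)
    · have : x (k + 1) ≤ x i := hxle (k + 1) i h hi
      have : t < x i := lt_of_lt_of_le htr this
      exact sub_ne_zero.mpr (ne_of_lt this)
  have htm1 : -1 < t := by
    have h1 : x 0 ≤ x k := hxle 0 k (by omega) (by omega)
    rw [hx0] at h1; linarith
  have htp1 : t < 1 := by
    have h1 : x (k + 1) ≤ x n := hxle (k + 1) n (by omega) le_rfl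
    rw [hxn] at h1; linarith
  have hx1 : -1 < x 1 := by
    have := key 1 (by omega) 0 (by omega); rw [hx0] at this; linarith
  have hxn1 : x (n - 1) < 1 := by
    have := key n le_rfl (n - 1) (by omega); rw [hxn] at this; linarith
  -- rewrite n = 2l+1
  subst hl
  simp only [Nat.add_sub_cancel] at *
  -- LHS pairing
  have hrange : 2 * l + 1 + 1 = 2 * (l + 1) := by ring
  rw [hrange, sum_range_two_mul]
  set g : ℕ → ℝ := fun i => γ i * f i / (t - x i) with hg
  set h : ℕ → ℝ := fun i => g (2 * i) + g (2 * i + 1) with hh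
  have hsplit : ∑ i ∈ Finset.range (l + 1), h i
      = h 0 + (∑ i ∈ Finset.range (l - 1), h (1 + i)) + h l := by
    rw [Finset.sum_range_succ]
    have : l = l - 1 + 1 := by omega
    rw [this, Finset.sum_range_succ']
    simp only [← this]
    have : ∀ i, i + 1 = 1 + i := fun i => by omega
    rw [Finset.sum_congr rfl (fun i _ => by rw [this i])]
    ring
  rw [hsplit]
  -- rewrite Icc sum on RHS as range sum
  have hIcc : Finset.Icc 1 (l - 1) = Finset.Ico 1 l := by
    rw [← Finset.Ico_add_one_right_eq_Icc]
    congr 1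
    omega
  rw [hIcc, Finset.sum_Ico_eq_sum_range]
  -- term for h 0
  have h0 : h 0 = -((((2 + x 1) + t) / (2 * (t - x 1) * (1 + t)))
      * ((2 * (1 + t) * f 1 - (t - x 1) * f 0) / ((2 + x 1) + t))) := by
    have e0 : γ 0 = 1 / 2 := hγ0
    have e1 : γ 1 = -1 := by
      have := hγ 1 (by omega) (by omega); rw [this]; norm_num
    have d0 : t - x 0 ≠ 0 := htne 0 (by omega)
    have d1 : t - x 1 ≠ 0 := htne 1 (by omega)
    have dt : (1 : ℝ) + t ≠ 0 := by linarith
    have dx : (2 + x 1) + t ≠ 0 := by linarith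
    simp only [hh, hg, e0, e1, hx0]
    exact pairA (x 1) (f 0) (f 1) t d1 dt dx
  -- term for h l
  have hlast : h l = -((((2 + -(x (2 * l))) + -t) / (2 * (-t - -(x (2 * l))) * (1 + -t)))
      * ((2 * (1 + -t) * f (2 * l) - (-t - -(x (2 * l))) * f (2 * l + 1))
         / ((2 + -(x (2 * l))) + -t))) := by
    have e0 : γ (2 * l) = 1 := by
      have := hγ (2 * l) (by omega) (by omega)
      rw [this]; simp [pow_mul]
    have e1 : γ (2 * l + 1) = -(1 / 2) := by
      rw [hγn]
      rw [pow_succ, pow_mul]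
      norm_num
    have d0 : t - x (2 * l) ≠ 0 := htne (2 * l) (by omega)
    have d1 : -t - -(x (2 * l)) ≠ 0 := by
      intro hc; apply d0; linarith [sub_eq_zero.mp hc]
    have dt : (1 : ℝ) + -t ≠ 0 := by linarith
    have dx : (2 + -(x (2 * l))) + -t ≠ 0 := by linarith
    simp only [hh, hg, e0, e1, hxn]
    exact pairB (x (2 * l)) (f (2 * l)) (f (2 * l + 1)) t d1 dt dx d0
  -- middle terms
  have hmid : ∀ i ∈ Finset.range (l - 1), h (1 + i)
      = -(((x (2 * (1 + i) + 1) - x (2 * (1 + i))) / ((t - x (2 * (1 + i) + 1)) * (t - x (2 * (1 + i)))))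
          * ((f (2 * (1 + i) + 1) + f (2 * (1 + i))) / 2
             + (t - (x (2 * (1 + i) + 1) + x (2 * (1 + i))) / 2)
               * (f (2 * (1 + i) + 1) - f (2 * (1 + i))) / (x (2 * (1 + i) + 1) - x (2 * (1 + i))))) := by
    intro i hi
    rw [Finset.mem_range] at hi
    set j := 2 * (1 + i) with hj
    have e0 : γ j = 1 := by
      have := hγ j (by omega) (by omega)
      rw [this, hj]; simp [pow_mul]
    have e1 : γ (j + 1) = -1 := by
      have := hγ (j + 1) (by omega) (by omega)
      rw [this, hj, pow_succ, pow_mul]; norm_num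
    have d0 : t - x j ≠ 0 := htne j (by omega)
    have d1 : t - x (j + 1) ≠ 0 := htne (j + 1) (by omega)
    have dx : x (j + 1) - x j ≠ 0 := by
      have := hmono j (by omega)
      exact sub_ne_zero.mpr (ne_of_gt this)
    have hji : 2 * (1 + i) = j := rfl
    simp only [hh, hg, hji, e0, e1]
    exact pairC (x j) (x (j + 1)) (f j) (f (j + 1)) t d0 d1 dx
  rw [h0, hlast, Finset.sum_congr rfl hmid]
  rw [Finset.sum_neg_distrib]
  ring
end

section
/- Let ε and ρ be reals with 0 < ε, ρ ≥ 1, and ρε < 1 − 1/√2, and let δ be a real with |δ| ≤ 1. Then (1 − ε)^{ρ(1 + ρε)} ≤ 1 + ρδε ≤ (1 − ε)^{−ρ(1 + ρε)}, where the powers are real powers. -/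
/-- Lemma on Stewart-style error counters: if `ρ ≥ 1`, `ρε < 1 - 1/√2` and
`|δ| ≤ 1`, then `1 + ρδε ∈ ξ_{ρ(1+ρε)}`, i.e.
`(1-ε)^{ρ(1+ρε)} ≤ 1 + ρδε ≤ (1-ε)^{-ρ(1+ρε)}` (real powers). -/
theorem one_add_rho_delta_eps_mem_xi
    (ε ρ δ : ℝ) (hε : 0 < ε) (hρ : 1 ≤ ρ)
    (h : ρ * ε < 1 - 1 / Real.sqrt 2) (hδ : |δ| ≤ 1) :
    (1 - ε) ^ (ρ * (1 + ρ * ε)) ≤ 1 + ρ * δ * ε ∧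
    1 + ρ * δ * ε ≤ (1 - ε) ^ (-(ρ * (1 + ρ * ε))) := by
  have hr2 : (Real.sqrt 2) ^ 2 = 2 := Real.sq_sqrt (by norm_num)
  have hr0 : 0 < Real.sqrt 2 := Real.sqrt_pos.2 (by norm_num)
  have hr1 : (7:ℝ)/5 < Real.sqrt 2 := by nlinarith
  set s : ℝ := ρ * ε with hs
  clear_value s
  have hs0 : 0 < s := by rw [hs]; positivity
  have hs3 : s < 3 / 10 := by
    have h1 : 1 / Real.sqrt 2 = Real.sqrt 2 / 2 := by
      rw [div_eq_div_iff hr0.ne' (by norm_num : (2:ℝ) ≠ 0)]; nlinarith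
    rw [h1] at h; nlinarith
  have hεs : ε ≤ s := by nlinarith
  have hε1 : ε < 1 := by linarith
  have h1ε : 0 < 1 - ε := by linarith
  have hp : 0 < ρ * (1 + s) := by nlinarith
  have hlog : Real.log (1 - ε) ≤ -ε := by
    have := Real.log_le_sub_one_of_pos h1ε
    linarith
  have hrw : ρ * (1 + s) * ε = s * (1 + s) := by rw [hs]; ring
  -- exponent comparison
  have hexp1 : ρ * (1 + s) * Real.log (1 - ε) ≤ -(s * (1 + s)) := by
    calc ρ * (1 + s) * Real.log (1 - ε) ≤ ρ * (1 + s) * (-ε) :=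
          mul_le_mul_of_nonneg_left hlog hp.le
      _ = -(s * (1 + s)) := by rw [← hrw]; ring
  set u : ℝ := s * (1 + s) with hu
  clear_value u
  have hu0 : 0 < u := by rw [hu]; positivity
  -- key: 1 ≤ exp u * (1 - s)
  have hkey : 1 ≤ Real.exp u * (1 - s) := by
    have h1 : 1 + u / 3 ≤ Real.exp (u / 3) := by
      have := Real.add_one_le_exp (u / 3); linarith
    have h3e : Real.exp (u / 3) ^ 3 = Real.exp u := by
      rw [← Real.exp_nat_mul]; norm_num; ring_nf
    have hb : (0:ℝ) ≤ 1 + u / 3 := by linarith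
    have he : (1 + u / 3) ^ 3 ≤ Real.exp u := by
      rw [← h3e]; exact pow_le_pow_left₀ hb h1 3
    have hc : 27 * s ≤ (1 - s) * (1 + s) ^ 2 * (9 + s + s ^ 2) := by
      nlinarith [mul_pos hs0 hs0, mul_pos (mul_pos hs0 hs0) hs0,
        mul_pos (mul_pos (mul_pos hs0 hs0) hs0) hs0, sq_nonneg (1 - s),
        mul_pos hs0 (sub_pos.2 hs3)]
    have hpoly : 1 ≤ (1 + u / 3) ^ 3 * (1 - s) := by
      rw [hu]
      nlinarith [mul_le_mul_of_nonneg_left hc (sq_nonneg s)]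
    nlinarith [Real.exp_pos u]
  have hEpos : 0 < Real.exp u := Real.exp_pos _
  have hδ1 : -1 ≤ δ := (abs_le.1 hδ).1
  have hδ2 : δ ≤ 1 := (abs_le.1 hδ).2
  have hρ0 : (0:ℝ) ≤ ρ := le_trans zero_le_one hρ
  have hd1 : ρ * δ ≤ ρ := by
    have := mul_le_mul_of_nonneg_left hδ2 hρ0; linarith [mul_one ρ]
  have hd2 : -ρ ≤ ρ * δ := by
    have := mul_le_mul_of_nonneg_left hδ1 hρ0; nlinarith
  have hlo : 1 - s ≤ 1 + ρ * δ * ε := by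
    have := mul_le_mul_of_nonneg_right hd2 hε.le
    rw [hs]; linarith
  have hhi : 1 + ρ * δ * ε ≤ 1 + s := by
    have := mul_le_mul_of_nonneg_right hd1 hε.le
    rw [hs]; linarith
  have hexpneg : Real.exp (-u) ≤ 1 - s := by
    have hmul : Real.exp (-u) * Real.exp u = 1 := by
      rw [← Real.exp_add]; simp
    have h2 : Real.exp (-u) * (Real.exp u * (1 - s)) = 1 - s := by
      rw [← mul_assoc, hmul, one_mul]
    have h3 := mul_le_mul_of_nonneg_left hkey (Real.exp_pos (-u)).le
    linarith [mul_one (Real.exp (-u))]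
  constructor
  · rw [Real.rpow_def_of_pos h1ε]
    have h2 : Real.exp (Real.log (1 - ε) * (ρ * (1 + s))) ≤ Real.exp (-u) :=
      Real.exp_le_exp.2 (by rw [mul_comm]; exact hexp1)
    exact le_trans (le_trans h2 hexpneg) hlo
  · rw [Real.rpow_def_of_pos h1ε]
    have h2 : Real.exp u ≤ Real.exp (Real.log (1 - ε) * -(ρ * (1 + s))) :=
      Real.exp_le_exp.2 (by linarith only [hexp1])
    have h3 : 1 + s ≤ Real.exp u := by
      have h4 := Real.add_one_le_exp u
      have h5 : s ≤ u := by rw [hu]; nlinarith only [hs0]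
      linarith only [h4, h5]
    exact le_trans (le_trans hhi h3) h2
end

section
/- Let n ≥ 2, let 1 ≤ k < n, let x_i = −cos(iπ/n) for i = 0,…,n, let γ be the simplified weights, let f_0,…,f_n be reals with f_k ≠ 0 and |f_k| ≥ (max_{0≤j≤n} |f_j|)/2, let x̂_0,…,x̂_n be reals, and let t ∈ [−1,1] with t ≠ x_i and t ≠ x̂_i for all i. Assume α_{n,k}(x̂) ≤ 1/24, δ_{n,k}(x̂_k) ≤ 1/24, and δ_{n,k}(t) ≤ 1/24. Then there exist reals β_{n,k,i} and κ_{n,k,i} (for i ≠ k) such that ã(t, x̂) = a(t)·e^{−r_{n,k}(t,x̂)}, where r_{n,k}(t,x̂) = Σ_{i≠k} [β_{n,k,i}(x̂_i − x_i) + κ_{n,k,i}(x̂_k − x_k)]/(x_k − x_i) − Σ_{i≠k} κ_{n,k,i}(t − x_k)(x̂_i − x_i)/((x_k − x_i)(t − x_i)), and moreover |β_{n,k,i} − 1| ≤ 1.05·δ_{n,k}(t) + 0.6·α_{n,k}(x̂) and |κ_{n,k,i} − γ_i f_i/(γ_k f_k)| ≤ 2.4·α_{n,k}(x̂) + 7.2·δ_{n,k}(t)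 + 4·δ_{n,k}(x̂_k) + 4·α_{n,k}(x̂)·δ_{n,k}(t) for all i ≠ k. -/
set_option maxHeartbeats 8000000

lemma log_taylor_bound {x c : ℝ} (hc : c < 1) (hx : |x| ≤ c) :
    |Real.log (1+x) - x| ≤ (1/2 + c/(1-c)) * x^2 := by
  have h0 : 0 ≤ c := le_trans (abs_nonneg x) hx
  have h1 : |(-x)| < 1 := by rw [abs_neg]; exact lt_of_le_of_lt hx hc
  have h2 := Real.abs_log_sub_add_sum_range_le h1 2
  simp [Finset.sum_range_succ] at h2
  have h3 : |x|^3 / (1 - |x|) ≤ c * x^2 / (1-c) := by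
    apply div_le_div₀ (by positivity) ?_ (by linarith [lt_of_le_of_lt hx hc]) (by linarith)
    calc |x|^3 = |x| * x^2 := by rw [pow_succ, sq_abs]; ring
    _ ≤ c * x^2 := by nlinarith [sq_nonneg x]
  have h5 : |x^2/2| = x^2/2 := abs_of_nonneg (by positivity)
  have habs : |Real.log (1+x) - x| ≤ |-x + x^2/(1+1) + Real.log (1+x)| + x^2/2 := by
    have h4 := abs_add_le (-x + x^2/(1+1) + Real.log (1+x)) (-(x^2/2))
    simp only [abs_neg] at h4
    calc |Real.log (1+x) - x| = |(-x + x^2/(1+1) + Real.log (1+x)) + -(x^2/2)| := by ring_nf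
    _ ≤ |-x + x^2/(1+1) + Real.log (1+x)| + |x^2/2| := h4
    _ = _ := by rw [h5]
  have hc' : c * x^2 / (1-c) = c/(1-c) * x^2 := by ring
  nlinarith [h2, h3, habs]

/-- Lemma on the effect of node rounding on the first barycentric formula at the
Chebyshev points of the second kind: `ã(t, x̂) = a(t)·exp(-r_{n,k}(t, x̂))` with
almost-constant coefficients `β_{n,k,i}` and `κ_{n,k,i}`. -/
theorem first_formula_rounded_nodes
    (n k : ℕ) (hn : 2 ≤ n) (hk1 : 1 ≤ k) (hkn : k < n)
    (x xh γ f : ℕ → ℝ)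
    (hx : ∀ i ≤ n, x i = -Real.cos (i * Real.pi / n))
    (hγ0 : γ 0 = 1 / 2) (hγn : γ n = (-1 : ℝ) ^ n / 2)
    (hγ : ∀ i, 0 < i → i < n → γ i = (-1 : ℝ) ^ i)
    (hfk : f k ≠ 0)
    (hfk2 : ((Finset.range (n + 1)).sup'
              ⟨0, Finset.mem_range.mpr n.succ_pos⟩ fun j => |f j|) / 2 ≤ |f k|)
    (t : ℝ) (ht : t ∈ Set.Icc (-1 : ℝ) 1)
    (htx : ∀ i ≤ n, t ≠ x i) (htxh : ∀ i ≤ n, t ≠ xh i)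
    (hα : ∑ i ∈ (Finset.range (n + 1)).erase k, |(xh i - x i) / (x i - x k)| ≤ 1 / 24)
    (hδk : ∑ i ∈ (Finset.range (n + 1)).erase k, |(xh k - x k) / (x i - x k)| ≤ 1 / 24)
    (hδt : ∑ i ∈ (Finset.range (n + 1)).erase k, |(t - x k) / (x i - x k)| ≤ 1 / 24) :
    ∃ β κ : ℕ → ℝ,
      ((-1 : ℝ) ^ n / n * 2 ^ (n - 1) * (∏ i ∈ Finset.range (n + 1), (t - xh i)) *
          ∑ i ∈ Finset.range (n + 1), γ i * f i / (t - xh i))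
        = ((-1 : ℝ) ^ n / n * 2 ^ (n - 1) * (∏ i ∈ Finset.range (n + 1), (t - x i)) *
            ∑ i ∈ Finset.range (n + 1), γ i * f i / (t - x i))
          * Real.exp
              (-((∑ i ∈ (Finset.range (n + 1)).erase k,
                    (β i * (xh i - x i) + κ i * (xh k - x k)) / (x k - x i))
                 - ∑ i ∈ (Finset.range (n + 1)).erase k,
                    κ i * (t - x k) * (xh i - x i) / ((x k - x i) * (t - x i))))
      ∧ (∀ i ∈ (Finset.range (n + 1)).erase k,
          |β i - 1| ≤
            1.05 * (∑ j ∈ (Finset.range (n + 1)).erase k, |(t - x k) / (x j - x k)|)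
            + 0.6 * (∑ j ∈ (Finset.range (n + 1)).erase k, |(xh j - x j) / (x j - x k)|))
      ∧ (∀ i ∈ (Finset.range (n + 1)).erase k,
          |κ i - γ i * f i / (γ k * f k)| ≤
            2.4 * (∑ j ∈ (Finset.range (n + 1)).erase k, |(xh j - x j) / (x j - x k)|)
            + 7.2 * (∑ j ∈ (Finset.range (n + 1)).erase k, |(t - x k) / (x j - x k)|)
            + 4 * (∑ j ∈ (Finset.range (n + 1)).erase k, |(xh k - x k) / (x j - x k)|)
            + 4 * (∑ j ∈ (Finset.range (n + 1)).erase k, |(xh j - x j) / (x j - x k)|)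
                * (∑ j ∈ (Finset.range (n + 1)).erase k, |(t - x k) / (x j - x k)|)) := by
  have hn0 : (0:ℝ) < n := by exact_mod_cast Nat.pos_of_ne_zero (by omega)
  have hkr : k ∈ Finset.range (n + 1) := Finset.mem_range.mpr (by omega)
  set E := (Finset.range (n + 1)).erase k with hE_def
  clear_value E
  have hmem : ∀ i ∈ E, i ≤ n ∧ i ≠ k := by
    intro i hi
    rw [hE_def] at hi
    have h1 := Finset.mem_range.mp (Finset.mem_of_mem_erase hi)
    exact ⟨by omega, Finset.ne_of_mem_erase hi⟩
  have hmono : ∀ i j : ℕ, i ≤ n → j ≤ n → i < j → x i < x j := by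
    intro i j hi hj hij
    rw [hx i hi, hx j hj, neg_lt_neg_iff]
    apply Real.cos_lt_cos_of_nonneg_of_le_pi
    · positivity
    · rw [div_le_iff₀ hn0]
      have hj' : (j:ℝ) ≤ n := by exact_mod_cast hj
      nlinarith [Real.pi_pos]
    · have hij' : (i:ℝ) < j := by exact_mod_cast hij
      have := Real.pi_pos
      gcongr
  have hxik : ∀ i ∈ E, x i - x k ≠ 0 := by
    intro i hi
    obtain ⟨hin, hik⟩ := hmem i hi
    rcases lt_or_gt_of_ne hik with h | h
    · exact ne_of_lt (sub_neg.mpr (hmono i k hin (le_of_lt hkn) h))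
    · exact ne_of_gt (sub_pos.mpr (hmono k i (le_of_lt hkn) hin h))
  have hei : ∀ i ∈ E, 0 < |x i - x k| := fun i hi => abs_pos.mpr (hxik i hi)
  have htxi : ∀ i ≤ n, t - x i ≠ 0 := fun i hi => sub_ne_zero.mpr (htx i hi)
  have htxhi : ∀ i ≤ n, t - xh i ≠ 0 := fun i hi => sub_ne_zero.mpr (htxh i hi)
  set αs := ∑ i ∈ E, |(xh i - x i) / (x i - x k)| with hαs_def
  clear_value αs
  set δks := ∑ i ∈ E, |(xh k - x k) / (x i - x k)| with hδks_def
  clear_value δks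
  set δts := ∑ i ∈ E, |(t - x k) / (x i - x k)| with hδts_def
  clear_value δts
  have hα0 : 0 ≤ αs := by rw [hαs_def]; positivity
  have hδk0 : 0 ≤ δks := by rw [hδks_def]; positivity
  have hδt0 : 0 ≤ δts := by rw [hδts_def]; positivity
  have hAi : ∀ i ∈ E, |(xh i - x i) / (x i - x k)| ≤ αs := by
    intro i hi
    rw [hαs_def]
    exact Finset.single_le_sum (f := fun j => |(xh j - x j) / (x j - x k)|)
      (fun j _ => abs_nonneg _) hi
  have hKi : ∀ i ∈ E, |(xh k - x k) / (x i - x k)| ≤ δks := by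
    intro i hi
    rw [hδks_def]
    exact Finset.single_le_sum (f := fun j => |(xh k - x k) / (x j - x k)|)
      (fun j _ => abs_nonneg _) hi
  have hDi : ∀ i ∈ E, |(t - x k) / (x i - x k)| ≤ δts := by
    intro i hi
    rw [hδts_def]
    exact Finset.single_le_sum (f := fun j => |(t - x k) / (x j - x k)|)
      (fun j _ => abs_nonneg _) hi
  have hratio : ∀ (a : ℝ), ∀ i ∈ E, |a| = |a / (x i - x k)| * |x i - x k| := by
    intro a i hi
    rw [abs_div, div_mul_cancel₀ _ (ne_of_gt (hei i hi))]
  -- lower bound on |t - x i|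
  have htlow : ∀ i ∈ E, (23/24) * |x i - x k| ≤ |t - x i| := by
    intro i hi
    have h1 : |t - x k| ≤ (1/24) * |x i - x k| := by
      rw [hratio (t - x k) i hi]
      have h2 := le_trans (hDi i hi) hδt
      nlinarith [hei i hi]
    have h3 : |x i - x k| - |t - x k| ≤ |t - x i| := by
      have h4 := abs_sub_abs_le_abs_sub (x i - x k) (t - x k)
      have h5 : (x i - x k) - (t - x k) = x i - t := by ring
      rw [h5, abs_sub_comm (x i) t] at h4
      linarith
    linarith
  have hup : ∀ i ∈ E, |xh i - x i| ≤ (1/24) * |x i - x k| := by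
    intro i hi
    rw [hratio (xh i - x i) i hi]
    have h2 := le_trans (hAi i hi) hα
    nlinarith [hei i hi]
  have hxhlow : ∀ i ∈ E, (11/12) * |x i - x k| ≤ |t - xh i| := by
    intro i hi
    have h3 : |t - x i| - |xh i - x i| ≤ |t - xh i| := by
      have h4 := abs_sub_abs_le_abs_sub (t - x i) (xh i - x i)
      have h5 : (t - x i) - (xh i - x i) = t - xh i := by ring
      rw [h5] at h4
      linarith
    have := htlow i hi
    have := hup i hi
    linarith
  -- gamma and rho facts
  have hγk : γ k = (-1:ℝ)^k := hγ k (by omega) hkn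
  have hγkabs : |γ k| = 1 := by rw [hγk, abs_pow, abs_neg, abs_one, one_pow]
  have hγkfk : γ k * f k ≠ 0 :=
    mul_ne_zero (by rw [hγk]; exact pow_ne_zero _ (by norm_num)) hfk
  have hγabs : ∀ i ≤ n, |γ i| ≤ 1 := by
    intro i hi
    rcases Nat.eq_zero_or_pos i with h0 | h0
    · subst h0; rw [hγ0, abs_of_pos (by norm_num : (0:ℝ) < 1/2)]; norm_num
    rcases eq_or_lt_of_le hi with hn' | hn'
    · subst hn'; rw [hγn, abs_div, abs_pow, abs_neg, abs_one, one_pow]; norm_num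
    · rw [hγ i h0 hn', abs_pow, abs_neg, abs_one, one_pow]
  have hfb : ∀ i ≤ n, |f i| ≤ 2 * |f k| := by
    intro i hi
    have h1 : |f i| ≤ (Finset.range (n + 1)).sup'
        ⟨0, Finset.mem_range.mpr n.succ_pos⟩ fun j => |f j| :=
      Finset.le_sup' (f := fun j => |f j|) (Finset.mem_range.mpr (Nat.lt_succ_of_le hi))
    linarith
  set ρ : ℕ → ℝ := fun i => γ i * f i / (γ k * f k) with hρ_def
  clear_value ρ
  have hρb : ∀ i ∈ E, |ρ i| ≤ 2 := by
    intro i hi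
    obtain ⟨hin, _⟩ := hmem i hi
    simp only [hρ_def]
    rw [abs_div, abs_mul, abs_mul, hγkabs, one_mul, div_le_iff₀ (abs_pos.mpr hfk)]
    calc |γ i| * |f i| ≤ 1 * (2 * |f k|) :=
          mul_le_mul (hγabs i hin) (hfb i hin) (abs_nonneg _) one_pos.le
    _ = 2 * |f k| := by ring
  -- u facts
  set u : ℕ → ℝ := fun i => (xh i - x i) / (t - x i) with hu_def
  clear_value u
  have huabs : ∀ i ∈ E, |u i| ≤ (24/23) * |(xh i - x i) / (x i - x k)| := by
    intro i hi
    obtain ⟨hin, _⟩ := hmem i hi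
    simp only [hu_def]
    rw [abs_div]
    have h2 := htlow i hi
    have h3 : 0 < |t - x i| := lt_of_lt_of_le (mul_pos (by norm_num) (hei i hi)) h2
    rw [div_le_iff₀ h3]
    have h5 : (0:ℝ) ≤ |(xh i - x i) / (x i - x k)| := abs_nonneg _
    have h4 := hratio (xh i - x i) i hi
    nlinarith [mul_le_mul_of_nonneg_left h2 h5]
  have hu23 : ∀ i ∈ E, |u i| ≤ 1/23 := by
    intro i hi
    have h1 := huabs i hi
    have h2 := le_trans (hAi i hi) hα
    have h5 : (0:ℝ) ≤ |(xh i - x i) / (x i - x k)| := abs_nonneg _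
    linarith
  have hu1 : ∀ i ∈ E, 0 < 1 - u i := by
    intro i hi
    have := abs_le.mp (hu23 i hi)
    linarith
  have hufac : ∀ i ∈ E, t - xh i = (t - x i) * (1 - u i) := by
    intro i hi
    obtain ⟨hin, _⟩ := hmem i hi
    have hne : t - x i ≠ 0 := htxi i hin
    simp only [hu_def]
    field_simp
    ring
  set g : ℕ → ℝ := fun i => if u i = 0 then 1 else -Real.log (1 - u i) / u i with hg_def
  clear_value g
  have hgui : ∀ i ∈ E, g i * u i = -Real.log (1 - u i) := by
    intro i hi
    simp only [hg_def]
    split_ifs with h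
    · rw [h]; simp
    · field_simp
  have hgb : ∀ i ∈ E, |g i - 1| ≤ (6/11) * |u i| := by
    intro i hi
    simp only [hg_def]
    split_ifs with h
    · simp [h]
    · have hlog := log_taylor_bound (c := 1/23) (by norm_num) (x := -u i)
        (by rw [abs_neg]; exact hu23 i hi)
      rw [show (1:ℝ) + -u i = 1 - u i by ring] at hlog
      have he1 : -Real.log (1 - u i) / u i - 1 = -((Real.log (1 - u i) - -u i) / u i) := by
        field_simp
        ring
      rw [he1, abs_neg, abs_div, div_le_iff₀ (abs_pos.mpr h)]
      nlinarith [hlog, sq_abs (u i), abs_nonneg (u i)]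
  -- B and A sums
  set Bv := ∑ i ∈ E, ρ i * ((t - x k) / (t - x i)) with hBv_def
  clear_value Bv
  set Av := ∑ i ∈ E, ρ i * ((t - xh k) / (t - xh i)) with hAv_def
  clear_value Av
  have hq : ∀ i ∈ E, |(t - x k) / (t - x i)| ≤ (24/23) * |(t - x k) / (x i - x k)| := by
    intro i hi
    rw [abs_div]
    have h2 := htlow i hi
    have h3 : 0 < |t - x i| := lt_of_lt_of_le (mul_pos (by norm_num) (hei i hi)) h2
    rw [div_le_iff₀ h3]
    have h5 : (0:ℝ) ≤ |(t - x k) / (x i - x k)| := abs_nonneg _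
    have h4 := hratio (t - x k) i hi
    nlinarith [mul_le_mul_of_nonneg_left h2 h5]
  have hBb : |Bv| ≤ (48/23) * δts := by
    rw [hBv_def]
    refine le_trans (Finset.abs_sum_le_sum_abs _ _) ?_
    rw [hδts_def, Finset.mul_sum]
    refine Finset.sum_le_sum ?_
    intro i hi
    rw [abs_mul]
    have h1 := hρb i hi
    have h2 := hq i hi
    have h5 : (0:ℝ) ≤ |(t - x k) / (t - x i)| := abs_nonneg _
    have h6 : (0:ℝ) ≤ |(t - x k) / (x i - x k)| := abs_nonneg _
    nlinarith [abs_nonneg (ρ i)]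
  have hB23 : |Bv| ≤ 2/23 := by nlinarith
  have h1Bpos : (0:ℝ) < 1 + Bv := by have := abs_le.mp hB23; linarith
  have h1Bne : (1:ℝ) + Bv ≠ 0 := ne_of_gt h1Bpos
  have h1B : (21/23:ℝ) ≤ 1 + Bv := by have := abs_le.mp hB23; linarith
  -- A - B bound
  have hABsum : Av - Bv = ∑ i ∈ E, ρ i * ((t - xh k)/(t - xh i) - (t - x k)/(t - x i)) := by
    rw [hAv_def, hBv_def, ← Finset.sum_sub_distrib]
    exact Finset.sum_congr rfl (fun i hi => by ring)
  have hterm : ∀ i ∈ E, |ρ i * ((t - xh k)/(t - xh i) - (t - x k)/(t - x i))| ≤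
      (24/11) * |(xh k - x k) / (x i - x k)| +
      (576/253) * (δts * |(xh i - x i) / (x i - x k)|) := by
    intro i hi
    obtain ⟨hin, _⟩ := hmem i hi
    have hne1 : t - xh i ≠ 0 := htxhi i hin
    have hne2 : t - x i ≠ 0 := htxi i hin
    have hd1 : (t - xh k)/(t - xh i) - (t - x k)/(t - x i)
        = (-(xh k - x k) * (t - x i) + (t - x k) * (xh i - x i)) / ((t - xh i) * (t - x i)) := by
      field_simp
      ring
    rw [abs_mul, hd1, abs_div, abs_mul]
    have hnum : |(-(xh k - x k) * (t - x i) + (t - x k) * (xh i - x i))| ≤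
        |xh k - x k| * |t - x i| + |t - x k| * |xh i - x i| := by
      calc _ ≤ |(-(xh k - x k)) * (t - x i)| + |(t - x k) * (xh i - x i)| := abs_add_le _ _
      _ = _ := by rw [abs_mul, abs_mul, abs_neg]
    have hK := hratio (xh k - x k) i hi
    have hA := hratio (xh i - x i) i hi
    have hD := hratio (t - x k) i hi
    have hDd := hDi i hi
    have hTh := hxhlow i hi
    have hT := htlow i hi
    have he0 := hei i hi
    have hTh0 : 0 < |t - xh i| := lt_of_lt_of_le (by nlinarith) hTh
    have hT0 : 0 < |t - x i| := lt_of_lt_of_le (by nlinarith) hT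
    have hK0 : (0:ℝ) ≤ |(xh k - x k) / (x i - x k)| := abs_nonneg _
    have hA0 : (0:ℝ) ≤ |(xh i - x i) / (x i - x k)| := abs_nonneg _
    have hD0 : (0:ℝ) ≤ |(t - x k) / (x i - x k)| := abs_nonneg _
    have hfrac : |(-(xh k - x k) * (t - x i) + (t - x k) * (xh i - x i))|
          / (|t - xh i| * |t - x i|)
        ≤ (12/11) * |(xh k - x k) / (x i - x k)| +
          (288/253) * (δts * |(xh i - x i) / (x i - x k)|) := by
      rw [div_le_iff₀ (by positivity)]
      have hTT : (253/288) * (|x i - x k| * |x i - x k|) ≤ |t - xh i| * |t - x i| := by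
        nlinarith
      have hnum2 : |(-(xh k - x k) * (t - x i) + (t - x k) * (xh i - x i))| ≤
          |(xh k - x k) / (x i - x k)| * |x i - x k| * |t - x i| +
          δts * |(xh i - x i) / (x i - x k)| * (|x i - x k| * |x i - x k|) := by
        rw [hK, hA, hD] at hnum
        nlinarith [mul_le_mul_of_nonneg_right hDd
          (mul_nonneg (mul_nonneg hA0 (le_of_lt he0)) (le_of_lt he0))]
      refine le_trans hnum2 ?_
      have e1 : (0:ℝ) ≤ |t - xh i| - (11/12) * |x i - x k| := by linarith
      nlinarith [mul_nonneg (mul_nonneg hK0 e1) (le_of_lt hT0),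
        mul_nonneg (mul_nonneg (mul_nonneg hδt0 hA0) (le_of_lt he0)) (le_of_lt he0),
        mul_le_mul_of_nonneg_left hTT (mul_nonneg hδt0 hA0)]
    have hrr := hρb i hi
    have hfr0 : (0:ℝ) ≤ |(-(xh k - x k) * (t - x i) + (t - x k) * (xh i - x i))|
          / (|t - xh i| * |t - x i|) := by positivity
    nlinarith [mul_le_mul hrr hfrac hfr0 (by norm_num : (0:ℝ) ≤ 2), abs_nonneg (ρ i)]
  have hABb : |Av - Bv| ≤ (24/11) * δks + (576/253) * (αs * δts) := by
    rw [hABsum]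
    refine le_trans (Finset.abs_sum_le_sum_abs _ _) ?_
    refine le_trans (Finset.sum_le_sum hterm) ?_
    have e1 : ∑ i ∈ E, ((24/11) * |(xh k - x k) / (x i - x k)| +
        (576/253) * (δts * |(xh i - x i) / (x i - x k)|))
        = (24/11) * δks + (576/253) * (δts * αs) := by
      rw [Finset.sum_add_distrib, ← Finset.mul_sum, ← hδks_def, ← Finset.mul_sum,
        ← Finset.mul_sum, ← hαs_def]
    rw [e1, mul_comm δts αs]
  have hABnum : |Av - Bv| ≤ 24/253 := by nlinarith
  -- w and h
  set w := (Av - Bv) / (1 + Bv) with hw_def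
  clear_value w
  have hwb : |w| ≤ (23/21) * |Av - Bv| := by
    rw [hw_def, abs_div, abs_of_pos h1Bpos, div_le_iff₀ h1Bpos]
    nlinarith [abs_nonneg (Av - Bv)]
  have hw877 : |w| ≤ 8/77 := by nlinarith
  have h1w : (0:ℝ) < 1 + w := by have := abs_le.mp hw877; linarith
  set hv := if w = 0 then 1 else Real.log (1 + w) / w with hhv_def
  clear_value hv
  have hhw : hv * w = Real.log (1 + w) := by
    rw [hhv_def]
    split_ifs with h
    · rw [h]; simp
    · field_simp
  have hhb : |hv - 1| ≤ (85/138) * |w| := by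
    rw [hhv_def]
    split_ifs with h
    · simp [h]
    · have hlog := log_taylor_bound (c := 8/77) (by norm_num) (x := w) hw877
      have he1 : Real.log (1 + w) / w - 1 = (Real.log (1 + w) - w) / w := by
        field_simp
      rw [he1, abs_div, div_le_iff₀ (abs_pos.mpr h)]
      nlinarith [hlog, sq_abs w, abs_nonneg w]
  -- the witnesses
  set β : ℕ → ℝ := fun i => g i * ((x k - x i) / (t - x i)) with hβ_def
  clear_value β
  set κ : ℕ → ℝ := fun i => ρ i * hv * ((x k - x i) / ((t - xh i) * (1 + Bv))) with hκ_def
  clear_value κ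
  refine ⟨β, κ, ?_, ?_, ?_⟩
  · -- the equality
    have hwB : w * (1 + Bv) = Av - Bv := by
      rw [hw_def, div_mul_cancel₀ _ h1Bne]
    have hxkik : ∀ i ∈ E, x k - x i ≠ 0 := by
      intro i hi hcon
      exact hxik i hi (by linarith)
    have hterm1 : ∀ i ∈ E,
        (β i * (xh i - x i) + κ i * (xh k - x k)) / (x k - x i)
          - κ i * (t - x k) * (xh i - x i) / ((x k - x i) * (t - x i))
        = g i * u i + (hv / (1 + Bv)) *
            (-(ρ i * ((t - xh k)/(t - xh i) - (t - x k)/(t - x i)))) := by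
      intro i hi
      obtain ⟨hin, _⟩ := hmem i hi
      have h1 : x k - x i ≠ 0 := hxkik i hi
      have h2 : t - x i ≠ 0 := htxi i hin
      have h3 : t - xh i ≠ 0 := htxhi i hin
      simp only [hβ_def, hκ_def, hu_def]
      field_simp
      ring
    have hS : (∑ i ∈ E, (β i * (xh i - x i) + κ i * (xh k - x k)) / (x k - x i))
        - ∑ i ∈ E, κ i * (t - x k) * (xh i - x i) / ((x k - x i) * (t - x i))
        = (∑ i ∈ E, g i * u i) + (hv / (1 + Bv)) * -(Av - Bv) := by
      rw [← Finset.sum_sub_distrib, Finset.sum_congr rfl hterm1,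
        Finset.sum_add_distrib, ← Finset.mul_sum]
      congr 1
      rw [Finset.sum_neg_distrib, ← hABsum]
    have hS2 : (∑ i ∈ E, (β i * (xh i - x i) + κ i * (xh k - x k)) / (x k - x i))
        - ∑ i ∈ E, κ i * (t - x k) * (xh i - x i) / ((x k - x i) * (t - x i))
        = (∑ i ∈ E, -(Real.log (1 - u i))) + -(Real.log (1 + w)) := by
      rw [hS]
      congr 1
      · exact Finset.sum_congr rfl hgui
      · rw [← hhw, ← hwB]
        field_simp
    have hP : (0:ℝ) < ∏ i ∈ E, (1 - u i) := Finset.prod_pos hu1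
    have hexp : Real.exp (-((∑ i ∈ E, (β i * (xh i - x i) + κ i * (xh k - x k)) / (x k - x i))
        - ∑ i ∈ E, κ i * (t - x k) * (xh i - x i) / ((x k - x i) * (t - x i))))
        = (∏ i ∈ E, (1 - u i)) * (1 + w) := by
      rw [hS2]
      have e3 : -((∑ i ∈ E, -(Real.log (1 - u i))) + -Real.log (1 + w)) =
          (∑ i ∈ E, Real.log (1 - u i)) + Real.log (1 + w) := by
        rw [Finset.sum_neg_distrib]
        ring
      rw [e3]
      have e4 : Real.log ((∏ i ∈ E, (1 - u i)) * (1 + w)) =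
          (∑ i ∈ E, Real.log (1 - u i)) + Real.log (1 + w) := by
        rw [Real.log_mul (ne_of_gt hP) (ne_of_gt h1w),
          Real.log_prod (fun i hi => ne_of_gt (hu1 i hi))]
      rw [← e4, Real.exp_log (mul_pos hP h1w)]
    rw [hexp]
    have hne_k : t - xh k ≠ 0 := htxhi k (le_of_lt hkn)
    have hne_k2 : t - x k ≠ 0 := htxi k (le_of_lt hkn)
    have hProdxh : (∏ i ∈ Finset.range (n+1), (t - xh i))
        = (t - xh k) * ∏ i ∈ E, (t - xh i) := by
      rw [hE_def]
      exact (Finset.mul_prod_erase _ _ hkr).symm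
    have hProdx : (∏ i ∈ Finset.range (n+1), (t - x i))
        = (t - x k) * ∏ i ∈ E, (t - x i) := by
      rw [hE_def]
      exact (Finset.mul_prod_erase _ _ hkr).symm
    have hSumxh : (t - xh k) * (∑ i ∈ Finset.range (n+1), γ i * f i / (t - xh i))
        = γ k * f k * (1 + Av) := by
      rw [show (∑ i ∈ Finset.range (n+1), γ i * f i / (t - xh i))
          = γ k * f k / (t - xh k) + ∑ i ∈ E, γ i * f i / (t - xh i) by
        rw [hE_def]; exact (Finset.add_sum_erase _ _ hkr).symm]
      rw [mul_add, Finset.mul_sum, hAv_def, mul_add, mul_one, Finset.mul_sum]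
      congr 1
      · field_simp
      · refine Finset.sum_congr rfl ?_
        intro i hi
        obtain ⟨hin, _⟩ := hmem i hi
        have h3 : t - xh i ≠ 0 := htxhi i hin
        rw [hρ_def]
        field_simp
        rw [mul_div_assoc, div_self (left_ne_zero_of_mul hγkfk), mul_one]
    have hSumx : (t - x k) * (∑ i ∈ Finset.range (n+1), γ i * f i / (t - x i))
        = γ k * f k * (1 + Bv) := by
      rw [show (∑ i ∈ Finset.range (n+1), γ i * f i / (t - x i))
          = γ k * f k / (t - x k) + ∑ i ∈ E, γ i * f i / (t - x i) by
        rw [hE_def]; exact (Finset.add_sum_erase _ _ hkr).symm]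
      rw [mul_add, Finset.mul_sum, hBv_def, mul_add, mul_one, Finset.mul_sum]
      congr 1
      · field_simp
      · refine Finset.sum_congr rfl ?_
        intro i hi
        obtain ⟨hin, _⟩ := hmem i hi
        have h2 : t - x i ≠ 0 := htxi i hin
        rw [hρ_def]
        field_simp
        rw [mul_div_assoc, div_self (left_ne_zero_of_mul hγkfk), mul_one]
    have h1A : (1 + Bv) * (1 + w) = 1 + Av := by
      have e5 : (1 + Bv) * (1 + w) = 1 + Bv + w * (1 + Bv) := by ring
      rw [e5, hwB]
      ring
    have hprodE : (∏ i ∈ E, (t - xh i)) = (∏ i ∈ E, (t - x i)) * ∏ i ∈ E, (1 - u i) := by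
      rw [← Finset.prod_mul_distrib]
      exact Finset.prod_congr rfl (fun i hi => hufac i hi)
    have key : ((t - xh k) * ∏ i ∈ E, (t - xh i)) *
          (∑ i ∈ Finset.range (n+1), γ i * f i / (t - xh i))
        = ((t - x k) * ∏ i ∈ E, (t - x i)) *
            (∑ i ∈ Finset.range (n+1), γ i * f i / (t - x i)) *
            ((∏ i ∈ E, (1 - u i)) * (1 + w)) := by
      calc ((t - xh k) * ∏ i ∈ E, (t - xh i)) *
            (∑ i ∈ Finset.range (n+1), γ i * f i / (t - xh i))
          = (∏ i ∈ E, (t - xh i)) *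
              ((t - xh k) * ∑ i ∈ Finset.range (n+1), γ i * f i / (t - xh i)) := by ring
      _ = (∏ i ∈ E, (t - xh i)) * (γ k * f k * (1 + Av)) := by rw [hSumxh]
      _ = ((∏ i ∈ E, (t - x i)) * ∏ i ∈ E, (1 - u i)) *
            ((γ k * f k * (1 + Bv)) * (1 + w)) := by rw [hprodE, ← h1A]; ring
      _ = ((∏ i ∈ E, (t - x i)) * ∏ i ∈ E, (1 - u i)) *
            (((t - x k) * ∑ i ∈ Finset.range (n+1), γ i * f i / (t - x i)) * (1 + w)) := by
            rw [hSumx]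
      _ = _ := by ring
    rw [hProdxh, hProdx]
    linear_combination ((-1:ℝ) ^ n / n * 2 ^ (n - 1)) * key
  · -- β bound
    intro i hi
    obtain ⟨hin, _⟩ := hmem i hi
    have hD := hDi i hi
    have hA := hAi i hi
    have hDd := le_trans hD hδt
    have hθ1 : |(x k - x i) / (t - x i) - 1| ≤ (24/23) * |(t - x k) / (x i - x k)| := by
      have hne2 : t - x i ≠ 0 := htxi i hin
      have he2 : (x k - x i) / (t - x i) - 1 = (x k - t) / (t - x i) := by
        field_simp
        ring
      rw [he2, abs_div, abs_sub_comm (x k) t]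
      have h2 := htlow i hi
      have h3 : 0 < |t - x i| := lt_of_lt_of_le (mul_pos (by norm_num) (hei i hi)) h2
      rw [div_le_iff₀ h3]
      have h4 := hratio (t - x k) i hi
      have h5 : (0:ℝ) ≤ |(t - x k) / (x i - x k)| := abs_nonneg _
      nlinarith [mul_le_mul_of_nonneg_left h2 h5]
    have hθb : |(x k - x i) / (t - x i)| ≤ 24/23 := by
      have := abs_sub_abs_le_abs_sub ((x k - x i) / (t - x i)) 1
      simp only [abs_one] at this
      have h5 : (0:ℝ) ≤ |(t - x k) / (x i - x k)| := abs_nonneg _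
      nlinarith
    have hgb2 := hgb i hi
    have hub := huabs i hi
    have hu0 : (0:ℝ) ≤ |u i| := abs_nonneg _
    simp only [hβ_def]
    have hsplit : g i * ((x k - x i) / (t - x i)) - 1 =
        (g i - 1) * ((x k - x i) / (t - x i)) + ((x k - x i) / (t - x i) - 1) := by ring
    rw [hsplit]
    refine le_trans (abs_add_le _ _) ?_
    rw [abs_mul]
    have hfinal : |g i - 1| * |(x k - x i) / (t - x i)| ≤ (6/11) * (24/23) * ((24/23) * |(xh i - x i) / (x i - x k)|) := by
      have h6 : |g i - 1| * |(x k - x i) / (t - x i)| ≤ ((6/11) * |u i|) * (24/23) :=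
        mul_le_mul hgb2 hθb (abs_nonneg _) (by positivity)
      nlinarith
    have h7 : (0:ℝ) ≤ |(xh i - x i) / (x i - x k)| := abs_nonneg _
    have h8 : (0:ℝ) ≤ |(t - x k) / (x i - x k)| := abs_nonneg _
    have hc1 : (1.05:ℝ) = 21/20 := by norm_num
    have hc2 : (0.6:ℝ) = 3/5 := by norm_num
    rw [hc1, hc2]
    linarith only [hθ1, hfinal, hD, hA, h7, h8, hδt0, hα0]
  · -- κ bound
    intro i hi
    obtain ⟨hin, hik⟩ := hmem i hi
    have hD := hDi i hi
    have hA := hAi i hi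
    have hK := hKi i hi
    have hne1 : t - xh i ≠ 0 := htxhi i hin
    have hC1 : |(x k - x i) / (t - xh i) - 1| ≤
        (12/11) * (|(t - x k) / (x i - x k)| + |(xh i - x i) / (x i - x k)|) := by
      have he2 : (x k - x i) / (t - xh i) - 1 = ((x k - t) + (xh i - x i)) / (t - xh i) := by
        field_simp
        ring
      rw [he2, abs_div]
      have h2 := hxhlow i hi
      have h3 : 0 < |t - xh i| := lt_of_lt_of_le (mul_pos (by norm_num) (hei i hi)) h2
      rw [div_le_iff₀ h3]
      have h4 := hratio (t - x k) i hi
      have h4b := hratio (xh i - x i) i hi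
      have h5 : (0:ℝ) ≤ |(t - x k) / (x i - x k)| := abs_nonneg _
      have h5b : (0:ℝ) ≤ |(xh i - x i) / (x i - x k)| := abs_nonneg _
      have htri : |(x k - t) + (xh i - x i)| ≤ |t - x k| + |xh i - x i| := by
        refine le_trans (abs_add_le _ _) ?_
        rw [abs_sub_comm (x k) t]
      nlinarith [mul_le_mul_of_nonneg_left h2 (add_nonneg h5 h5b), hei i hi]
    have hC : |(x k - x i) / (t - xh i)| ≤ 12/11 := by
      have h9 := abs_sub_abs_le_abs_sub ((x k - x i) / (t - xh i)) 1
      simp only [abs_one] at h9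
      have hDd := le_trans hD hδt
      have hAd := le_trans hA hα
      have h5 : (0:ℝ) ≤ |(t - x k) / (x i - x k)| := abs_nonneg _
      have h5b : (0:ℝ) ≤ |(xh i - x i) / (x i - x k)| := abs_nonneg _
      linarith only [h9, hC1, hDd, hAd, h5, h5b]
    -- κ i - ρ i decomposition
    have hkd : κ i - γ i * f i / (γ k * f k) =
        ρ i * (((hv - 1) * ((x k - x i) / (t - xh i)) +
          ((x k - x i) / (t - xh i) - 1) - Bv) / (1 + Bv)) := by
      have hCC : (x k - x i) / ((t - xh i) * (1 + Bv)) =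
          ((x k - x i) / (t - xh i)) / (1 + Bv) := div_div _ _ _ |>.symm
      have hρi : γ i * f i / (γ k * f k) = ρ i := by rw [hρ_def]
      have hmain : hv * (((x k - x i) / (t - xh i)) / (1 + Bv)) - 1 =
          ((hv - 1) * ((x k - x i) / (t - xh i)) +
            ((x k - x i) / (t - xh i) - 1) - Bv) / (1 + Bv) := by
        field_simp
        ring
      simp only [hκ_def]
      rw [hCC, hρi]
      calc ρ i * hv * ((x k - x i) / (t - xh i) / (1 + Bv)) - ρ i
          = ρ i * (hv * (((x k - x i) / (t - xh i)) / (1 + Bv)) - 1) := by ring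
      _ = _ := by rw [hmain]
    rw [hkd, abs_mul, abs_div, abs_of_pos h1Bpos]
    have hnum : |(hv - 1) * ((x k - x i) / (t - xh i)) +
        ((x k - x i) / (t - xh i) - 1) - Bv| ≤
        (12/11) * |hv - 1| + |(x k - x i) / (t - xh i) - 1| + |Bv| := by
      have t1 := abs_sub ((hv - 1) * ((x k - x i) / (t - xh i)) +
        ((x k - x i) / (t - xh i) - 1)) Bv
      have t2 := abs_add_le ((hv - 1) * ((x k - x i) / (t - xh i)))
        ((x k - x i) / (t - xh i) - 1)
      rw [abs_mul] at t2
      have h9 := mul_le_mul_of_nonneg_left hC (abs_nonneg (hv - 1))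
      linarith only [t1, t2, h9]
    have hhb2 : |hv - 1| ≤ (85/138) * ((23/21) * ((24/11) * δks + (576/253) * (αs * δts))) := by
      refine le_trans hhb ?_
      have t3 : (23/21) * |Av - Bv| ≤ (23/21) * ((24/11) * δks + (576/253) * (αs * δts)) := by
        linarith only [hABb]
      have t4 := le_trans hwb t3
      linarith only [t4, abs_nonneg w]
    have hρ2 := hρb i hi
    have hq1 : |ρ i| * (|(hv - 1) * ((x k - x i) / (t - xh i)) +
        ((x k - x i) / (t - xh i) - 1) - Bv| / (1 + Bv)) ≤
        2 * (((12/11) * |hv - 1| + |(x k - x i) / (t - xh i) - 1| + |Bv|) / (21/23)) := by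
      have hmono2 : |(hv - 1) * ((x k - x i) / (t - xh i)) +
          ((x k - x i) / (t - xh i) - 1) - Bv| / (1 + Bv) ≤
          ((12/11) * |hv - 1| + |(x k - x i) / (t - xh i) - 1| + |Bv|) / (21/23) := by
        refine div_le_div₀ ?_ hnum (by norm_num) h1B
        positivity
      refine mul_le_mul hρ2 hmono2 (by positivity) (by norm_num)
    refine le_trans hq1 ?_
    have h5 : (0:ℝ) ≤ |(t - x k) / (x i - x k)| := abs_nonneg _
    have h5b : (0:ℝ) ≤ |(xh i - x i) / (x i - x k)| := abs_nonneg _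
    have hvv : (0:ℝ) ≤ |hv - 1| := abs_nonneg _
    have hBv0 : (0:ℝ) ≤ |Bv| := abs_nonneg _
    have hc1 : (2.4:ℝ) = 12/5 := by norm_num
    have hc2 : (7.2:ℝ) = 36/5 := by norm_num
    rw [hc1, hc2]
    linarith only [hhb2, hC1, hBb, hD, hA, h5, h5b, hvv, hBv0, hδt0, hα0, hδk0,
      hδt, hα, hδk, mul_nonneg hα0 hδt0]
end

section
/- Let n ≥ 2, let 1 ≤ k < n, let x_i = −cos(iπ/n) for i = 0,…,n, let γ be the simplified weights, and let f_0,…,f_n be reals with f_k ≠ 0 and |f_k| ≥ (max_{0≤j≤n} |f_j|)/2. Let t ∈ [−1,1] with t ≠ x_i for all i ≠ k, and assume δ_{n,k}(t) ≤ 1/24. Setting θ_{n,k,i} = γ_i f_i/(γ_k f_k) and s(t) = 1 + Σ_{i≠k} θ_{n,k,i}·(t − x_k)/(t − x_i), one has |s(t) − 1| ≤ 2/23. -/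
/-- Bound `|s(t) - 1| ≤ 2/23` for `s(t) = 1 + Σ_{i≠k} θ_{n,k,i}(t-x_k)/(t-x_i)`
with `θ_{n,k,i} = γ_i f_i/(γ_k f_k)`, at the Chebyshev points of the second
kind, under `|f_k| ≥ max|f_j|/2` and `δ_{n,k}(t) ≤ 1/24`. -/
theorem s_close_to_one
    (n k : ℕ) (hn : 2 ≤ n) (hk1 : 1 ≤ k) (hkn : k < n)
    (x γ f : ℕ → ℝ)
    (hx : ∀ i ≤ n, x i = -Real.cos (i * Real.pi / n))
    (hγ0 : γ 0 = 1 / 2) (hγn : γ n = (-1 : ℝ) ^ n / 2)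
    (hγ : ∀ i, 0 < i → i < n → γ i = (-1 : ℝ) ^ i)
    (hfk : f k ≠ 0)
    (hfk2 : ((Finset.range (n + 1)).sup'
              ⟨0, Finset.mem_range.mpr n.succ_pos⟩ fun j => |f j|) / 2 ≤ |f k|)
    (t : ℝ) (ht : t ∈ Set.Icc (-1 : ℝ) 1)
    (htx : ∀ i ≤ n, i ≠ k → t ≠ x i)
    (hδt : ∑ i ∈ (Finset.range (n + 1)).erase k, |(t - x k) / (x i - x k)| ≤ 1 / 24) :
    |(1 + ∑ i ∈ (Finset.range (n + 1)).erase k,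
        γ i * f i / (γ k * f k) * ((t - x k) / (t - x i))) - 1| ≤ 2 / 23 := by
  have hπ := Real.pi_pos
  have hn0 : (0 : ℝ) < n := by positivity
  -- distinctness of the nodes
  have hxinj : ∀ i ≤ n, ∀ j ≤ n, i ≠ j → x i ≠ x j := by
    intro i hi j hj hij
    have hmem : ∀ m : ℕ, m ≤ n → (m * Real.pi / n) ∈ Set.Icc 0 Real.pi := by
      intro m hm
      constructor
      · positivity
      · rw [div_le_iff₀ hn0]
        have : (m : ℝ) ≤ n := by exact_mod_cast hm
        nlinarith
    rw [hx i hi, hx j hj]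
    intro h
    have h' : Real.cos (i * Real.pi / n) = Real.cos (j * Real.pi / n) := by linarith
    have h2 := Real.injOn_cos (hmem i hi) (hmem j hj) h'
    field_simp at h2
    exact hij (by exact_mod_cast h2)
  have hfkpos : 0 < |f k| := abs_pos.mpr hfk
  have hγk : |γ k| = 1 := by
    rw [hγ k hk1 hkn, abs_pow, abs_neg, abs_one, one_pow]
  have hγi : ∀ i ≤ n, |γ i| ≤ 1 := by
    intro i hi
    rcases Nat.eq_zero_or_pos i with h0 | h0
    · subst h0; rw [hγ0, abs_of_nonneg (by norm_num)]; norm_num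
    rcases eq_or_lt_of_le hi with h1 | h1
    · subst h1
      rw [hγn, abs_div, abs_pow, abs_neg, abs_one, one_pow,
        abs_of_nonneg (by norm_num : (0:ℝ) ≤ 2)]
      norm_num
    · rw [hγ i h0 h1, abs_pow, abs_neg, abs_one, one_pow]
  have hfi : ∀ i ≤ n, |f i| ≤ 2 * |f k| := by
    intro i hi
    have := Finset.le_sup' (fun j => |f j|) (Finset.mem_range.mpr (Nat.lt_succ_of_le hi))
    linarith
  set S := (Finset.range (n + 1)).erase k with hS
  have hkS : k ≤ n := le_of_lt hkn
  have key : ∀ i ∈ S, |γ i * f i / (γ k * f k) * ((t - x k) / (t - x i))|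
      ≤ (48 / 23) * |(t - x k) / (x i - x k)| := by
    intro i hiS
    have hik : i ≠ k := Finset.ne_of_mem_erase hiS
    have hin : i ≤ n := Nat.lt_succ_iff.mp (Finset.mem_range.mp (Finset.mem_of_mem_erase hiS))
    have hA : 0 < |x i - x k| := by
      rw [abs_pos, sub_ne_zero]
      exact hxinj i hin k hkS hik
    -- each δ-term is at most 1/24
    have hterm : |(t - x k) / (x i - x k)| ≤ 1 / 24 := by
      refine le_trans ?_ hδt
      exact Finset.single_le_sum (f := fun j => |(t - x k) / (x j - x k)|)
        (fun j _ => abs_nonneg _) hiS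
    rw [abs_div] at hterm
    have htxk : |t - x k| ≤ |x i - x k| / 24 := by
      rw [div_le_iff₀ hA] at hterm; linarith
    have htri : |x i - x k| - |t - x i| ≤ |t - x k| := by
      have := abs_sub_abs_le_abs_sub (x i - x k) (x i - t)
      have he : x i - x k - (x i - t) = t - x k := by ring
      rw [he] at this
      have : |x i - x k| - |x i - t| ≤ |t - x k| := this
      rwa [abs_sub_comm (x i) t] at this
    have hti : 23 / 24 * |x i - x k| ≤ |t - x i| := by linarith
    have htipos : 0 < |t - x i| := by linarith [mul_pos (by norm_num : (0:ℝ) < 23/24) hA]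
    -- bound on θ
    have hθ : |γ i * f i / (γ k * f k)| ≤ 2 := by
      rw [abs_div, abs_mul, abs_mul, hγk, one_mul]
      rw [div_le_iff₀ hfkpos]
      have h1 := hγi i hin
      have h2 := hfi i hin
      nlinarith [abs_nonneg (f i), abs_nonneg (γ i)]
    have hr : |t - x k| / |t - x i| ≤ 24 / 23 * (|t - x k| / |x i - x k|) := by
      rw [div_le_iff₀ htipos]
      have h5 : |t - x k| / |x i - x k| * |x i - x k| = |t - x k| :=
        div_mul_cancel₀ _ (ne_of_gt hA)
      nlinarith [mul_nonneg (div_nonneg (abs_nonneg (t - x k)) hA.le)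
        (sub_nonneg.mpr hti)]
    calc |γ i * f i / (γ k * f k) * ((t - x k) / (t - x i))|
        = |γ i * f i / (γ k * f k)| * |(t - x k) / (t - x i)| := abs_mul _ _
      _ ≤ 2 * (24 / 23 * (|t - x k| / |x i - x k|)) :=
          mul_le_mul hθ (by rw [abs_div]; exact hr) (abs_nonneg _) (by norm_num)
      _ = 48 / 23 * (|t - x k| / |x i - x k|) := by ring
      _ = 48 / 23 * |(t - x k) / (x i - x k)| := by rw [abs_div]
  have habs : |∑ i ∈ S, γ i * f i / (γ k * f k) * ((t - x k) / (t - x i))|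
      ≤ ∑ i ∈ S, |γ i * f i / (γ k * f k) * ((t - x k) / (t - x i))| :=
    Finset.abs_sum_le_sum_abs _ _
  have hsum : ∑ i ∈ S, |γ i * f i / (γ k * f k) * ((t - x k) / (t - x i))|
      ≤ ∑ i ∈ S, (48 / 23) * |(t - x k) / (x i - x k)| :=
    Finset.sum_le_sum key
  rw [← Finset.mul_sum] at hsum
  have : |∑ i ∈ S, γ i * f i / (γ k * f k) * ((t - x k) / (t - x i))| ≤ 2 / 23 := by
    calc _ ≤ (48 / 23) * ∑ i ∈ S, |(t - x k) / (x i - x k)| := le_trans habs hsum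
      _ ≤ (48 / 23) * (1 / 24) := by nlinarith
      _ = 2 / 23 := by norm_num
  simpa using this
end

section
/- Let n ≥ 2 and let i be an integer with n/2 < i < n. For the Chebyshev points of the second kind x_j = −cos(jπ/n), one has x_{i+1} ≤ 3·x_i. -/
/-- For the Chebyshev points of the second kind `x_j = -cos(jπ/n)` and
`n/2 < i < n`, one has `x_{i+1} ≤ 3·x_i`. -/
theorem chebyshev_node_ratio
    (n i : ℕ) (hn : 2 ≤ n) (hi1 : n < 2 * i) (hi2 : i < n) :
    -Real.cos ((i + 1) * Real.pi / n) ≤ 3 * (-Real.cos (i * Real.pi / n)) := by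
  have hpi := Real.pi_pos
  have hn0 : (0:ℝ) < n := by positivity
  have hn2 : (2:ℝ) ≤ n := by exact_mod_cast hn
  have hkey : (n:ℝ) + 1 ≤ 2 * i := by exact_mod_cast hi1
  have hin : (i:ℝ) + 1 ≤ n := by exact_mod_cast hi2
  set h := Real.pi / n with hh
  set a := (i:ℝ) * Real.pi / n with ha
  have hab : ((i:ℝ) + 1) * Real.pi / n = a + h := by
    rw [ha, hh]; field_simp
  have hhpos : 0 < h := by positivity
  have hh2 : h ≤ Real.pi / 2 := by
    rw [hh, div_le_div_iff₀ hn0 two_pos]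
    nlinarith
  have hale : Real.pi / 2 + h / 2 ≤ a := by
    have hsub : a - (Real.pi / 2 + h / 2) = (2 * i - n - 1) * Real.pi / (2 * n) := by
      rw [ha, hh]; field_simp; ring
    have : (0:ℝ) ≤ (2 * i - n - 1) * Real.pi / (2 * n) := by
      apply div_nonneg _ (by positivity)
      apply mul_nonneg _ hpi.le
      linarith
    linarith
  have hage : Real.pi / 2 ≤ a := by linarith
  have haub : a ≤ Real.pi := by
    rw [ha, div_le_iff₀ hn0]
    nlinarith
  have hcosa : Real.cos a ≤ 0 :=
    Real.cos_nonpos_of_pi_div_two_le_of_le hage (by linarith)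
  -- sin (a - π/2) = -cos a
  have hsin_eq : Real.sin (a - Real.pi / 2) = -Real.cos a := by
    rw [Real.sin_sub, Real.sin_pi_div_two, Real.cos_pi_div_two]; ring
  -- sin (h/2) ≤ sin (a - π/2)
  have hmono : Real.sin (h / 2) ≤ Real.sin (a - Real.pi / 2) := by
    apply Real.strictMonoOn_sin.monotoneOn
    · constructor <;> [linarith; linarith]
    · constructor <;> [linarith; linarith]
    · linarith
  have hsinh2_nonneg : 0 ≤ Real.sin (h / 2) :=
    Real.sin_nonneg_of_nonneg_of_le_pi (by linarith) (by linarith)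
  have hcosh2_le : Real.cos (h / 2) ≤ 1 := Real.cos_le_one _
  have hsinh_eq : Real.sin h = 2 * Real.sin (h / 2) * Real.cos (h / 2) := by
    rw [← Real.sin_two_mul]; ring_nf
  have hsinh_le : Real.sin h ≤ 2 * Real.sin (h / 2) := by
    rw [hsinh_eq]; nlinarith
  have hsinh_nonneg : 0 ≤ Real.sin h :=
    Real.sin_nonneg_of_nonneg_of_le_pi hhpos.le (by linarith)
  have hsina_le : Real.sin a ≤ 1 := Real.sin_le_one _
  have hcosh_le : Real.cos h ≤ 1 := Real.cos_le_one _
  have h1 : Real.sin a * Real.sin h ≤ 2 * (-Real.cos a) := by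
    calc Real.sin a * Real.sin h ≤ 1 * Real.sin h := by
          exact mul_le_mul_of_nonneg_right hsina_le hsinh_nonneg
      _ = Real.sin h := one_mul _
      _ ≤ 2 * Real.sin (h / 2) := hsinh_le
      _ ≤ 2 * Real.sin (a - Real.pi / 2) := by linarith
      _ = 2 * (-Real.cos a) := by rw [hsin_eq]
  rw [hab, Real.cos_add]
  nlinarith [mul_nonneg (neg_nonneg.mpr hcosa) (sub_nonneg.mpr hcosh_le)]
end

section
/- Let D = {2^β·m : β, m ∈ ℤ, β ≥ −1000, 2^{52} ≤ m < 2^{53}} ⊂ ℝ and L = {2^β·m : β, m ∈ ℤ, β ≥ −1000, 2^{63} ≤ m < 2^{64}} ⊂ ℝ. Let 2 ≤ n ≤ 10^9 and x_i = −cos(iπ/n) for i = 0,…,n. Suppose y_i ∈ L for n/2 < i < n satisfy |x_i − y_i| ≤ 0.53·2^{−52}·min(|x_i|, |y_i|), and set y_n = 1. Define x̂_n = 1; for n/2 < i < n, if y_i and y_{i+1} have the same binary exponent, let x̂_i be the element of D with even mantissa closest to y_i, and otherwise let x̂_i be the element of D with mantissa divisible by four closest to y_i; set x̂_{n/2} =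 0 when n is even; and set x̂_i = −x̂_{n−i} for 0 ≤ i < n/2. Then |x̂_i − x_i| ≤ 2.54·2^{−52}·|x_i| for all i, and each of the numbers 2 + x̂_1, 2 − x̂_{n−1}, and x̂_i + x̂_{i+1} for i = 0,…,n−1 belongs to D ∪ (−D) ∪ {0}. -/
def idealFloats (e : ℕ) (d : ℤ) : Set ℝ :=
  {x | ∃ β m : ℤ, -1000 ≤ β ∧ 2 ^ e ≤ m ∧ m < 2 ^ (e + 1) ∧ d ∣ m ∧
        x = (2 : ℝ) ^ β * (m : ℝ)}

namespace RCN

lemma zpow2_pos (γ : ℤ) : (0:ℝ) < 2^γ := by positivity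

lemma zpow_split (a b : ℤ) : (2:ℝ)^(a+b) = 2^a * 2^b :=
  zpow_add₀ (by norm_num : (2:ℝ) ≠ 0) a b

/-- universal D-membership builder: `2^E * N ∈ D` if `2^k ∣ N` and
`2^(52+k) ≤ N < 2^(53+k)`. -/
lemma mem_one (E N : ℤ) (hE : -1000 ≤ E) (k : ℕ) (hdvd : 2^k ∣ N)
    (h1 : 2^(52+k) ≤ N) (h2 : N < 2^(53+k)) :
    (2:ℝ)^E * (N:ℝ) ∈ idealFloats 52 1 := by
  obtain ⟨M, rfl⟩ := hdvd
  have hk : (0:ℤ) < 2^k := by positivity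
  have hM1 : (2:ℤ)^52 ≤ M := by
    have := (mul_le_mul_iff_right₀ hk).mpr (le_refl M)
    nlinarith [pow_add (2:ℤ) 52 k]
  have hM2 : M < 2^53 := by nlinarith [pow_add (2:ℤ) 53 k]
  refine ⟨E + k, M, by omega, hM1, by exact_mod_cast hM2, one_dvd _, ?_⟩
  rw [zpow_split E k, zpow_natCast]
  push_cast
  ring

/-- `2^E * r ∈ idealFloats 52 d` for `r` in the top long-double binade
divisible by `2048 d`, `d ∈ {2,4}`. -/
lemma mem_d (E d r : ℤ) (hd : d = 2 ∨ d = 4) (hE : -1000 ≤ E)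
    (h1 : 2^63 ≤ r) (h2 : r ≤ 2^64) (hdvd : 2048*d ∣ r) :
    (2:ℝ)^E * (r:ℝ) ∈ idealFloats 52 d := by
  obtain ⟨w, hw⟩ := hdvd
  rcases eq_or_lt_of_le h2 with htop | h2'
  · refine ⟨E + 12, 2^52, by omega, le_refl _, by norm_num, ?_, ?_⟩
    · rcases hd with rfl | rfl
      · exact ⟨2^51, by norm_num⟩
      · exact ⟨2^50, by norm_num⟩
    · rw [zpow_split E 12, htop]
      push_cast
      ring
  · rcases hd with rfl | rfl
    · refine ⟨E + 11, 2*w, by omega, by omega, by omega, ⟨w, rfl⟩, ?_⟩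
      rw [zpow_split E 11]
      push_cast [hw]
      ring
    · refine ⟨E + 11, 4*w, by omega, by omega, by omega, ⟨w, by ring⟩, ?_⟩
      rw [zpow_split E 11]
      push_cast [hw]
      ring

/-- The rounding extraction lemma. -/
lemma extract (e0 μ0 d : ℤ) (hd : d = 2 ∨ d = 4) (he : -1000 ≤ e0)
    (h1 : 2^63 ≤ μ0) (h2 : μ0 < 2^64) (y0 xh0 : ℝ) (hy : y0 = (2:ℝ)^e0 * (μ0:ℝ))
    (hmem : xh0 ∈ idealFloats 52 d)
    (hmin : ∀ z ∈ idealFloats 52 d, |xh0 - y0| ≤ |z - y0|) :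
    ∃ p : ℤ, xh0 = (2:ℝ)^(e0+11) * (p:ℝ) ∧ 2^52 ≤ p ∧ p ≤ 2^53 ∧ d ∣ p ∧
      |xh0 - y0| ≤ (2:ℝ)^e0 * (1024*d) := by
  have h20 : (2:ℝ) ≠ 0 := by norm_num
  have hUpos := zpow2_pos e0
  obtain ⟨r, hr1, hr2, hr3, hr4, hrdvd⟩ :
      ∃ r : ℤ, 2^63 ≤ r ∧ r ≤ 2^64 ∧ -(1024*d) ≤ r - μ0 ∧ r - μ0 ≤ 1024*d ∧ 2048*d ∣ r := by
    rcases hd with rfl | rfl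
    · exact ⟨4096 * ((μ0+2048)/4096), by omega, by omega, by omega, by omega,
        ⟨(μ0+2048)/4096, by omega⟩⟩
    · exact ⟨8192 * ((μ0+4096)/8192), by omega, by omega, by omega, by omega,
        ⟨(μ0+4096)/8192, by omega⟩⟩
  -- the error bound, via the candidate
  have herr : |xh0 - y0| ≤ (2:ℝ)^e0 * (1024*d) := by
    have hz := hmin _ (mem_d e0 d r hd he hr1 hr2 hrdvd)
    refine hz.trans ?_
    rw [hy, ← mul_sub, abs_mul, abs_of_pos hUpos]
    have : |(r:ℝ) - (μ0:ℝ)| ≤ ((1024*d : ℤ):ℝ) := by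
      rw [abs_le]
      constructor
      · have h : ((-(1024*d) : ℤ):ℝ) ≤ ((r - μ0 : ℤ):ℝ) := Int.cast_le.mpr (by omega)
        push_cast at h ⊢; linarith
      · have h : ((r - μ0 : ℤ):ℝ) ≤ ((1024*d : ℤ):ℝ) := Int.cast_le.mpr hr4
        push_cast at h ⊢; linarith
    calc (2:ℝ)^e0 * |(r:ℝ) - (μ0:ℝ)| ≤ (2:ℝ)^e0 * ((1024*d:ℤ):ℝ) := by
            exact mul_le_mul_of_nonneg_left this hUpos.le
      _ = (2:ℝ)^e0 * (1024*d) := by push_cast; ring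
  -- y0 bounds
  have hylo : (2:ℝ)^e0 * ((2^63:ℤ):ℝ) ≤ y0 := by
    rw [hy]; exact mul_le_mul_of_nonneg_left (by exact_mod_cast h1) hUpos.le
  have hyhi : y0 < (2:ℝ)^e0 * ((2^64:ℤ):ℝ) := by
    rw [hy]
    exact mul_lt_mul_of_pos_left (by exact_mod_cast h2) hUpos
  -- xh0 between the endpoints
  have hdl : d ∣ 2^63 := by rcases hd with rfl | rfl; exacts [⟨2^62, by norm_num⟩, ⟨2^61, by norm_num⟩]
  have hlo : (2:ℝ)^e0 * ((2^63:ℤ):ℝ) ≤ xh0 := by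
    have hz := hmin _ (mem_d e0 d (2^63) hd he (le_refl _) (by norm_num)
      (by rcases hd with rfl | rfl; exacts [⟨2^51, by norm_num⟩, ⟨2^50, by norm_num⟩]))
    have h2' : |(2:ℝ)^e0 * ((2^63:ℤ):ℝ) - y0| = y0 - (2:ℝ)^e0 * ((2^63:ℤ):ℝ) := by
      rw [abs_sub_comm, abs_of_nonneg (by linarith)]
    rw [h2'] at hz
    have := (abs_le.mp hz).1
    linarith
  have hhi : xh0 ≤ (2:ℝ)^e0 * ((2^64:ℤ):ℝ) := by
    have hz := hmin _ (mem_d e0 d (2^64) hd he (by norm_num) (le_refl _)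
      (by rcases hd with rfl | rfl; exacts [⟨2^52, by norm_num⟩, ⟨2^51, by norm_num⟩]))
    have h2' : |(2:ℝ)^e0 * ((2^64:ℤ):ℝ) - y0| = (2:ℝ)^e0 * ((2^64:ℤ):ℝ) - y0 := by
      rw [abs_of_nonneg (by linarith)]
    rw [h2'] at hz
    have := (abs_le.mp hz).2
    linarith
  -- decompose the membership
  obtain ⟨β, m, hβ, hm1, hm2, hdm, hxh⟩ := hmem
  rcases eq_or_lt_of_le hhi with htop | hlt
  · -- xh0 is the top endpoint : p = 2^53
    refine ⟨2^53, ?_, by norm_num, le_refl _, ?_, herr⟩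
    · rw [htop, zpow_split e0 11]
      push_cast
      ring
    · rcases hd with rfl | rfl; exacts [⟨2^52, by norm_num⟩, ⟨2^51, by norm_num⟩]
  · -- generic : β = e0 + 11
    have hb1 : (2:ℝ)^β * ((2^52:ℤ):ℝ) ≤ xh0 := by
      rw [hxh]
      exact mul_le_mul_of_nonneg_left (by exact_mod_cast hm1) (zpow2_pos β).le
    have hb2 : xh0 < (2:ℝ)^β * ((2^53:ℤ):ℝ) := by
      rw [hxh]
      exact mul_lt_mul_of_pos_left (by exact_mod_cast hm2) (zpow2_pos β)
    have hβlt : β < e0 + 12 := by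
      have : (2:ℝ)^β * ((2^52:ℤ):ℝ) < (2:ℝ)^(e0+12) * ((2^52:ℤ):ℝ) := by
        calc (2:ℝ)^β * ((2^52:ℤ):ℝ) ≤ xh0 := hb1
          _ < (2:ℝ)^e0 * ((2^64:ℤ):ℝ) := hlt
          _ = (2:ℝ)^(e0+12) * ((2^52:ℤ):ℝ) := by rw [zpow_split e0 12]; push_cast; ring
      have h52 : (0:ℝ) < ((2^52:ℤ):ℝ) := by norm_num
      have := lt_of_mul_lt_mul_right this h52.le
      exact_mod_cast (zpow_lt_zpow_iff_right₀ (by norm_num : (1:ℝ) < 2)).mp this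
    have hβgt : e0 + 10 < β := by
      have : (2:ℝ)^(e0+10) * ((2^53:ℤ):ℝ) < (2:ℝ)^β * ((2^53:ℤ):ℝ) := by
        calc (2:ℝ)^(e0+10) * ((2^53:ℤ):ℝ) = (2:ℝ)^e0 * ((2^63:ℤ):ℝ) := by
              rw [zpow_split e0 10]; push_cast; ring
          _ ≤ xh0 := hlo
          _ < (2:ℝ)^β * ((2^53:ℤ):ℝ) := hb2
      have h53 : (0:ℝ) < ((2^53:ℤ):ℝ) := by norm_num
      have := lt_of_mul_lt_mul_right this h53.le
      exact_mod_cast (zpow_lt_zpow_iff_right₀ (by norm_num : (1:ℝ) < 2)).mp this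
    have hβeq : β = e0 + 11 := by omega
    refine ⟨m, by rw [hxh, hβeq], hm1, ?_, hdm, herr⟩
    · -- m ≤ 2^53
      exact_mod_cast le_of_lt (by exact_mod_cast hm2 : m < (2:ℤ)^53)


/-- dispatch membership for sums -/
lemma memN (E N : ℤ) (hE : -1000 ≤ E)
    (h : (2^52 ≤ N ∧ N < 2^53) ∨ (2^53 ≤ N ∧ N < 2^54 ∧ 2 ∣ N) ∨
         (2^54 ≤ N ∧ N < 2^55 ∧ 4 ∣ N) ∨ (2^55 ≤ N ∧ N < 2^56 ∧ 8 ∣ N)) :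
    (2:ℝ)^E * (N:ℝ) ∈ idealFloats 52 1 := by
  rcases h with ⟨a, b⟩ | ⟨a, b, c⟩ | ⟨a, b, c⟩ | ⟨a, b, c⟩
  · exact mem_one E N hE 0 (one_dvd N) (by omega) (by omega)
  · exact mem_one E N hE 1 (by omega) (by omega) (by omega)
  · exact mem_one E N hE 2 (by omega) (by omega) (by omega)
  · exact mem_one E N hE 3 (by omega) (by omega) (by omega)

open Real in
/-- trigonometric facts about adjacent Chebyshev points in the upper half -/
lemma cheb (n i : ℕ) (h1 : n < 2*i) (h2 : i + 1 ≤ n) :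
    0 < -Real.cos (i*Real.pi/n) ∧
    -Real.cos (i*Real.pi/n) ≤ -Real.cos ((i+1:ℕ)*Real.pi/n) ∧
    -Real.cos ((i+1:ℕ)*Real.pi/n) ≤ 3*(-Real.cos (i*Real.pi/n)) := by
  have hn0 : (0:ℝ) < n := by exact_mod_cast (by omega : 0 < n)
  have hπ := Real.pi_pos
  have hq : 0 < Real.pi/(2*n) := by positivity
  set a : ℝ := i*Real.pi/n - Real.pi/2 with ha
  set b : ℝ := ((i+1:ℕ):ℝ)*Real.pi/n - Real.pi/2 with hb
  have hsa : Real.sin a = -Real.cos (i*Real.pi/n) := Real.sin_sub_pi_div_two _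
  have hsb : Real.sin b = -Real.cos ((i+1:ℕ)*Real.pi/n) := Real.sin_sub_pi_div_two _
  have ha' : a = (2*i - n : ℝ) * (Real.pi/(2*n)) := by
    rw [ha]; field_simp
  have hb' : b = (2*i + 2 - n : ℝ) * (Real.pi/(2*n)) := by
    rw [hb]; push_cast; field_simp
  have hn2 : (n:ℝ) * (Real.pi/(2*n)) = Real.pi/2 := by field_simp
  have hc1 : (1:ℝ) ≤ 2*(i:ℝ) - n := by
    have : (n:ℝ) + 1 ≤ 2*i := by exact_mod_cast h1
    linarith
  have hcb : 2*(i:ℝ) + 2 - n ≤ n := by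
    have : ((i:ℝ) + 1) ≤ n := by exact_mod_cast h2
    linarith
  have ha1 : Real.pi/(2*n) ≤ a := by rw [ha']; nlinarith
  have ha0 : 0 < a := lt_of_lt_of_le hq ha1
  have hab : a ≤ b := by rw [ha', hb']; nlinarith
  have hb2 : b ≤ Real.pi/2 := by
    rw [hb', ← hn2]
    exact mul_le_mul_of_nonneg_right hcb hq.le
  have ha2 : a ≤ Real.pi/2 := le_trans hab hb2
  have hb3a : b ≤ 3*a := by rw [ha', hb']; nlinarith
  have hπ2 : a < Real.pi := lt_of_le_of_lt ha2 (by linarith)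
  have hsinapos : 0 < Real.sin a := Real.sin_pos_of_pos_of_lt_pi ha0 hπ2
  have hmono := Real.strictMonoOn_sin.monotoneOn
  have hmem : ∀ t : ℝ, 0 < t → t ≤ Real.pi/2 → t ∈ Set.Icc (-(Real.pi/2)) (Real.pi/2) :=
    fun t h h' => ⟨by linarith, h'⟩
  have hsab : Real.sin a ≤ Real.sin b :=
    hmono (hmem a ha0 ha2) (hmem b (lt_of_lt_of_le ha0 hab) hb2) hab
  refine ⟨by rw [← hsa]; exact hsinapos, by rw [← hsa, ← hsb]; exact hsab, ?_⟩
  rw [← hsa, ← hsb]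
  by_cases h3 : 3*a ≤ Real.pi/2
  · have hs3 : Real.sin b ≤ Real.sin (3*a) :=
      hmono (hmem b (lt_of_lt_of_le ha0 hab) hb2) (hmem (3*a) (by linarith) h3) hb3a
    rw [Real.sin_three_mul] at hs3
    nlinarith [pow_pos hsinapos 3]
  · push_neg at h3
    have hπ6 : Real.pi/6 < a := by linarith
    have hs6 : Real.sin (Real.pi/6) ≤ Real.sin a :=
      hmono (hmem (Real.pi/6) (by linarith) (by linarith)) (hmem a ha0 ha2) hπ6.le
    rw [Real.sin_pi_div_six] at hs6
    have := Real.sin_le_one b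
    linarith

/-- one-sided relative error facts -/
lemma scalars (c x y : ℝ) (hc0 : 0 < c) (hc1 : c ≤ 1/4) (hx : 0 < x)
    (h : |x - y| ≤ c * min |x| |y|) :
    0 < y ∧ y ≤ x + c*x ∧ x ≤ y + c*y ∧ x - c*x ≤ y ∧ y - c*y ≤ x := by
  have h1 : |x - y| ≤ c*x := by
    refine h.trans (mul_le_mul_of_nonneg_left ?_ hc0.le)
    rw [abs_of_pos hx]
    exact min_le_left _ _
  obtain ⟨ha, hb⟩ := abs_le.mp h1
  have hy : 0 < y := by nlinarith
  have h2 : |x - y| ≤ c*y := by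
    refine h.trans (mul_le_mul_of_nonneg_left ?_ hc0.le)
    rw [abs_of_pos hy]
    exact min_le_right _ _
  obtain ⟨hc', hd'⟩ := abs_le.mp h2
  exact ⟨hy, by linarith, by linarith, by linarith, by linarith⟩

/-- ratio transfer to the y values -/
lemma chainA (c y1 y2 x1 x2 : ℝ) (hc0 : 0 < c) (hc1 : c ≤ 1/1000)
    (hx1 : 0 < x1) (h12 : x1 ≤ x2) (h21 : x2 ≤ 3*x1)
    (hy1a : y1 ≤ x1 + c*x1) (hy1b : x1 ≤ y1 + c*y1) (hy1pos : 0 < y1)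
    (hy2a : y2 ≤ x2 + c*x2) (hy2b : x2 ≤ y2 + c*y2) (hy2pos : 0 < y2) :
    y2 < 4*y1 ∧ y1 < 2*y2 := by
  constructor
  · have t1 : x2 ≤ 3*y1 + 3*(c*y1) := by linarith
    have t2 : c*x2 ≤ c*(3*y1 + 3*(c*y1)) := mul_le_mul_of_nonneg_left t1 hc0.le
    nlinarith [mul_pos hc0 hy1pos, mul_pos (mul_pos hc0 hc0) hy1pos]
  · have t1 : x1 ≤ y2 + c*y2 := le_trans h12 hy2b
    have t2 : c*x1 ≤ c*(y2 + c*y2) := mul_le_mul_of_nonneg_left t1 hc0.le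
    nlinarith [mul_pos hc0 hy2pos, mul_pos (mul_pos hc0 hc0) hy2pos]

/-- the Δ = -1 mantissa pinning -/
lemma chainB (c U y1 y2 x1 x2 P : ℝ) (hc0 : 0 < c) (hc1 : c ≤ 1/1000) (hU : 0 < U)
    (h12 : x1 ≤ x2)
    (hy1a : y1 ≤ x1 + c*x1) (hy2b : x2 ≤ y2 + c*y2) (hy2pos : 0 < y2)
    (hxh : P*U ≤ y1 + 2*U) (hy2 : y2 < 4503599627370496*U)
    (hcP : c * 4503599627370496 ≤ 0.54) :
    P < 4503599627370496 + 4 := by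
  have t1 : x1 ≤ y2 + c*y2 := le_trans h12 hy2b
  have t2 : c*x1 ≤ c*(y2 + c*y2) := mul_le_mul_of_nonneg_left t1 hc0.le
  have t3 : y1 ≤ y2 + 2*(c*y2) + c*(c*y2) := by nlinarith
  have t4 : c*y2 ≤ c*(4503599627370496*U) := mul_le_mul_of_nonneg_left hy2.le hc0.le
  have t5 : c*(4503599627370496*U) ≤ 0.54*U := by
    have := mul_le_mul_of_nonneg_right hcP hU.le
    nlinarith
  have t6 : c*(c*y2) ≤ 1*(c*y2) := by
    apply mul_le_mul_of_nonneg_right (by linarith) (by positivity)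
  have hPU : P*U < (4503599627370496 + 4)*U := by nlinarith
  exact lt_of_mul_lt_mul_right hPU hU.le

/-- the Δ = 2 ratio chain -/
lemma chainC (c U y1 y2 x1 x2 P Q D2 : ℝ) (hc0 : 0 < c) (hc1 : c ≤ 1/1000) (hU : 0 < U)
    (hx1 : 0 < x1) (h21 : x2 ≤ 3*x1)
    (hy2a : y2 ≤ x2 + c*x2) (hy1b : x1 ≤ y1 + c*y1) (hy1pos : 0 < y1)
    (hy1 : y1 ≤ P*U + 2*U) (hxh2 : Q*U ≤ y2 + 2*D2*U) (hP : P ≤ 9007199254740992)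
    (hPl : 0 ≤ P) (hcP : c * 4503599627370496 ≤ 0.54) :
    Q ≤ 3*P + 12.5 + 2*D2 := by
  have t1 : x1 ≤ P*U + 2*U + c*(P*U + 2*U) := by nlinarith [mul_le_mul_of_nonneg_left hy1 hc0.le]
  have t2 : x2 ≤ 3*(P*U + 2*U) + 3*(c*(P*U + 2*U)) := by linarith
  have t3 : c*x2 ≤ c*(3*(P*U + 2*U) + 3*(c*(P*U + 2*U))) := mul_le_mul_of_nonneg_left t2 hc0.le
  have hcU : c*(P*U) ≤ 1.08*U := by
    have h1 : c*P ≤ 1.08 := by nlinarith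
    nlinarith [mul_le_mul_of_nonneg_right h1 hU.le, mul_nonneg hc0.le hPl]
  have hcU2 : c*(c*(P*U)) ≤ (1/1000)*(1.08*U) := by
    nlinarith [mul_nonneg (mul_nonneg hc0.le hPl) hU.le]
  have hQU : Q*U ≤ (3*P + 12.5 + 2*D2)*U := by nlinarith [mul_pos hc0 hU]
  exact le_of_mul_le_mul_right hQU hU


lemma expLt {a b : ℤ} (h : (2:ℝ)^a < 2^b) : a < b :=
  (zpow_lt_zpow_iff_right₀ (by norm_num : (1:ℝ) < 2)).mp h

lemma expLe {a b : ℤ} (h : (2:ℝ)^a ≤ 2^b) : a ≤ b :=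
  (zpow_le_zpow_iff_right₀ (by norm_num : (1:ℝ) < 2)).mp h

lemma zsplit (E : ℤ) (k : ℕ) : (2:ℝ)^(E + k) = (2:ℝ)^E * 2^k := by
  rw [zpow_add₀ (by norm_num : (2:ℝ) ≠ 0), zpow_natCast]

lemma binade (e0 μ0 : ℤ) (h1 : 2^63 ≤ μ0) (h2 : μ0 < 2^64) :
    (2:ℝ)^(e0+63) ≤ (2:ℝ)^e0*(μ0:ℝ) ∧ (2:ℝ)^e0*(μ0:ℝ) < (2:ℝ)^(e0+64) := by
  have hp := zpow2_pos e0
  constructor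
  · rw [show (e0 + 63) = e0 + (63:ℕ) by norm_num, zsplit e0 63]
    have : ((2:ℝ)^(63:ℕ)) ≤ (μ0:ℝ) := by exact_mod_cast h1
    nlinarith
  · rw [show (e0 + 64) = e0 + (64:ℕ) by norm_num, zsplit e0 64]
    have : (μ0:ℝ) < ((2:ℝ)^(64:ℕ)) := by exact_mod_cast h2
    nlinarith

end RCN



set_option maxHeartbeats 4000000 in
open RCN in
/-- Correctness of the rounding procedure for the Chebyshev points of the
second kind: the rounded nodes `x̂_i` are within `2.54·2^{-52}·|x_i|` of the
exact nodes, and `2 + x̂_1`, `2 - x̂_{n-1}` and all sums `x̂_i + x̂_{i+1}` are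
(up to sign, or zero) idealized double precision numbers. -/
theorem rounded_chebyshev_nodes
    (n : ℕ) (hn : 2 ≤ n) (hn9 : n ≤ 10 ^ 9)
    (x y xh : ℕ → ℝ) (e μ : ℕ → ℤ)
    (hx : ∀ i ≤ n, x i = -Real.cos (i * Real.pi / n))
    (hyL : ∀ i, n < 2 * i → i < n →
      -1000 ≤ e i ∧ 2 ^ 63 ≤ μ i ∧ μ i < 2 ^ 64 ∧ y i = (2 : ℝ) ^ (e i) * (μ i : ℝ))
    (hyerr : ∀ i, n < 2 * i → i < n →
      |x i - y i| ≤ 0.53 * (2 : ℝ) ^ (-52 : ℤ) * min |x i| |y i|)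
    (hyn : y n = 1)
    (hynL : -1000 ≤ e n ∧ 2 ^ 63 ≤ μ n ∧ μ n < 2 ^ 64 ∧
      y n = (2 : ℝ) ^ (e n) * (μ n : ℝ))
    (hxhn : xh n = 1)
    (hround : ∀ i, n < 2 * i → i < n →
      (e i = e (i + 1) →
        xh i ∈ idealFloats 52 2 ∧ ∀ d ∈ idealFloats 52 2, |xh i - y i| ≤ |d - y i|) ∧
      (e i ≠ e (i + 1) →
        xh i ∈ idealFloats 52 4 ∧ ∀ d ∈ idealFloats 52 4, |xh i - y i| ≤ |d - y i|))
    (hmid : ∀ l, n = 2 * l → xh l = 0)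
    (hneg : ∀ i, 2 * i < n → xh i = -xh (n - i)) :
    (∀ i ≤ n, |xh i - x i| ≤ 2.54 * (2 : ℝ) ^ (-52 : ℤ) * |x i|)
    ∧ 2 + xh 1 ∈ idealFloats 52 1 ∪ -idealFloats 52 1 ∪ {0}
    ∧ 2 - xh (n - 1) ∈ idealFloats 52 1 ∪ -idealFloats 52 1 ∪ {0}
    ∧ ∀ i < n, xh i + xh (i + 1) ∈ idealFloats 52 1 ∪ -idealFloats 52 1 ∪ {0} := by
  have h20 : (2:ℝ) ≠ 0 := by norm_num
  have hu : (2:ℝ)^(-52:ℤ) = 1/4503599627370496 := by norm_num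
  obtain ⟨c, hcdef⟩ : ∃ c : ℝ, c = 0.53 * (2:ℝ)^(-52:ℤ) := ⟨_, rfl⟩
  simp only [← hcdef] at hyerr
  have hcval : c = 0.53 / 4503599627370496 := by rw [hcdef, hu]; ring
  have hc0 : 0 < c := by rw [hcval]; norm_num
  have hc1 : c ≤ 1/1000 := by rw [hcval]; norm_num
  have hcP : c * 4503599627370496 ≤ 0.54 := by rw [hcval]; norm_num
  have hnR : (0:ℝ) < n := by exact_mod_cast (by omega : 0 < n)
  have hnne : (n:ℝ) ≠ 0 := ne_of_gt hnR
  obtain ⟨hbn, hmn1, hmn2, hyvn⟩ := hynL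
  have hyn1 : (2:ℝ)^(e n) * ((μ n : ℤ):ℝ) = 1 := by rw [← hyvn, hyn]
  have henb := binade (e n) (μ n) hmn1 hmn2
  have hen : e n = -63 := by
    have l1 : e n + 63 ≤ 0 := expLe (by rw [zpow_zero]; nlinarith [henb.1, henb.2])
    have l2 : (0:ℤ) < e n + 64 := expLt (by rw [zpow_zero]; nlinarith [henb.1, henb.2])
    omega
  have hxn : x n = 1 := by
    rw [hx n le_rfl, show (n:ℝ)*Real.pi/n = Real.pi by field_simp, Real.cos_pi]
    norm_num
  -- scalar facts in the upper half (including i = n)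
  have hupper : ∀ i, n < 2*i → i ≤ n →
      0 < x i ∧ 0 < y i ∧ y i ≤ x i + c*(x i) ∧ x i ≤ y i + c*(y i) ∧
      x i - c*(x i) ≤ y i ∧ y i - c*(y i) ≤ x i ∧
      (2:ℝ)^(e i + 63) ≤ y i ∧ y i < (2:ℝ)^(e i + 64) ∧ -1000 ≤ e i := by
    intro i hi hile
    rcases eq_or_lt_of_le hile with rfl | hilt
    · refine ⟨by rw [hxn]; norm_num, by rw [hyn]; norm_num,
        by rw [hxn, hyn]; nlinarith, by rw [hxn, hyn]; nlinarith,
        by rw [hxn, hyn]; nlinarith, by rw [hxn, hyn]; nlinarith,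
        by rw [hyn, hen]; norm_num, by rw [hyn, hen]; norm_num, hbn⟩
    · obtain ⟨hb, hm1, hm2, hyv⟩ := hyL i hi hilt
      have hxpos : 0 < x i := by
        have h := (cheb n i hi hilt).1
        rw [hx i hile]; exact h
      obtain ⟨hy0, s1, s2, s3, s4⟩ := scalars c (x i) (y i) hc0 (by linarith) hxpos
        (hyerr i hi hilt)
      have hbd := binade (e i) (μ i) hm1 hm2
      rw [← hyv] at hbd
      exact ⟨hxpos, hy0, s1, s2, s3, s4, hbd.1, hbd.2, hb⟩
  -- mantissa extraction
  have key : ∀ i, n < 2*i → i < n → ∃ p : ℤ,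
      xh i = (2:ℝ)^(e i + 11) * (p:ℝ) ∧ 2^52 ≤ p ∧ p ≤ 2^53 ∧ 2 ∣ p ∧
      |xh i - y i| ≤ (2:ℝ)^(e i) * 4096 ∧
      (e i = e (i+1) → |xh i - y i| ≤ (2:ℝ)^(e i) * 2048) ∧
      (e i ≠ e (i+1) → 4 ∣ p) := by
    intro i hi hilt
    obtain ⟨hb, hm1, hm2, hyv⟩ := hyL i hi hilt
    by_cases hee : e i = e (i+1)
    · obtain ⟨hmem, hmin⟩ := (hround i hi hilt).1 hee
      obtain ⟨p, h1', h2', h3', h4', h5'⟩ :=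
        extract (e i) (μ i) 2 (Or.inl rfl) hb hm1 hm2 (y i) (xh i) hyv hmem hmin
      refine ⟨p, h1', h2', h3', h4', ?_, fun _ => ?_, fun h => absurd hee h⟩
      · refine h5'.trans ?_
        push_cast
        nlinarith [zpow2_pos (e i)]
      · refine h5'.trans (le_of_eq ?_)
        push_cast
        ring
    · obtain ⟨hmem, hmin⟩ := (hround i hi hilt).2 hee
      obtain ⟨p, h1', h2', h3', h4', h5'⟩ :=
        extract (e i) (μ i) 4 (Or.inr rfl) hb hm1 hm2 (y i) (xh i) hyv hmem hmin
      refine ⟨p, h1', h2', h3', dvd_trans (by norm_num) h4', ?_,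
        fun h => absurd h hee, fun _ => h4'⟩
      refine h5'.trans (le_of_eq ?_)
      push_cast
      ring
  -- single membership
  have single : ∀ j, n < 2*j → j < n → xh j ∈ idealFloats 52 1 := by
    intro j h1 h2
    obtain ⟨p, hp1, hp2, hp3, hp4, -, -, -⟩ := key j h1 h2
    obtain ⟨-,-,-,-,-,-,-,-, hbj⟩ := hupper j h1 h2.le
    rw [hp1]
    exact memN (e j + 11) p (by omega) (by omega)
  -- the pair lemma : adjacent sums in the upper half are doubles
  have pair : ∀ i, n < 2*i → i < n → xh i + xh (i+1) ∈ idealFloats 52 1 := by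
    intro i hi hilt
    obtain ⟨p, hp1, hp2, hp3, hp4, herr1, herr1', hp4'⟩ := key i hi hilt
    obtain ⟨hx1pos, hy1pos, s1a, s1b, s1c, s1d, b1lo, b1hi, hbE⟩ := hupper i hi hilt.le
    obtain ⟨hx2pos, hy2pos, s2a, s2b, s2c, s2d, b2lo, b2hi, hbF⟩ :=
      hupper (i+1) (by omega) (by omega)
    obtain ⟨q, hq1, hq2, hq3, hq4, herr2, hqd⟩ :
        ∃ q : ℤ, xh (i+1) = (2:ℝ)^(e (i+1) + 11) * (q:ℝ) ∧ 2^52 ≤ q ∧ q ≤ 2^53 ∧ 2 ∣ q ∧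
          |xh (i+1) - y (i+1)| ≤ (2:ℝ)^(e (i+1)) * 4096 ∧
          (4 ∣ q ∨ |xh (i+1) - y (i+1)| ≤ (2:ℝ)^(e (i+1)) * 2048) := by
      rcases eq_or_lt_of_le (show i+1 ≤ n by omega) with heq | hlt2
      · refine ⟨2^52, ?_, le_refl _, by norm_num, ⟨2^51, by norm_num⟩, ?_,
          Or.inl ⟨2^50, by norm_num⟩⟩
        · rw [heq, hxhn, hen]; push_cast; norm_num
        · rw [heq, hxhn, hyn]; simp; positivity
      · obtain ⟨q, h1', h2', h3', h4', h5', h6', h7'⟩ := key (i+1) (by omega) hlt2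
        refine ⟨q, h1', h2', h3', h4', h5', ?_⟩
        by_cases hee2 : e (i+1) = e (i+1+1)
        · exact Or.inr (h6' hee2)
        · exact Or.inl (h7' hee2)
    have hxx : x i ≤ x (i+1) ∧ x (i+1) ≤ 3 * x i := by
      have h := cheb n i hi (by omega)
      rw [hx i hilt.le, hx (i+1) (by omega)]
      exact ⟨h.2.1, h.2.2⟩
    obtain ⟨hA1, hA2⟩ := chainA c (y i) (y (i+1)) (x i) (x (i+1)) hc0 hc1 hx1pos hxx.1
      hxx.2 s1a s1b hy1pos s2a s2b hy2pos
    have hFE : e (i+1) ≤ e i + 2 := by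
      have h1 : (2:ℝ)^(e (i+1)+63) < (2:ℝ)^(e i+66) := by
        have h2 : (2:ℝ)^(e i+66) = 4*(2:ℝ)^(e i+64) := by
          rw [show e i+66 = (e i+64) + 2 by ring, zpow_add₀ h20,
            show (2:ℝ)^(2:ℤ) = 4 by norm_num]
          ring
        rw [h2]; linarith [b2lo, hA1, b1hi]
      have := expLt h1; omega
    have hEF : e i - 1 ≤ e (i+1) := by
      have h1 : (2:ℝ)^(e i+63) < (2:ℝ)^(e (i+1)+65) := by
        have h2 : (2:ℝ)^(e (i+1)+65) = 2*(2:ℝ)^(e (i+1)+64) := by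
          rw [show e (i+1)+65 = (e (i+1)+64) + 1 by ring, zpow_add_one₀ h20]
          ring
        rw [h2]; linarith [b1lo, hA2, b2hi]
      have := expLt h1; omega
    have hUpos : (0:ℝ) < (2:ℝ)^(e i + 11) := zpow2_pos _
    have hid1 : (2:ℝ)^(e i)*4096 = 2*(2:ℝ)^(e i+11) := by
      rw [zpow_add₀ h20, show (2:ℝ)^(11:ℤ) = 2048 by norm_num]; ring
    rw [hid1] at herr1
    obtain ⟨herr1b, herr1a⟩ := abs_le.mp herr1
    have hFcase : e (i+1) = e i - 1 ∨ e (i+1) = e i ∨ e (i+1) = e i + 1 ∨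
        e (i+1) = e i + 2 := by omega
    rcases hFcase with hF | hF | hF | hF
    · -- Δ = -1
      have h4p := hp4' (by omega)
      have hy2top : y (i+1) < 4503599627370496*(2:ℝ)^(e i+11) := by
        have hid : (2:ℝ)^(e (i+1)+64) = 4503599627370496*(2:ℝ)^(e i+11) := by
          rw [hF, show e i - 1 + 64 = (e i + 11) + 52 by ring, zpow_add₀ h20,
            show (2:ℝ)^(52:ℤ) = 4503599627370496 by norm_num]
          ring
        have h := b2hi; rw [hid] at h; exact h
      have hxh1le : (p:ℝ)*(2:ℝ)^(e i+11) ≤ y i + 2*(2:ℝ)^(e i+11) := by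
        rw [hp1] at herr1a; linarith
      have hPreal := chainB c ((2:ℝ)^(e i+11)) (y i) (y (i+1)) (x i) (x (i+1)) (p:ℝ)
        hc0 hc1 hUpos hxx.1 s1a s2b hy2pos hxh1le hy2top hcP
      have hp52 : p = 2^52 := by
        have h1 : (p:ℝ) < ((4503599627370500 : ℤ):ℝ) := by push_cast; linarith
        have h2 : p < 4503599627370500 := by exact_mod_cast h1
        omega
      have hsum : xh i + xh (i+1) = (2:ℝ)^(e (i+1)+11) * ((2*p + q:ℤ):ℝ) := by
        rw [hp1, hq1, show e i + 11 = (e (i+1)+11)+1 by omega, zpow_add_one₀ h20]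
        push_cast; ring
      rw [hsum]
      exact memN _ _ (by omega) (by omega)
    · -- Δ = 0
      have hsum : xh i + xh (i+1) = (2:ℝ)^(e i+11) * ((p + q:ℤ):ℝ) := by
        rw [hp1, hq1, hF]; push_cast; ring
      rw [hsum]
      exact memN _ _ (by omega) (by omega)
    · -- Δ = 1
      have h4p := hp4' (by omega)
      have hsum : xh i + xh (i+1) = (2:ℝ)^(e i+11) * ((p + 2*q:ℤ):ℝ) := by
        rw [hp1, hq1, hF, show e i + 1 + 11 = (e i+11)+1 by ring, zpow_add_one₀ h20]
        push_cast; ring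
      rw [hsum]
      exact memN _ _ (by omega) (by omega)
    · -- Δ = 2
      have h4p := hp4' (by omega)
      have h4e : (2:ℝ)^((e i+11)+2) = (2:ℝ)^(e i+11)*4 := by
        rw [zpow_add₀ h20, show (2:ℝ)^(2:ℤ) = 4 by norm_num]
      have hsum : xh i + xh (i+1) = (2:ℝ)^(e i+11) * ((p + 4*q:ℤ):ℝ) := by
        rw [hp1, hq1, hF, show e i + 2 + 11 = (e i+11)+2 by ring, h4e]
        push_cast; ring
      rw [hsum]
      by_cases hNbig : p + 4*q < 2^55
      · exact memN _ _ (by omega) (by omega)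
      · have hy1le : y i ≤ (p:ℝ)*(2:ℝ)^(e i+11) + 2*(2:ℝ)^(e i+11) := by
          rw [hp1] at herr1b; linarith
        have hq41 : (2:ℝ)^(e (i+1)+11) = 4*(2:ℝ)^(e i+11) := by
          rw [hF, show e i + 2 + 11 = (e i+11)+2 by ring, h4e]
          ring
        have hplR : (0:ℝ) ≤ (p:ℝ) := by exact_mod_cast (show (0:ℤ) ≤ p by omega)
        have hpuR : (p:ℝ) ≤ 9007199254740992 := by exact_mod_cast hp3
        rcases hqd with h4q | herr2'
        · -- D2 = 4
          have hxh2ge : (4*(q:ℝ))*(2:ℝ)^(e i+11) ≤ y (i+1) + 2*4*(2:ℝ)^(e i+11) := by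
            have h := (abs_le.mp herr2).2
            have hid : (2:ℝ)^(e (i+1))*4096 = 8*(2:ℝ)^(e i+11) := by
              rw [hF, show e i + 2 = (e i+11) + (-9) by ring, zpow_add₀ h20,
                show (2:ℝ)^(-9:ℤ) = 1/512 by norm_num]
              ring
            rw [hq1, hq41, hid] at h
            linarith
          have hQ := chainC c ((2:ℝ)^(e i+11)) (y i) (y (i+1)) (x i) (x (i+1))
            (p:ℝ) (4*(q:ℝ)) 4 hc0 hc1 hUpos hx1pos hxx.2 s2a s1b hy1pos hy1le hxh2ge
            hpuR hplR hcP
          have hint : 4*q ≤ 3*p + 20 := by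
            by_contra hcon
            push_neg at hcon
            have hcon' : 3*p + 21 ≤ 4*q := by omega
            have : ((3*p + 21 : ℤ):ℝ) ≤ ((4*q : ℤ):ℝ) := by exact_mod_cast hcon'
            push_cast at this
            linarith
          exact memN _ _ (by omega) (by omega)
        · -- D2 = 2
          have hxh2ge : (4*(q:ℝ))*(2:ℝ)^(e i+11) ≤ y (i+1) + 2*2*(2:ℝ)^(e i+11) := by
            have h := (abs_le.mp herr2').2
            have hid : (2:ℝ)^(e (i+1))*2048 = 4*(2:ℝ)^(e i+11) := by
              rw [hF, show e i + 2 = (e i+11) + (-9) by ring, zpow_add₀ h20,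
                show (2:ℝ)^(-9:ℤ) = 1/512 by norm_num]
              ring
            rw [hq1, hq41, hid] at h
            linarith
          have hQ := chainC c ((2:ℝ)^(e i+11)) (y i) (y (i+1)) (x i) (x (i+1))
            (p:ℝ) (4*(q:ℝ)) 2 hc0 hc1 hUpos hx1pos hxx.2 s2a s1b hy1pos hy1le hxh2ge
            hpuR hplR hcP
          have hint : 4*q ≤ 3*p + 16 := by
            by_contra hcon
            push_neg at hcon
            have hcon' : 3*p + 17 ≤ 4*q := by omega
            have : ((3*p + 17 : ℤ):ℝ) ≤ ((4*q : ℤ):ℝ) := by exact_mod_cast hcon'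
            push_cast at this
            linarith
          exact memN _ _ (by omega) (by omega)
  -- part 1
  have part1 : ∀ i ≤ n, |xh i - x i| ≤ 2.54*(2:ℝ)^(-52:ℤ)*|x i| := by
    have upper1 : ∀ i, n < 2*i → i ≤ n → |xh i - x i| ≤ 2.54*(2:ℝ)^(-52:ℤ)*|x i| := by
      intro i hi hile
      rcases eq_or_lt_of_le hile with rfl | hilt
      · rw [hxhn, hxn]
        simp only [sub_self, abs_zero]
        positivity
      · obtain ⟨p, hp1, hp2, hp3, hp4, herr1, -, -⟩ := key i hi hilt
        obtain ⟨hx1pos, hy1pos, s1a, s1b, s1c, s1d, b1lo, b1hi, hbE⟩ := hupper i hi hile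
        have hxy : |x i - y i| ≤ c * x i := by
          refine (hyerr i hi hilt).trans ?_
          exact mul_le_mul_of_nonneg_left
            (by rw [abs_of_pos hx1pos]; exact min_le_left _ _) hc0.le
        have hb2 : (2:ℝ)^(e i)*4096 ≤ 2*(2:ℝ)^(-52:ℤ)*(y i) := by
          have hid : (2:ℝ)^(e i)*4096 = 2*(2:ℝ)^(-52:ℤ)*(2:ℝ)^(e i + 63) := by
            rw [zpow_add₀ h20 (e i) 63, hu,
              show (2:ℝ)^(63:ℤ) = 9223372036854775808 by norm_num]
            ring
          rw [hid]
          have hpos : (0:ℝ) ≤ 2*(2:ℝ)^(-52:ℤ) := by positivity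
          exact mul_le_mul_of_nonneg_left b1lo hpos
        have habs : |xh i - x i| ≤ 2*(2:ℝ)^(-52:ℤ)*(y i) + c*(x i) := by
          have h0 := abs_sub_le (xh i) (y i) (x i)
          have h1 := herr1.trans hb2
          have h2 : |y i - x i| ≤ c * x i := by rw [abs_sub_comm]; exact hxy
          linarith
        rw [abs_of_pos hx1pos]
        rw [hu] at habs ⊢
        rw [hcval] at habs s1a
        nlinarith [hx1pos, hy1pos]
    intro i hile
    rcases lt_trichotomy (2*i) n with hlow | hmid2 | hup
    · rcases Nat.eq_zero_or_pos i with rfl | hipos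
      · have hx0 : x 0 = -1 := by
          rw [hx 0 (by omega)]
          simp
        have hxh0 : xh 0 = -1 := by
          have h := hneg 0 (by omega)
          simpa [hxhn] using h
        rw [hx0, hxh0]
        simp only [sub_self, abs_zero, abs_neg, abs_one]
        positivity
      · have hxsym : x i = - x (n - i) := by
          rw [hx i hile, hx (n-i) (by omega)]
          have hcast : ((n - i : ℕ):ℝ) = (n:ℝ) - i := by
            rw [Nat.cast_sub (by omega : i ≤ n)]
          rw [hcast, show ((n:ℝ) - i)*Real.pi/n = Real.pi - i*Real.pi/n by
            field_simp, Real.cos_pi_sub]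
          ring
        rw [hneg i hlow, hxsym]
        have heq2 : -xh (n-i) - -x (n-i) = -(xh (n-i) - x (n-i)) := by ring
        rw [heq2, abs_neg, abs_neg]
        exact upper1 (n-i) (by omega) (by omega)
    · have hiR : (i:ℝ) ≠ 0 := by
        have : i ≠ 0 := by omega
        exact_mod_cast Nat.cast_ne_zero.mpr this
      have hxi : x i = 0 := by
        rw [hx i hile]
        have hfr : (i:ℝ)*Real.pi/n = Real.pi/2 := by
          have hn2 : (n:ℝ) = 2*i := by exact_mod_cast hmid2.symm
          rw [hn2]
          field_simp
        rw [hfr, Real.cos_pi_div_two]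
        norm_num
      have hxh0 : xh i = 0 := hmid i (by omega)
      rw [hxi, hxh0]
      simp
    · exact upper1 i hup hile
  -- the values 1 and 2 are doubles
  have h1D : (1:ℝ) ∈ idealFloats 52 1 :=
    ⟨-52, 2^52, by norm_num, le_refl _, by norm_num, one_dvd _, by norm_num⟩
  have h2D : (2:ℝ) ∈ idealFloats 52 1 :=
    ⟨-51, 2^52, by norm_num, le_refl _, by norm_num, one_dvd _, by norm_num⟩
  -- 2 - xh (n-1) is a double, n ≥ 3
  have twoSub : 3 ≤ n → 2 - xh (n-1) ∈ idealFloats 52 1 := by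
    intro hn3
    have hidx : n < 2*(n-1) := by omega
    have hidx2 : n - 1 < n := by omega
    have hsucc : n - 1 + 1 = n := by omega
    obtain ⟨p, hp1, hp2, hp3, hp4, herr1, herr1', hp4'⟩ := key (n-1) hidx hidx2
    rw [hsucc] at herr1' hp4'
    obtain ⟨hx1pos, hy1pos, s1a, s1b, s1c, s1d, b1lo, b1hi, hbE⟩ :=
      hupper (n-1) hidx hidx2.le
    have hxval : 1/2 ≤ x (n-1) ∧ x (n-1) < 1 := by
      have hrw : x (n-1) = Real.cos (Real.pi / n) := by
        rw [hx (n-1) (by omega)]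
        have hcast : ((n - 1 : ℕ):ℝ) = (n:ℝ) - 1 := by
          rw [Nat.cast_sub (by omega : 1 ≤ n)]
          norm_num
        rw [hcast, show ((n:ℝ) - 1)*Real.pi/n = Real.pi - Real.pi/n by
          field_simp, Real.cos_pi_sub]
        ring
      constructor
      · rw [hrw, ← Real.cos_pi_div_three]
        apply Real.cos_le_cos_of_nonneg_of_le_pi (by positivity)
          (by linarith [Real.pi_pos])
        rw [div_le_div_iff₀ hnR (by norm_num : (0:ℝ) < 3)]
        have h3n : (3:ℝ) ≤ n := by exact_mod_cast hn3
        nlinarith [Real.pi_pos]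
      · rw [hrw, ← Real.cos_zero]
        apply Real.strictAntiOn_cos ⟨le_refl 0, Real.pi_pos.le⟩
          ⟨by positivity, by
            rw [div_le_iff₀ hnR]
            have h3n' : (3:ℝ) ≤ n := by exact_mod_cast hn3
            have := mul_le_mul_of_nonneg_left h3n' Real.pi_pos.le
            linarith [Real.pi_pos]⟩
          (by positivity)
    have hcx : c*(x (n-1)) ≤ (1/1000)*(x (n-1)) :=
      mul_le_mul_of_nonneg_right hc1 hx1pos.le
    have hylow : (1:ℝ)/4 < y (n-1) := by linarith [hxval.1]
    have hyhigh : y (n-1) < 2 := by linarith [hxval.2]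
    have heL : e (n-1) ≤ -63 := by
      have h1 : (2:ℝ)^(e (n-1) + 63) < (2:ℝ)^(1:ℤ) := by
        rw [show (2:ℝ)^(1:ℤ) = 2 by norm_num]; linarith
      have := expLt h1; omega
    have heG : -65 ≤ e (n-1) := by
      have h1 : (2:ℝ)^(-2:ℤ) < (2:ℝ)^(e (n-1) + 64) := by
        rw [show (2:ℝ)^(-2:ℤ) = 1/4 by norm_num]; linarith
      have := expLt h1; omega
    have hecase : e (n-1) = -63 ∨ e (n-1) = -64 ∨ e (n-1) = -65 := by omega
    rcases hecase with he | he | he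
    · -- e = -63 = e n : xh (n-1) = 1
      have hee : e (n-1) = e n := by rw [hen, he]
      have herr := herr1' hee
      have hxh1 : xh (n-1) = 1 := by
        have hid : (2:ℝ)^(e (n-1))*2048 = (2:ℝ)^(-52:ℤ) := by rw [he]; norm_num
        rw [hid] at herr
        have hup' := (abs_le.mp herr).2
        have hyy : y (n-1) < 1 + c := by nlinarith [hxval.2, hc0, hx1pos]
        have hXv : xh (n-1) = (2:ℝ)^(-52:ℤ)*(p:ℝ) := by rw [hp1, he]; norm_num
        have hple : (p:ℝ) < ((4503599627370498:ℤ):ℝ) := by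
          rw [hXv, hu] at hup'
          rw [hcval] at hyy
          push_cast
          linarith
        have hpint : p < 4503599627370498 := by exact_mod_cast hple
        have hp52 : p = 2^52 := by omega
        rw [hp1, he, hp52]
        norm_num
      rw [hxh1, show (2:ℝ) - 1 = 1 by norm_num]
      exact h1D
    · -- e = -64
      have hne : e (n-1) ≠ e n := by rw [hen, he]; norm_num
      have h4p := hp4' hne
      have hsum : 2 - xh (n-1) = (2:ℝ)^(-53:ℤ) * ((2^54 - p : ℤ):ℝ) := by
        rw [hp1, he, show (-64 + 11 : ℤ) = -53 by norm_num,
          show (2:ℝ)^(-53:ℤ) = 1/9007199254740992 by norm_num]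
        push_cast
        ring
      rw [hsum]
      exact memN (-53) _ (by norm_num) (by omega)
    · -- e = -65
      have hne : e (n-1) ≠ e n := by rw [hen, he]; norm_num
      have h4p := hp4' hne
      have hsum : 2 - xh (n-1) = (2:ℝ)^(-54:ℤ) * ((2^55 - p : ℤ):ℝ) := by
        rw [hp1, he, show (-65 + 11 : ℤ) = -54 by norm_num,
          show (2:ℝ)^(-54:ℤ) = 1/18014398509481984 by norm_num]
        push_cast
        ring
      rw [hsum]
      exact memN (-54) _ (by norm_num) (by omega)
  -- goal 2 : 2 + xh 1
  have goal2 : 2 + xh 1 ∈ idealFloats 52 1 ∪ -idealFloats 52 1 ∪ {0} := by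
    rcases eq_or_lt_of_le hn with heq2 | hgt2
    · have h0 : xh 1 = 0 := hmid 1 (by omega)
      rw [h0, add_zero]
      exact Set.mem_union_left _ (Set.mem_union_left _ h2D)
    · have h1s : xh 1 = -xh (n-1) := hneg 1 (by omega)
      rw [show 2 + xh 1 = 2 - xh (n-1) by rw [h1s]; ring]
      exact Set.mem_union_left _ (Set.mem_union_left _ (twoSub (by omega)))
  -- goal 3 : 2 - xh (n-1)
  have goal3 : 2 - xh (n-1) ∈ idealFloats 52 1 ∪ -idealFloats 52 1 ∪ {0} := by
    rcases eq_or_lt_of_le hn with heq2 | hgt2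
    · have h0 : xh (n-1) = 0 := by
        have : n - 1 = 1 := by omega
        rw [this]
        exact hmid 1 (by omega)
      rw [h0, sub_zero]
      exact Set.mem_union_left _ (Set.mem_union_left _ h2D)
    · exact Set.mem_union_left _ (Set.mem_union_left _ (twoSub (by omega)))
  -- goal 4 : all adjacent sums
  have goal4 : ∀ i < n, xh i + xh (i+1) ∈ idealFloats 52 1 ∪ -idealFloats 52 1 ∪ {0} := by
    intro i hilt
    rcases lt_trichotomy (2*i) n with hlow | hmid2 | hup
    · rcases lt_trichotomy (2*(i+1)) n with hlow2 | hmid3 | hup2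
      · have hsum : xh i + xh (i+1) = -(xh (n-(i+1)) + xh (n-(i+1)+1)) := by
          rw [hneg i hlow, hneg (i+1) hlow2, show n - i = n-(i+1)+1 by omega]
          ring
        rw [hsum]
        refine Set.mem_union_left _ (Set.mem_union_right _ ?_)
        rw [Set.mem_neg, neg_neg]
        exact pair (n-(i+1)) (by omega) (by omega)
      · have h0 : xh (i+1) = 0 := hmid (i+1) (by omega)
        rcases eq_or_lt_of_le hn with heq2 | hgt2
        · have hi0 : i = 0 := by omega
          subst hi0
          have hx0 : xh 0 = -xh n := by simpa using hneg 0 (by omega)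
          rw [h0, hx0, hxhn, show (-1:ℝ) + 0 = -(1:ℝ) by ring]
          refine Set.mem_union_left _ (Set.mem_union_right _ ?_)
          rw [Set.mem_neg, neg_neg]
          exact h1D
        · have hsum : xh i + xh (i+1) = -xh (i+2) := by
            rw [h0, hneg i hlow, show n - i = i + 2 by omega]
            ring
          rw [hsum]
          refine Set.mem_union_left _ (Set.mem_union_right _ ?_)
          rw [Set.mem_neg, neg_neg]
          exact single (i+2) (by omega) (by omega)
      · have hsum : xh i + xh (i+1) = 0 := by
          rw [hneg i hlow, show n - i = i + 1 by omega]
          ring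
        rw [hsum]
        exact Set.mem_union_right _ rfl
    · have h0 : xh i = 0 := hmid i (by omega)
      rcases eq_or_lt_of_le hn with heq2 | hgt2
      · have hi1 : i = 1 := by omega
        subst hi1
        rw [h0, show (1+1 : ℕ) = n by omega, hxhn, zero_add]
        exact Set.mem_union_left _ (Set.mem_union_left _ h1D)
      · rw [h0, zero_add]
        exact Set.mem_union_left _ (Set.mem_union_left _
          (single (i+1) (by omega) (by omega)))
    · exact Set.mem_union_left _ (Set.mem_union_left _ (pair i hup hilt))
  exact ⟨part1, goal2, goal3, goal4⟩
end
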